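/- arXiv:1812.01800 — 7 statements merged into one kernel-verified Lean document; each statement's English description precedes it below -/
import Mathlib

section
/- Every local tournament in which every vertex has in-degree at least one has at least two distinct Sullivan-1 vertices. -/
/-- The out-neighbourhood of `x` in the digraph with arc relation `A`. -/
def Nplus {V : Type*} (A : V → V → Prop) (x : V) : Set V := {y | A x y}

/-- The in-neighbourhood of `x`. -/
def Nminus {V : Type*} (A : V → V → Prop) (x : V) : Set V := {y | A y x}

/-- The second out-neighbourhood of `x`:
`(⋃ u ∈ N⁺(x), N⁺(u)) \ N⁺(x)`. -/
def Nsecond {V : Type*} (A : V → V → Prop) (x : V) : Set V :=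
  (⋃ u ∈ Nplus A x, Nplus A u) \ Nplus A x

/-- Out-degree `d⁺(x)`. -/
noncomputable def dplus {V : Type*} (A : V → V → Prop) (x : V) : ℕ := (Nplus A x).ncard

/-- In-degree `d⁻(x)`. -/
noncomputable def dminus {V : Type*} (A : V → V → Prop) (x : V) : ℕ := (Nminus A x).ncard

/-- Second out-degree `d⁺⁺(x)`. -/
noncomputable def dsecond {V : Type*} (A : V → V → Prop) (x : V) : ℕ := (Nsecond A x).ncard

/-- `x` is a Sullivan-1 vertex: `d⁺⁺(x) ≥ d⁻(x)`. -/
def Sullivan1 {V : Type*} (A : V → V → Prop) (x : V) : Prop :=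
  dminus A x ≤ dsecond A x

/-- `x` is a Sullivan-2 vertex: `d⁺⁺(x) + d⁺(x) ≥ 2·d⁻(x)`. -/
def Sullivan2 {V : Type*} (A : V → V → Prop) (x : V) : Prop :=
  2 * dminus A x ≤ dsecond A x + dplus A x

/-- Two vertices are adjacent if there is an arc between them in some direction. -/
def Adjacent {V : Type*} (A : V → V → Prop) (x y : V) : Prop := A x y ∨ A y x

/-- An oriented graph: no loops and no 2-cycles. -/
def IsOriented {V : Type*} (A : V → V → Prop) : Prop :=
  (∀ x, ¬ A x x) ∧ ∀ x y, A x y → ¬ A y x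

/-- A local tournament: an oriented graph in which any two distinct out-neighbours
of a vertex are adjacent, and any two distinct in-neighbours are adjacent. -/
def IsLocalTournament {V : Type*} (A : V → V → Prop) : Prop :=
  IsOriented A ∧
  (∀ x y z, A x y → A x z → y ≠ z → Adjacent A y z) ∧
  (∀ x y z, A y x → A z x → y ≠ z → Adjacent A y z)

/-- A tournament: an oriented graph in which any two distinct vertices are adjacent. -/
def IsTournament {V : Type*} (A : V → V → Prop) : Prop :=
  IsOriented A ∧ ∀ x y : V, x ≠ y → Adjacent A x y

/-- A digraph is strong if every vertex can reach every other by a directed path. -/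
def IsStrong {V : Type*} (A : V → V → Prop) : Prop :=
  ∀ x y : V, Relation.ReflTransGen A x y

/-- A digraph on `ZMod r` is roundly labelled (by the natural labelling `0,1,…,r-1`)
if for each vertex `i` the out-neighbourhood is `{i+1, …, i+d⁺(i)}` and the
in-neighbourhood is `{i−d⁻(i), …, i−1}` (indices modulo `r`). -/
def IsRoundLabelling {r : ℕ} (B : ZMod r → ZMod r → Prop) : Prop :=
  ∀ i : ZMod r,
    Nplus B i = (fun t : ℕ => i + (t : ZMod r)) '' Set.Icc 1 (dplus B i) ∧
    Nminus B i = (fun t : ℕ => i - (t : ZMod r)) '' Set.Icc 1 (dminus B i)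

/-- A digraph is round if its vertices admit a round labelling. -/
def IsRound {V : Type*} (A : V → V → Prop) : Prop :=
  ∃ r : ℕ, 0 < r ∧ ∃ e : ZMod r ≃ V,
    IsRoundLabelling (fun i j => A (e i) (e j))

/-- A digraph `A` on `V` is round decomposable: `A = R[S₁,…,S_r]` where `R` is a
round local tournament on `r ≥ 2` vertices (realized on `ZMod r`), the parts are
the fibres of a surjection `φ : V → ZMod r` (so all parts are nonempty and pairwise
disjoint), arcs between distinct parts are exactly those induced by `R`, and each
part induces a strong tournament. -/
def IsRoundDecomposable {V : Type*} (A : V → V → Prop) : Prop :=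
  ∃ (r : ℕ) (B : ZMod r → ZMod r → Prop) (φ : V → ZMod r),
    2 ≤ r ∧ IsLocalTournament B ∧ IsRound B ∧ Function.Surjective φ ∧
    (∀ x y, φ x ≠ φ y → (A x y ↔ B (φ x) (φ y))) ∧
    (∀ x y, φ x = φ y → x ≠ y → Adjacent A x y) ∧
    (∀ i : ZMod r, ∀ x y, φ x = i → φ y = i →
      Relation.ReflTransGen (fun a b => A a b ∧ φ a = i ∧ φ b = i) x y)

set_option linter.unusedSectionVars false
set_option linter.unusedVariables false

section Core

variable {W : Type*} [Fintype W] (A : W → W → Prop)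

lemma r2_card (x : W) : (Nplus A x ∪ Nsecond A x).ncard = dplus A x + dsecond A x := by
  rw [Set.ncard_union_eq _ (Set.toFinite _) (Set.toFinite _)]
  · rfl
  · exact Set.disjoint_sdiff_right

lemma two_step {x u z : W} (hxu : A x u) (huz : A u z) :
    z ∈ Nplus A x ∪ Nsecond A x := by
  by_cases hz : z ∈ Nplus A x
  · exact Or.inl hz
  · refine Or.inr ⟨?_, hz⟩
    exact Set.mem_biUnion hxu huz

lemma exists_king (hirr : ∀ x : W, ¬ A x x) (hasym : ∀ x y : W, A x y → ¬ A y x)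
    (T : Set W) (hT : T.Nonempty)
    (hadj : ∀ a ∈ T, ∀ b ∈ T, a ≠ b → Adjacent A a b) :
    ∃ y ∈ T, ∀ z ∈ T, z ≠ y → (A y z ∨ ∃ w ∈ T, A y w ∧ A w z) := by
  obtain ⟨y, hyT, hymax⟩ := Set.exists_max_image T (fun y => (T ∩ Nplus A y).ncard)
    (Set.toFinite T) hT
  refine ⟨y, hyT, ?_⟩
  intro z hzT hzy
  by_contra hcon
  push_neg at hcon
  obtain ⟨h1, h2⟩ := hcon
  -- A z y holds
  have hzy' : A z y := by
    rcases hadj y hyT z hzT (Ne.symm hzy) with h | h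
    · exact absurd h h1
    · exact h
  have hsub : insert y (T ∩ Nplus A y) ⊆ T ∩ Nplus A z := by
    rintro w (rfl | ⟨hwT, hwy⟩)
    · exact ⟨hyT, hzy'⟩
    · refine ⟨hwT, ?_⟩
      have hwz : w ≠ z := by
        rintro rfl
        exact h1 hwy
      rcases hadj w hwT z hzT hwz with h | h
      · exact absurd h (h2 w hwT hwy)
      · exact h
  have hy_not : y ∉ T ∩ Nplus A y := fun h => hirr y h.2
  have hcard : (T ∩ Nplus A y).ncard + 1 ≤ (T ∩ Nplus A z).ncard := by
    have := Set.ncard_insert_of_notMem hy_not (Set.toFinite _)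
    calc (T ∩ Nplus A y).ncard + 1 = (insert y (T ∩ Nplus A y)).ncard := by rw [this]
    _ ≤ (T ∩ Nplus A z).ncard := Set.ncard_le_ncard hsub (Set.toFinite _)
  have := hymax z hzT
  omega

lemma nplus_nminus_disj (hasym : ∀ x y : W, A x y → ¬ A y x) (v : W) :
    Disjoint (Nplus A v) (Nminus A v) :=
  Set.disjoint_left.mpr fun z hz hz' => hasym v z hz hz'

lemma card_EE (hirr : ∀ x : W, ¬ A x x) (hasym : ∀ x y : W, A x y → ¬ A y x)
    {v y : W} (hy : y ∈ Nminus A v) (B' : Set W) (hB' : B' ⊆ Nminus A v) (hyB' : y ∈ B') :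
    (insert v (Nplus A v ∪ (B' \ {y}))).ncard = 1 + dplus A v + (B'.ncard - 1) := by
  have hvnot : v ∉ Nplus A v ∪ (B' \ {y}) := by
    rintro (h | ⟨h, -⟩)
    · exact hirr v h
    · exact hirr v (hB' h)
  have hdisj : Disjoint (Nplus A v) (B' \ {y}) := by
    refine Set.disjoint_left.mpr fun z hz hz' => ?_
    exact hasym v z hz (hB' hz'.1)
  rw [Set.ncard_insert_of_notMem hvnot (Set.toFinite _),
    Set.ncard_union_eq hdisj (Set.toFinite _) (Set.toFinite _),
    Set.ncard_diff_singleton_of_mem hyB']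
  unfold dplus; ring

lemma king_bound_gen (hirr : ∀ x : W, ¬ A x x) (hasym : ∀ x y : W, A x y → ¬ A y x)
    {v y : W} (hy : y ∈ Nminus A v) (B' : Set W) (hB' : B' ⊆ Nminus A v) (hyB' : y ∈ B')
    (hking : ∀ z ∈ B', z ≠ y → (A y z ∨ ∃ w ∈ B', A y w ∧ A w z)) :
    insert v (Nplus A v ∪ (B' \ {y})) ⊆ Nplus A y ∪ Nsecond A y := by
  rintro z (rfl | hz | ⟨hz, hzy⟩)
  · exact Or.inl hy
  · exact two_step A hy hz
  · rcases hking z hz hzy with h | ⟨w, hw, h1, h2⟩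
    · exact Or.inl h
    · exact two_step A h1 h2

lemma king_bound (hirr : ∀ x : W, ¬ A x x) (hasym : ∀ x y : W, A x y → ¬ A y x)
    {v y : W} (hy : y ∈ Nminus A v)
    (hking : ∀ z ∈ Nminus A v, z ≠ y → (A y z ∨ ∃ w ∈ Nminus A v, A y w ∧ A w z)) :
    dplus A v + dminus A v ≤ dplus A y + dsecond A y := by
  have hsub := king_bound_gen A hirr hasym hy (Nminus A v) (le_refl _) hy hking
  have hcard := card_EE A hirr hasym hy (Nminus A v) (le_refl _) hy
  have hle : (insert v (Nplus A v ∪ (Nminus A v \ {y}))).ncard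
      ≤ (Nplus A y ∪ Nsecond A y).ncard :=
    Set.ncard_le_ncard hsub (Set.toFinite _)
  rw [hcard, r2_card] at hle
  have hd1 : 1 ≤ dminus A v := by
    have h : 0 < (Nminus A v).ncard :=
      (Set.ncard_pos (Set.toFinite _)).mpr ⟨y, hy⟩
    exact h
  unfold dminus at *
  omega

lemma sullivan_of_max (hA : IsLocalTournament A) (hin : ∀ x : W, ∃ y : W, A y x)
    {v : W} (hmax : ∀ u : W, dplus A u + dsecond A u ≤ dplus A v + dsecond A v) :
    Sullivan1 A v := by
  obtain ⟨t, ht⟩ := hin v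
  obtain ⟨y, hy, hking⟩ := exists_king A hA.1.1 hA.1.2 (Nminus A v) ⟨t, ht⟩
    (fun a ha b hb hab => hA.2.2 v a b ha hb hab)
  have h1 := king_bound A hA.1.1 hA.1.2 hy hking
  have h2 := hmax y
  unfold Sullivan1
  omega

lemma reach_closed {C : Set W} (hC : ∀ x ∈ C, ∀ z, A x z → z ∈ C)
    {x y : W} (hx : x ∈ C) (h : Relation.ReflTransGen A x y) : y ∈ C := by
  induction h with
  | refl => exact hx
  | tail _ h2 ih => exact hC _ ih _ h2

theorem core [Nonempty W] (hA : IsLocalTournament A) (hin : ∀ x : W, ∃ y, A y x)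
    (hstrong : ∀ x y : W, Relation.ReflTransGen A x y) :
    ∃ x y : W, x ≠ y ∧ Sullivan1 A x ∧ Sullivan1 A y := by
  classical
  by_contra hcon
  push_neg at hcon
  have hirr := hA.1.1
  have hasym := hA.1.2
  set bb : W → ℕ := fun v => dplus A v + dsecond A v with hbb
  obtain ⟨s, -, hsmax0⟩ := Finset.exists_max_image Finset.univ bb
    ⟨Classical.arbitrary W, Finset.mem_univ _⟩
  have hsmax : ∀ u, bb u ≤ bb s := fun u => hsmax0 u (Finset.mem_univ u)
  have hs_sul : Sullivan1 A s := sullivan_of_max A hA hin hsmax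
  have huniq : ∀ v, Sullivan1 A v → v = s := by
    intro v hv
    by_contra hne
    exact hcon v s hne hv hs_sul
  have hex : ∃ t : W, t ≠ s := by
    obtain ⟨t, ht⟩ := hin s
    exact ⟨t, fun h => hirr s (h ▸ ht)⟩
  obtain ⟨s', hs'mem, hs'max⟩ := Finset.exists_max_image
    (Finset.univ.filter (· ≠ s)) bb
    (by obtain ⟨t, ht⟩ := hex; exact ⟨t, by simp [ht]⟩)
  set M2 : ℕ := bb s' with hM2def
  have hs'ne : s' ≠ s := by simpa using hs'mem
  have hM2 : ∀ y, y ≠ s → bb y ≤ M2 := by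
    intro y hy
    exact hs'max y (by simp [hy])
  set P : W → Prop := fun v => v ≠ s ∧ bb v = M2 with hPdef
  have hPs' : P s' := ⟨hs'ne, rfl⟩
  have hPnotsul : ∀ v, P v → dsecond A v < dminus A v := by
    intro v hv
    by_contra h
    push_neg at h
    exact hv.1 (huniq v h)
  -- every king of N⁻(v) equals s, for P vertices
  have hking_s : ∀ v, P v → ∀ y ∈ Nminus A v,
      (∀ z ∈ Nminus A v, z ≠ y → (A y z ∨ ∃ w ∈ Nminus A v, A y w ∧ A w z)) → y = s := by
    intro v hv y hy hking
    by_contra hne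
    have h1 := king_bound A hirr hasym hy hking
    have h2 := hM2 y hne
    have h3 := hPnotsul v hv
    have h4 : bb v = M2 := hv.2
    have h5 : bb v = dplus A v + dsecond A v := rfl
    have h6 : bb y = dplus A y + dsecond A y := rfl
    omega
  have hs_in : ∀ v, P v → s ∈ Nminus A v := by
    intro v hv
    obtain ⟨t, ht⟩ := hin v
    obtain ⟨y, hy, hking⟩ := exists_king A hirr hasym (Nminus A v) ⟨t, ht⟩
      (fun a ha b hb hab => hA.2.2 v a b ha hb hab)
    have := hking_s v hv y hy hking
    rwa [this] at hy
  have hdom : ∀ v, P v → ∀ x ∈ Nminus A v, x ≠ s → A s x := by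
    intro v hv x hx hxs
    by_contra hsx
    have hxs' : A x s := by
      rcases hA.2.2 v x s hx (hs_in v hv) hxs with h | h
      · exact h
      · exact absurd h hsx
    set Z : Set W := {z | z ∈ Nminus A v ∧ A z s} with hZ
    have hZne : Z.Nonempty := ⟨x, hx, hxs'⟩
    obtain ⟨z, hzZ, hzking⟩ := exists_king A hirr hasym Z hZne
      (fun a ha b hb hab => hA.2.2 v a b ha.1 hb.1 hab)
    have hzk : ∀ t ∈ Nminus A v, t ≠ z → (A z t ∨ ∃ w ∈ Nminus A v, A z w ∧ A w t) := by
      intro t ht htz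
      by_cases htZ : t ∈ Z
      · rcases hzking t htZ htz with h | ⟨w, hw, h1, h2⟩
        · exact Or.inl h
        · exact Or.inr ⟨w, hw.1, h1, h2⟩
      · by_cases hts : t = s
        · subst hts
          exact Or.inl hzZ.2
        · have hst : A s t := by
            rcases hA.2.2 v t s ht (hs_in v hv) hts with h | h
            · exact absurd (⟨ht, h⟩ : t ∈ Z) htZ
            · exact h
          exact Or.inr ⟨s, hs_in v hv, hzZ.2, hst⟩
    have hzs := hking_s v hv z hzZ.1 hzk
    rw [hzs] at hzZ
    exact hirr s hzZ.2
  have hB'ne : ∀ v, P v → ((Nminus A v) \ {s}).Nonempty := by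
    intro v hv
    rw [Set.nonempty_iff_ne_empty]
    intro hemp
    have hNm : Nminus A v = {s} :=
      Set.eq_of_subset_of_subset (Set.diff_eq_empty.mp hemp)
        (Set.singleton_subset_iff.mpr (hs_in v hv))
    have hdm1 : dminus A v = 1 := by
      unfold dminus
      rw [hNm]
      exact Set.ncard_singleton s
    have hnotsul := hPnotsul v hv
    have hdsec0 : dsecond A v = 0 := by omega
    have hNsec : Nsecond A v = ∅ := by
      have : (Nsecond A v).ncard = 0 := hdsec0
      exact (Set.ncard_eq_zero (Set.toFinite _)).mp this
    have hclosed : ∀ x ∈ Nplus A v, ∀ z, A x z → z ∈ Nplus A v := by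
      intro x hx z hz
      have h2 := two_step A hx hz
      rwa [hNsec, Set.union_empty] at h2
    have hW : ∃ w, A v w := by
      rcases (Relation.ReflTransGen.cases_head (hstrong v s)) with h | ⟨w, hw, -⟩
      · exact absurd h hv.1
      · exact ⟨w, hw⟩
    obtain ⟨w, hw⟩ := hW
    have := reach_closed A hclosed hw (hstrong w v)
    exact hirr v this
  have hstep : ∀ v, P v → ∃ y, P y ∧ y ∈ Nminus A v ∧
      Nplus A y ∪ Nsecond A y
        = insert v (Nplus A v ∪ ((Nminus A v \ {s}) \ {y})) := by
    intro v hv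
    obtain ⟨y, hyB', hking⟩ := exists_king A hirr hasym ((Nminus A v) \ {s}) (hB'ne v hv)
      (fun a ha b hb hab => hA.2.2 v a b ha.1 hb.1 hab)
    have hyNm : y ∈ Nminus A v := hyB'.1
    have hyns : y ≠ s := hyB'.2
    have hsub := king_bound_gen A hirr hasym hyNm ((Nminus A v) \ {s})
      Set.diff_subset hyB' hking
    have hcard := card_EE A hirr hasym hyNm ((Nminus A v) \ {s})
      Set.diff_subset hyB'
    have hB'card : ((Nminus A v) \ {s}).ncard = dminus A v - 1 :=
      Set.ncard_diff_singleton_of_mem (hs_in v hv)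
    have hB'pos : 0 < ((Nminus A v) \ {s}).ncard :=
      (Set.ncard_pos (Set.toFinite _)).mpr (hB'ne v hv)
    have hnsul := hPnotsul v hv
    have hley : (insert v (Nplus A v ∪ (((Nminus A v) \ {s}) \ {y}))).ncard ≤ bb y := by
      have h1 := Set.ncard_le_ncard hsub (Set.toFinite (Nplus A y ∪ Nsecond A y))
      rw [r2_card A y] at h1
      exact h1
    have hyM2 := hM2 y hyns
    have hbv : dplus A v + dsecond A v = M2 := hv.2
    have hby : bb y = dplus A y + dsecond A y := rfl
    have hbyeq : bb y = M2 := by omega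
    have hEcard : (insert v (Nplus A v ∪ (((Nminus A v) \ {s}) \ {y}))).ncard
        = (Nplus A y ∪ Nsecond A y).ncard := by
      rw [r2_card A y]
      omega
    have hseteq := Set.eq_of_subset_of_ncard_le hsub (le_of_eq hEcard.symm)
      (Set.toFinite _)
    exact ⟨y, ⟨hyns, hbyeq⟩, hyNm, hseteq.symm⟩
  -- choice function on the subtype of P-vertices
  obtain ⟨g, hg2⟩ : ∃ g : {v // P v} → {v // P v},
      ∀ x, Nplus A ((g x : W)) ∪ Nsecond A ((g x : W))
        = insert (x : W) (Nplus A (x : W) ∪ ((Nminus A (x : W) \ {s}) \ {(g x : W)})) := by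
    have h : ∀ x : {v // P v}, ∃ y : {v // P v},
        Nplus A (y : W) ∪ Nsecond A (y : W)
          = insert (x : W) (Nplus A (x : W) ∪ ((Nminus A (x : W) \ {s}) \ {(y : W)})) := by
      rintro ⟨v, hv⟩
      obtain ⟨y, hy1, _, hy3⟩ := hstep v hv
      exact ⟨⟨y, hy1⟩, hy3⟩
    choose g h2 using h
    exact ⟨g, h2⟩
  set u : ℕ → {v // P v} := fun n => g^[n] ⟨s', hPs'⟩ with hu
  have hu_succ : ∀ n, u (n+1) = g (u n) := fun n => Function.iterate_succ_apply' g n _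
  obtain ⟨i, j, hij, hueq⟩ := Finite.exists_ne_map_eq_of_infinite (fun n : ℕ => u (n+1))
  have hcyc : ∃ p q, 0 < p ∧ p < q ∧ u p = u q := by
    rcases Ne.lt_or_gt hij with h | h
    · exact ⟨i+1, j+1, Nat.succ_pos _, by omega, hueq⟩
    · exact ⟨j+1, i+1, Nat.succ_pos _, by omega, hueq.symm⟩
  obtain ⟨p, q, hp0, hpq, hupq⟩ := hcyc
  set R : Set W := ⋃ k ∈ Set.Ico p q,
    ({((u k : W))} ∪ (Nplus A (u k : W) ∪ Nsecond A (u k : W))) with hR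
  have hmemR1 : ∀ k, k ∈ Set.Ico p q → ((u k : W)) ∈ R :=
    fun k hk => Set.mem_biUnion hk (Or.inl rfl)
  have hmemR2 : ∀ k, k ∈ Set.Ico p q → ∀ z,
      z ∈ Nplus A (u k : W) ∪ Nsecond A (u k : W) → z ∈ R :=
    fun k hk z hz => Set.mem_biUnion hk (Or.inr hz)
  have hexact : ∀ k ∈ Set.Ico p q, ∃ k' ∈ Set.Ico p q,
      Nplus A (u k : W) ∪ Nsecond A (u k : W)
        = insert (u k' : W) (Nplus A (u k' : W)
            ∪ ((Nminus A (u k' : W) \ {s}) \ {(u k : W)})) := by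
    intro k hk
    obtain ⟨hk1, hk2⟩ := hk
    rcases eq_or_lt_of_le hk1 with heq | hlt
    · refine ⟨q-1, ⟨by omega, by omega⟩, ?_⟩
      have h1 := hg2 (u (q-1))
      rw [← hu_succ (q-1)] at h1
      have hq1 : q - 1 + 1 = q := by omega
      rw [hq1] at h1
      rw [← hupq] at h1
      rw [heq] at h1
      exact h1
    · refine ⟨k-1, ⟨by omega, by omega⟩, ?_⟩
      have h1 := hg2 (u (k-1))
      rw [← hu_succ (k-1)] at h1
      have hq1 : k - 1 + 1 = k := by omega
      rw [hq1] at h1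
      exact h1
  have hsR : s ∉ R := by
    intro hs
    obtain ⟨k, hk, hmem⟩ := Set.mem_iUnion₂.mp hs
    rcases hmem with h | h
    · exact (u k).2.1 ((Set.mem_singleton_iff.mp h).symm)
    · obtain ⟨k', hk', hEq⟩ := hexact k hk
      rw [hEq] at h
      rcases h with h | h | h
      · exact (u k').2.1 h.symm
      · exact hasym s (u k' : W) (hs_in _ (u k').2) h
      · exact h.1.2 rfl
  have hclosed : ∀ x ∈ R, ∀ z, A x z → z ∈ R := by
    intro x hx z hxz
    obtain ⟨k, hk, hmem⟩ := Set.mem_iUnion₂.mp hx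
    have hka : p ≤ k := hk.1
    have hkb : k < q := hk.2
    rcases hmem with hx1 | hx2
    · have hx1' : x = (u k : W) := Set.mem_singleton_iff.mp hx1
      subst hx1'
      by_cases hkq : k + 1 = q
      · have h1 := hg2 (u k)
        rw [← hu_succ k, hkq, ← hupq] at h1
        have hz : z ∈ Nplus A (u p : W) ∪ Nsecond A (u p : W) := by
          rw [h1]
          exact Set.mem_insert_of_mem _ (Or.inl hxz)
        exact hmemR2 p ⟨le_refl p, hpq⟩ z hz
      · have h1 := hg2 (u k)
        rw [← hu_succ k] at h1
        have hz : z ∈ Nplus A (u (k+1) : W) ∪ Nsecond A (u (k+1) : W) := by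
          rw [h1]
          exact Set.mem_insert_of_mem _ (Or.inl hxz)
        exact hmemR2 (k+1) (Set.mem_Ico.mpr ⟨by omega, by omega⟩) z hz
    · obtain ⟨k', hk', hEq⟩ := hexact k hk
      rw [hEq] at hx2
      rcases hx2 with hxw | hxNp | hxB
      · subst hxw
        have hz : z ∈ Nplus A (u k : W) ∪ Nsecond A (u k : W) := by
          rw [hEq]
          exact Set.mem_insert_of_mem _ (Or.inl hxz)
        exact hmemR2 k hk z hz
      · have hzw : z ∈ Nplus A (u k' : W) ∪ Nsecond A (u k' : W) :=
          two_step A hxNp hxz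
        exact hmemR2 k' hk' z hzw
      · have hxw : A x (u k' : W) := hxB.1.1
        have hxs : x ≠ s := fun h => hxB.1.2 (Set.mem_singleton_iff.mpr h)
        by_cases hzw : z = (u k' : W)
        · exact hzw ▸ hmemR1 k' hk'
        · rcases hA.2.1 x (u k' : W) z hxw hxz (fun h => hzw h.symm) with h | h
          · have hz : z ∈ Nplus A (u k : W) ∪ Nsecond A (u k : W) := by
              rw [hEq]
              exact Set.mem_insert_of_mem _ (Or.inl h)
            exact hmemR2 k hk z hz
          · have hzs : z ≠ s := by
              intro hzeq
              have hsx : A s x := hdom (u k' : W) (u k').2 x hxw hxs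
              rw [hzeq] at hxz
              exact hasym s x hsx hxz
            by_cases hzuk : z = (u k : W)
            · exact hzuk ▸ hmemR1 k hk
            · have hz : z ∈ Nplus A (u k : W) ∪ Nsecond A (u k : W) := by
                rw [hEq]
                refine Set.mem_insert_of_mem _ (Or.inr ⟨⟨h, ?_⟩, ?_⟩)
                · exact fun hh => hzs (Set.mem_singleton_iff.mp hh)
                · exact fun hh => hzuk (Set.mem_singleton_iff.mp hh)
              exact hmemR2 k hk z hz
  have hupR : ((u p : W)) ∈ R := hmemR1 p ⟨le_refl p, hpq⟩
  exact hsR (reach_closed A hclosed hupR (hstrong _ s))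


end Core

theorem two_sullivan_aux {V : Type*} [Fintype V] [Nonempty V]
    (A : V → V → Prop) (hA : IsLocalTournament A)
    (hin : ∀ x : V, ∃ y : V, A y x) :
    ∃ x y : V, x ≠ y ∧ Sullivan1 A x ∧ Sullivan1 A y := by
  classical
  obtain ⟨S, hSmem, hSmin⟩ := Finset.exists_min_image
    ((Finset.univ : Finset (Finset V)).filter
      (fun T => T.Nonempty ∧ ∀ x ∈ T, ∀ y, A y x → y ∈ T))
    Finset.card
    (by
      refine ⟨Finset.univ, Finset.mem_filter.mpr ⟨Finset.mem_univ _, Finset.univ_nonempty, ?_⟩⟩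
      exact fun x _ y _ => Finset.mem_univ y)
  obtain ⟨-, hSne, hScl⟩ := Finset.mem_filter.mp hSmem
  have hSmin' : ∀ T : Finset V, T.Nonempty → (∀ x ∈ T, ∀ y, A y x → y ∈ T) →
      S.card ≤ T.card := by
    intro T h1 h2
    exact hSmin T (Finset.mem_filter.mpr ⟨Finset.mem_univ _, h1, h2⟩)
  set A' : {x // x ∈ S} → {x // x ∈ S} → Prop := fun a b => A a.1 b.1 with hA'def
  haveI : Nonempty {x // x ∈ S} := ⟨⟨hSne.choose, hSne.choose_spec⟩⟩
  have hA' : IsLocalTournament A' := by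
    refine ⟨⟨fun x => hA.1.1 x.1, fun x y h => hA.1.2 x.1 y.1 h⟩, ?_, ?_⟩
    · intro x y z h1 h2 hyz
      rcases hA.2.1 x.1 y.1 z.1 h1 h2 (fun h => hyz (Subtype.ext h)) with h | h
      · exact Or.inl h
      · exact Or.inr h
    · intro x y z h1 h2 hyz
      rcases hA.2.2 x.1 y.1 z.1 h1 h2 (fun h => hyz (Subtype.ext h)) with h | h
      · exact Or.inl h
      · exact Or.inr h
  have hin' : ∀ x : {x // x ∈ S}, ∃ y, A' y x := by
    rintro ⟨x, hx⟩
    obtain ⟨y, hy⟩ := hin x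
    exact ⟨⟨y, hScl x hx y hy⟩, hy⟩
  have hstrong' : ∀ a b : {x // x ∈ S}, Relation.ReflTransGen A' a b := by
    intro a b
    set T : Finset V := S.filter
      (fun z => ∃ hz : z ∈ S, Relation.ReflTransGen A' ⟨z, hz⟩ b) with hTdef
    have hTsub : T ⊆ S := Finset.filter_subset _ _
    have hTne : T.Nonempty :=
      ⟨b.1, Finset.mem_filter.mpr ⟨b.2, b.2, by
        have : (⟨b.1, b.2⟩ : {x // x ∈ S}) = b := Subtype.ext rfl
        rw [this]⟩⟩
    have hTcl : ∀ x ∈ T, ∀ y, A y x → y ∈ T := by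
      intro x hx y hyx
      obtain ⟨hxS, hxS', hreach⟩ := Finset.mem_filter.mp hx
      have hyS : y ∈ S := hScl x hxS y hyx
      refine Finset.mem_filter.mpr ⟨hyS, hyS, ?_⟩
      exact Relation.ReflTransGen.head (hyx : A' ⟨y, hyS⟩ ⟨x, hxS'⟩) hreach
    have hcard := hSmin' T hTne hTcl
    have hTeq : T = S := Finset.eq_of_subset_of_card_le hTsub hcard
    have haT : a.1 ∈ T := by
      rw [hTeq]
      exact a.2
    obtain ⟨-, h1, h2⟩ := Finset.mem_filter.mp haT
    have : (⟨a.1, h1⟩ : {x // x ∈ S}) = a := Subtype.ext rfl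
    rwa [this] at h2
  obtain ⟨x, y, hxy, hx, hy⟩ := core A' hA' hin' hstrong'
  have hlift : ∀ w : {x // x ∈ S}, Sullivan1 A' w → Sullivan1 A w.1 := by
    intro w hw
    have hNm : Nminus A w.1 = Subtype.val '' Nminus A' w := by
      ext z
      constructor
      · intro hz
        have hzS : z ∈ S := hScl w.1 w.2 z hz
        exact ⟨⟨z, hzS⟩, hz, rfl⟩
      · rintro ⟨z', hz', rfl⟩
        exact hz'
    have hdm : dminus A w.1 = dminus A' w := by
      unfold dminus
      rw [hNm, Set.ncard_image_of_injective _ Subtype.val_injective]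
    have hsec : Subtype.val '' Nsecond A' w ⊆ Nsecond A w.1 := by
      rintro z ⟨z', hz', rfl⟩
      obtain ⟨hz1, hz2⟩ := hz'
      obtain ⟨u, hu1, hu2⟩ := Set.mem_iUnion₂.mp hz1
      refine ⟨Set.mem_iUnion₂.mpr ⟨u.1, hu1, hu2⟩, ?_⟩
      intro hcon
      exact hz2 (hcon : A' w z')
    have hds : dsecond A' w ≤ dsecond A w.1 := by
      unfold dsecond
      rw [← Set.ncard_image_of_injective (Nsecond A' w) Subtype.val_injective]
      exact Set.ncard_le_ncard hsec (Set.toFinite _)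
    unfold Sullivan1 at *
    omega
  exact ⟨x.1, y.1, fun h => hxy (Subtype.ext h), hlift x hx, hlift y hy⟩



/-- Every local tournament in which every vertex has in-degree at least one
has at least two distinct Sullivan-1 vertices. -/
theorem local_tournament_min_indegree_two_sullivan1 {V : Type*} [Fintype V] [Nonempty V]
    (A : V → V → Prop) (hA : IsLocalTournament A)
    (hin : ∀ x : V, ∃ y : V, A y x) :
    ∃ x y : V, x ≠ y ∧ Sullivan1 A x ∧ Sullivan1 A y :=
  two_sullivan_aux A hA hin
end

section
/- Every strong tournament with at least three vertices has at least two distinct Sullivan-2 vertices. -/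
/-- Every strong tournament with at least three vertices has at least two distinct
Sullivan-2 vertices. -/
theorem strong_tournament_two_sullivan2 {V : Type*} [Fintype V]
    (A : V → V → Prop) (hA : IsTournament A) (hstrong : IsStrong A)
    (hcard : 3 ≤ Fintype.card V) :
    ∃ x y : V, x ≠ y ∧ Sullivan2 A x ∧ Sullivan2 A y := by
    classical
  obtain ⟨⟨hirr, hasym⟩, hadj⟩ := hA
  set n := Fintype.card V with hn
  -- Finset versions of degrees
  set dp : V → ℕ := fun v => (Finset.univ.filter fun w => A v w).card with hdpdef
  set dm : V → ℕ := fun v => (Finset.univ.filter fun w => A w v).card with hdmdef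
  set UF : V → Finset V :=
    fun v => Finset.univ.filter fun u => A u v ∧ ∀ w, A v w → A u w with hUFdef
  have hUFmem : ∀ v u, u ∈ UF v ↔ A u v ∧ ∀ w, A v w → A u w := by
    intro v u
    rw [hUFdef]
    simp only [Finset.mem_filter, Finset.mem_univ, true_and]
  -- bridge to the Set-valued definitions
  have hdpe : ∀ v, dplus A v = dp v := by
    intro v
    have h : Nplus A v = ↑(Finset.univ.filter fun w => A v w) := by
      ext w; simp [Nplus]
    rw [dplus, h, Set.ncard_coe_finset]
  have hdme : ∀ v, dminus A v = dm v := by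
    intro v
    have h : Nminus A v = ↑(Finset.univ.filter fun w => A w v) := by
      ext w; simp [Nminus]
    rw [dminus, h, Set.ncard_coe_finset]
  -- the key decomposition:  N⁻(v) = N⁺⁺(v) ∪ U(v)  (disjointly)
  have hsec : ∀ v, dminus A v = dsecond A v + (UF v).card := by
    intro v
    have hset : Nminus A v = Nsecond A v ∪ ↑(UF v) := by
      ext z
      simp only [Nminus, Nsecond, Nplus, Set.mem_setOf_eq, Set.mem_union, Set.mem_diff,
        Set.mem_iUnion, Finset.mem_coe, hUFmem, exists_prop]
      constructor
      · intro hzv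
        by_cases hdom : ∀ w, A v w → A z w
        · exact Or.inr ⟨hzv, hdom⟩
        · push_neg at hdom
          obtain ⟨w, hvw, hnzw⟩ := hdom
          have hne : w ≠ z := by
            intro h; exact hasym v w hvw (h ▸ hzv)
          have hwz : A w z := by
            rcases hadj w z hne with h | h
            · exact h
            · exact absurd h hnzw
          exact Or.inl ⟨⟨w, hvw, hwz⟩, fun hvz => hasym z v hzv hvz⟩
      · rintro (⟨⟨u, hvu, huz⟩, hnvz⟩ | ⟨hzv, _⟩)
        · have hne : z ≠ v := by
            intro h; exact hasym v u hvu (h ▸ huz)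
          rcases hadj z v hne with h | h
          · exact h
          · exact absurd h hnvz
        · exact hzv
    have hdis : Disjoint (Nsecond A v) (↑(UF v) : Set V) := by
      rw [Set.disjoint_left]
      rintro z hz hzU
      simp only [Nsecond, Nplus, Set.mem_diff, Set.mem_iUnion, Set.mem_setOf_eq,
        exists_prop] at hz
      obtain ⟨⟨u, hvu, huz⟩, _⟩ := hz
      rw [Finset.mem_coe, hUFmem] at hzU
      exact hasym u z huz (hzU.2 u hvu)
    rw [dminus, hset, Set.ncard_union_eq hdis (Set.toFinite _) (Set.toFinite _),
      Set.ncard_coe_finset]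
    rfl
  -- sufficient condition for Sullivan-2
  have suff : ∀ v, dm v + (UF v).card ≤ dp v → Sullivan2 A v := by
    intro v h
    have h1 := hsec v
    rw [hdme] at h1
    unfold Sullivan2
    rw [hdme, hdpe]
    omega
  -- every vertex has in- and out-degree splitting the rest of V
  have hpart : ∀ v, dp v + dm v + 1 = n := by
    intro v
    have hsplit : Finset.univ.erase v =
        (Finset.univ.filter fun w => A v w) ∪ (Finset.univ.filter fun w => A w v) := by
      ext w
      simp only [Finset.mem_erase, Finset.mem_univ, and_true, Finset.mem_union,
        Finset.mem_filter, true_and]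
      constructor
      · intro hne
        rcases hadj v w (Ne.symm hne) with h | h
        · exact Or.inl h
        · exact Or.inr h
      · rintro (h | h)
        · intro he; exact hirr v (he ▸ h)
        · intro he; exact hirr v (he ▸ h)
    have hdis : Disjoint (Finset.univ.filter fun w => A v w)
        (Finset.univ.filter fun w => A w v) := by
      rw [Finset.disjoint_left]
      intro a ha hb
      rw [Finset.mem_filter] at ha hb
      exact hasym v a ha.2 hb.2
    have hc : (Finset.univ.erase v).card = dp v + dm v := by
      rw [hsplit, Finset.card_union_of_disjoint hdis]
    have hc2 : (Finset.univ.erase v).card + 1 = n := by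
      rw [Finset.card_erase_add_one (Finset.mem_univ v), Finset.card_univ]
    omega
  -- total sum identity
  have hsumdpdm : ∑ v : V, dp v = ∑ v : V, dm v := by
    simp only [hdpdef, hdmdef, Finset.card_filter]
    exact Finset.sum_comm
  have htotal : ∑ v : V, (2 * dp v + 2) = n * (n + 1) := by
    have e1 : ∑ v : V, (dp v + dm v + 1) = n * n := by
      rw [Finset.sum_congr rfl fun v _ => hpart v]
      simp [Finset.card_univ, mul_comm, hn]
    rw [Finset.sum_add_distrib, Finset.sum_add_distrib] at e1
    have e2 : ∑ v : V, (2 * dp v + 2) = 2 * (∑ v : V, dp v) + 2 * n := by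
      rw [Finset.sum_add_distrib, ← Finset.mul_sum]
      simp [Finset.card_univ, mul_comm, hn]
    have e3 : ∑ (_ : V), 1 = n := by simp [Finset.card_univ, hn]
    rw [e3] at e1
    rw [← hsumdpdm] at e1
    have : n * (n + 1) = n * n + n := by ring
    omega
  -- u ∈ U(v) has strictly bigger out-degree
  have hUcard : ∀ v u, u ∈ UF v → dp v + 1 ≤ dp u := by
    intro v u hu
    rw [hUFmem] at hu
    obtain ⟨huv, hdom⟩ := hu
    have hsub : insert v (Finset.univ.filter fun w => A v w) ⊆
        Finset.univ.filter fun w => A u w := by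
      intro w hw
      rw [Finset.mem_insert] at hw
      rw [Finset.mem_filter]
      rcases hw with rfl | hw
      · exact ⟨Finset.mem_univ _, huv⟩
      · rw [Finset.mem_filter] at hw
        exact ⟨Finset.mem_univ _, hdom w hw.2⟩
    have hnm : v ∉ (Finset.univ.filter fun w => A v w) := by
      rw [Finset.mem_filter]
      intro h; exact hirr v h.2
    have := Finset.card_le_card hsub
    rw [Finset.card_insert_of_notMem hnm] at this
    exact this
  -- every vertex has positive in-degree (strongness)
  have hin : ∀ v, ∃ u, A u v := by
    intro v
    obtain ⟨z, hz⟩ := Fintype.exists_ne_of_one_lt_card (by omega) v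
    rcases (hstrong z v).cases_tail with heq | ⟨c, _, hc⟩
    · exact absurd heq.symm hz
    · exact ⟨c, hc⟩
  have hdmpos : ∀ v, 1 ≤ dm v := by
    intro v
    obtain ⟨u, hu⟩ := hin v
    have : u ∈ Finset.univ.filter fun w => A w v := by
      rw [Finset.mem_filter]; exact ⟨Finset.mem_univ _, hu⟩
    exact Finset.card_pos.mpr ⟨u, this⟩
  -- x : vertex of maximum out-degree
  have hnonempty : Nonempty V := Fintype.card_pos_iff.mp (by omega)
  obtain ⟨x, _, hxmax⟩ := Finset.exists_max_image Finset.univ dp Finset.univ_nonempty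
  have hxmax' : ∀ v, dp v ≤ dp x := fun v => hxmax v (Finset.mem_univ v)
  have hxS : n ≤ 2 * dp x + 1 := by
    have h1 : ∑ v : V, (2 * dp v + 2) ≤ (Finset.univ : Finset V).card • (2 * dp x + 2) :=
      Finset.sum_le_card_nsmul _ _ _ (fun v _ => by have := hxmax' v; omega)
    rw [Finset.card_univ, smul_eq_mul, ← hn, htotal] at h1
    have hn0 : 0 < n := by omega
    have := Nat.le_of_mul_le_mul_left (by linarith [h1] : n * (n + 1) ≤ n * (2 * dp x + 2)) hn0
    omega
  have hUFx : (UF x).card = 0 := by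
    rw [Finset.card_eq_zero, Finset.eq_empty_iff_forall_notMem]
    intro u hu
    have := hUcard x u hu
    have := hxmax' u
    omega
  have hSx : Sullivan2 A x := by
    apply suff
    have := hpart x
    omega
  -- main contradiction setup
  by_contra hcon
  push_neg at hcon
  have hno : ∀ v, v ≠ x → ¬ Sullivan2 A v := by
    intro v hv hSv
    exact hcon x v (Ne.symm hv) hSx hSv
  have hdpxub : dp x + 2 ≤ n := by
    have := hpart x
    have := hdmpos x
    omega
  -- the set S of vertices with d⁺ ≥ d⁻
  set S : Finset V := Finset.univ.filter fun v => n ≤ 2 * dp v + 1 with hSdef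
  have hSmem : ∀ v, v ∈ S ↔ n ≤ 2 * dp v + 1 := by
    intro v; rw [hSdef]; simp
  have hxmem : x ∈ S := (hSmem x).mpr hxS
  -- S has at least two elements
  have hSne2 : ∃ y, y ∈ S ∧ y ≠ x := by
    by_contra hall
    push_neg at hall
    have hsmall : ∀ v, v ≠ x → 2 * dp v + 2 ≤ n := by
      intro v hv
      by_contra hle
      push_neg at hle
      exact hv (hall v ((hSmem v).mpr (by omega)))
    have h1 : ∑ v ∈ Finset.univ.erase x, (2 * dp v + 2) ≤
        (Finset.univ.erase x).card • n := by
      apply Finset.sum_le_card_nsmul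
      intro v hv
      exact hsmall v (Finset.mem_erase.mp hv).1
    have h2 : (2 * dp x + 2) + ∑ v ∈ Finset.univ.erase x, (2 * dp v + 2) =
        ∑ v : V, (2 * dp v + 2) :=
      Finset.add_sum_erase _ (fun v => 2 * dp v + 2) (Finset.mem_univ x)
    have h3 : (Finset.univ.erase x).card + 1 = n := by
      rw [Finset.card_erase_add_one (Finset.mem_univ x), Finset.card_univ]
    rw [smul_eq_mul] at h1
    rw [htotal] at h2
    set m := (Finset.univ.erase x).card with hm
    have key : n * (n + 1) ≤ (2 * dp x + 2) + m * n := by omega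
    have hnm : n = m + 1 := by omega
    rw [hnm] at key hdpxub
    nlinarith [key, hdpxub]
  -- T = S \ {x}; y = max out-degree in T
  set T : Finset V := S.erase x with hTdef
  have hTne : T.Nonempty := by
    obtain ⟨y, hyS, hyx⟩ := hSne2
    exact ⟨y, Finset.mem_erase.mpr ⟨hyx, hyS⟩⟩
  obtain ⟨y, hyT, hymax⟩ := Finset.exists_max_image T dp hTne
  have hyx : y ≠ x := (Finset.mem_erase.mp hyT).1
  have hyS : y ∈ S := (Finset.mem_erase.mp hyT).2
  -- Claim C : every non-Sullivan-2 vertex of S \ {x} has x ∈ U(v)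
  have claimC : ∀ k : ℕ, ∀ v, n ≤ dp v + k → v ∈ S → v ≠ x → x ∈ UF v := by
    intro k
    induction k using Nat.strong_induction_on with
    | _ k ih =>
      intro v hkv hvS hvx
      have hnS : ¬ Sullivan2 A v := hno v hvx
      have hlt : dp v < dm v + (UF v).card := by
        by_contra h
        push_neg at h
        exact hnS (suff v h)
      have hvsplit := hpart v
      have hvSm : n ≤ 2 * dp v + 1 := (hSmem v).mp hvS
      have hUne : (UF v).Nonempty := by
        rw [Finset.nonempty_iff_ne_empty]
        intro h
        rw [h, Finset.card_empty] at hlt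
        omega
      obtain ⟨u, hu⟩ := hUne
      have hdpu := hUcard v u hu
      by_cases hux : u = x
      · rwa [hux] at hu
      · have huS : u ∈ S := (hSmem u).mpr (by omega)
        have hk1 : 1 ≤ k := by omega
        have hxUu : x ∈ UF u := ih (k - 1) (by omega) u (by omega) huS hux
        rw [hUFmem] at hu hxUu ⊢
        obtain ⟨huv, hdomu⟩ := hu
        obtain ⟨hxu, hdomx⟩ := hxUu
        exact ⟨hdomx v huv, fun w hw => hdomx w (hdomu w hw)⟩
  have hCx : ∀ v, v ∈ T → x ∈ UF v := by
    intro v hv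
    exact claimC n v (by omega) (Finset.mem_erase.mp hv).2 (Finset.mem_erase.mp hv).1
  -- U(y) ⊆ {x}, so d⁺(y) = d⁻(y) and n is odd
  have hUysub : UF y ⊆ {x} := by
    intro u hu
    have hdpu := hUcard y u hu
    rw [Finset.mem_singleton]
    by_contra hux
    have huS : u ∈ S := (hSmem u).mpr (by have := (hSmem y).mp hyS; omega)
    have huT : u ∈ T := Finset.mem_erase.mpr ⟨hux, huS⟩
    have := hymax u huT
    omega
  have hUycard : (UF y).card ≤ 1 := by
    calc (UF y).card ≤ ({x} : Finset V).card := Finset.card_le_card hUysub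
    _ = 1 := Finset.card_singleton x
  have hodd : n = 2 * dp y + 1 := by
    have hnS : ¬ Sullivan2 A y := hno y hyx
    have hlt : dp y < dm y + (UF y).card := by
      by_contra h
      push_neg at h
      exact hnS (suff y h)
    have := hpart y
    have := (hSmem y).mp hyS
    omega
  -- every vertex of T has out-degree exactly d⁺(y)
  have hTval : ∀ v ∈ T, 2 * dp v + 2 = n + 1 := by
    intro v hv
    have h1 := hymax v hv
    have h2 := (hSmem v).mp (Finset.mem_erase.mp hv).2
    omega
  -- w : an in-neighbour of x
  obtain ⟨w, hw⟩ := hin x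
  have hwx : w ≠ x := by
    intro h; exact hirr x (h ▸ hw)
  have hwT : w ∉ T := by
    intro h
    have := hCx w h
    rw [hUFmem] at this
    exact hasym w x hw this.1
  have hwS : w ∉ S := by
    intro h
    exact hwT (Finset.mem_erase.mpr ⟨hwx, h⟩)
  have hwbeats : ∀ v ∈ T, A w v := by
    intro v hv
    have hxv := hCx v hv
    rw [hUFmem] at hxv
    have hne : v ≠ w := by
      intro h; exact hwT (h ▸ hv)
    rcases hadj v w hne with h | h
    · exact absurd (hxv.2 w h) (fun hxw => hasym w x hw hxw)
    · exact h
  have hcardw : T.card + 1 ≤ dp w := by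
    have hsub : insert x T ⊆ Finset.univ.filter fun z => A w z := by
      intro z hz
      rw [Finset.mem_insert] at hz
      rw [Finset.mem_filter]
      rcases hz with rfl | hz
      · exact ⟨Finset.mem_univ _, hw⟩
      · exact ⟨Finset.mem_univ _, hwbeats z hz⟩
    have hxnT : x ∉ T := Finset.notMem_erase x S
    have := Finset.card_le_card hsub
    rw [Finset.card_insert_of_notMem hxnT] at this
    have hdpw : dp w = (Finset.univ.filter fun z => A w z).card := rfl
    omega
  have hwsmall : 2 * dp w + 2 ≤ n := by
    have : ¬ (n ≤ 2 * dp w + 1) := fun h => hwS ((hSmem w).mpr h)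
    omega
  have ht4 : 2 * T.card + 4 ≤ n := by omega
  -- final counting
  set t := T.card with htdef
  set q := (Finset.univ.filter fun v => ¬ (n ≤ 2 * dp v + 1)).card with hqdef
  have hsplitsum : ∑ v ∈ S, (2 * dp v + 2) +
      ∑ v ∈ Finset.univ.filter (fun v => ¬ (n ≤ 2 * dp v + 1)), (2 * dp v + 2) =
      ∑ v : V, (2 * dp v + 2) := by
    rw [hSdef]
    exact Finset.sum_filter_add_sum_filter_not _ _ _
  have hSFsum : (2 * dp x + 2) + ∑ v ∈ T, (2 * dp v + 2) = ∑ v ∈ S, (2 * dp v + 2) := by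
    rw [hTdef]
    exact Finset.add_sum_erase _ (fun v => 2 * dp v + 2) hxmem
  have hTsum : ∑ v ∈ T, (2 * dp v + 2) = t * (n + 1) := by
    rw [Finset.sum_congr rfl hTval, Finset.sum_const, smul_eq_mul]
  have hnotSsum : ∑ v ∈ Finset.univ.filter (fun v => ¬ (n ≤ 2 * dp v + 1)), (2 * dp v + 2) ≤
      q * (2 * dp y) := by
    rw [hqdef, ← smul_eq_mul]
    apply Finset.sum_le_card_nsmul
    intro v hv
    rw [Finset.mem_filter] at hv
    have := hv.2
    omega
  have hcards : S.card + q = n := by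
    rw [hSdef, hqdef, hn, ← Finset.card_univ]
    exact Finset.card_filter_add_card_filter_not _
  have hSFcard : t + 1 = S.card := by
    rw [htdef, hTdef]
    exact Finset.card_erase_add_one hxmem
  -- assemble the contradiction
  have hfinal : n * (n + 1) ≤ (2 * dp x + 2) + t * (n + 1) + q * (2 * dp y) := by
    omega
  have hq : t + 1 + q = n := by omega
  rw [hodd] at hfinal hq hdpxub ht4
  nlinarith [hfinal, hq, hdpxub, ht4]
end

section
/- Let D be a connected but not strong local tournament in which every vertex has in-degree at least one. Then D has at least three distinct Sullivan-1 vertices. -/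
/-- A connected but not strong local tournament in which every vertex has in-degree
at least one has at least three distinct Sullivan-1 vertices. -/
theorem connected_nonstrong_local_tournament_three_sullivan1 {V : Type*} [Fintype V]
    (A : V → V → Prop) (hA : IsLocalTournament A)
    (hconn : (SimpleGraph.fromRel A).Connected)
    (hns : ¬ IsStrong A)
    (hin : ∀ x : V, ∃ y : V, A y x) :
    ∃ x y z : V, x ≠ y ∧ x ≠ z ∧ y ≠ z ∧
      Sullivan1 A x ∧ Sullivan1 A y ∧ Sullivan1 A z := by
  classical
  obtain ⟨⟨hirr, hasym⟩, hout, hinadj⟩ := hA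
  have hne : Nonempty V := by
    by_contra h
    exact hns fun x y => (h ⟨x⟩).elim
  -- pick a vertex x0 in an initial strong component
  obtain ⟨x0, hx0⟩ := Finite.exists_min
    (fun x : V => ({y | Relation.ReflTransGen A y x}).ncard)
  have hmin : ∀ y, Relation.ReflTransGen A y x0 → Relation.ReflTransGen A x0 y := by
    intro y hy
    by_contra hxy
    have hss : {z | Relation.ReflTransGen A z y} ⊂ {z | Relation.ReflTransGen A z x0} :=
      ⟨fun z hz => hz.trans hy, fun h => hxy (h Relation.ReflTransGen.refl)⟩
    have h1 := Set.ncard_lt_ncard hss (Set.toFinite _)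
    have h2 := hx0 y
    omega
  set S : Set V := {y | Relation.ReflTransGen A x0 y ∧ Relation.ReflTransGen A y x0} with hSdef
  have hx0S : x0 ∈ S := ⟨Relation.ReflTransGen.refl, Relation.ReflTransGen.refl⟩
  -- anything reaching S is in S
  have hclos : ∀ z w, Relation.ReflTransGen A z w → w ∈ S → z ∈ S := by
    intro z w hzw hw
    have h1 : Relation.ReflTransGen A z x0 := hzw.trans hw.2
    exact ⟨hmin z h1, h1⟩
  have hinS : ∀ z w, A z w → w ∈ S → z ∈ S := fun z w h hw =>
    hclos z w (Relation.ReflTransGen.single h) hw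
  -- there is a vertex outside S
  have hvex : ∃ v, v ∉ S := by
    by_contra h
    push_neg at h
    exact hns fun a b => ((h a).2).trans (h b).1
  obtain ⟨v0, hv0⟩ := hvex
  -- a crossing arc out of S
  have hcross : ∃ u v, u ∈ S ∧ v ∉ S ∧ A u v := by
    have hreach : Relation.ReflTransGen (SimpleGraph.fromRel A).Adj x0 v0 :=
      (SimpleGraph.reachable_iff_reflTransGen _ _).mp (hconn.preconnected x0 v0)
    have key : ∀ w, Relation.ReflTransGen (SimpleGraph.fromRel A).Adj x0 w → w ∉ S →
        ∃ u v, u ∈ S ∧ v ∉ S ∧ A u v := by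
      intro w hw
      induction hw with
      | refl => intro h; exact absurd hx0S h
      | @tail b c hb hbc ih =>
        intro hc
        by_cases hbS : b ∈ S
        · rw [SimpleGraph.fromRel_adj] at hbc
          rcases hbc.2 with h | h
          · exact ⟨b, c, hbS, hc, h⟩
          · exact absurd (hinS c b h hbS) hc
        · exact ih hbS
    exact key v0 hreach hv0
  obtain ⟨u, v, huS, hvS, huv⟩ := hcross
  -- every vertex of S dominates v
  have hdom : ∀ w ∈ S, A w v := by
    have step : ∀ z c, A z v → A z c → c ∈ S → A c v := by
      intro z c hzv hzc hc
      have hne2 : v ≠ c := fun h => hvS (h ▸ hc)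
      rcases hout z v c hzv hzc hne2 with h | h
      · exact absurd (hinS v c h hc) hvS
      · exact h
    intro w hw
    have hruw : Relation.ReflTransGen A u w := huS.2.trans hw.1
    have main : ∀ c, Relation.ReflTransGen A u c → Relation.ReflTransGen A c w → A c v := by
      intro c hc
      induction hc with
      | refl => intro _; exact huv
      | @tail b c hb hbc ih =>
        intro hcw
        have hbw : Relation.ReflTransGen A b w := (Relation.ReflTransGen.single hbc).trans hcw
        have hcS : c ∈ S := hclos c w hcw hw
        exact step b c (ih hbw) hbc hcS
    exact main w hruw Relation.ReflTransGen.refl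
  -- S induces a tournament
  have htour : ∀ a ∈ S, ∀ b ∈ S, a ≠ b → A a b ∨ A b a := by
    intro a ha b hb hab
    exact hinadj v a b (hdom a ha) (hdom b hb) hab
  -- every nonempty subset of S has a king
  have exists_king : ∀ T : Set V, T ⊆ S → T.Nonempty →
      ∃ k ∈ T, ∀ y ∈ T, y ≠ k → A k y ∨ ∃ z ∈ T, A k z ∧ A z y := by
    intro T hTS hTne
    obtain ⟨k, hkT, hk⟩ := Set.exists_max_image T
      (fun x => ({z ∈ T | A x z}).ncard) (Set.toFinite _) hTne
    refine ⟨k, hkT, ?_⟩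
    intro y hyT hyk
    by_contra hcon
    push_neg at hcon
    obtain ⟨h1, h2⟩ := hcon
    have hyk' : A y k := (htour y (hTS hyT) k (hTS hkT) hyk).resolve_right h1
    have hsub : insert k {z ∈ T | A k z} ⊆ {z ∈ T | A y z} := by
      intro z hz
      rcases Set.mem_insert_iff.mp hz with rfl | hz
      · exact ⟨hkT, hyk'⟩
      · obtain ⟨hzT, hkz⟩ := hz
        have hzy : z ≠ y := fun h => h1 (h ▸ hkz)
        exact ⟨hzT, (htour z (hTS hzT) y (hTS hyT) hzy).resolve_left (h2 z hzT hkz)⟩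
    have h3 : ({z ∈ T | A k z}).ncard < ({z ∈ T | A y z}).ncard := by
      calc ({z ∈ T | A k z}).ncard < (insert k {z ∈ T | A k z}).ncard := by
            rw [Set.ncard_insert_of_notMem (fun h => hirr k h.2) (Set.toFinite _)]
            omega
        _ ≤ _ := Set.ncard_le_ncard hsub (Set.toFinite _)
    have h4 := hk y hyT
    omega
  -- given any vertex of S, there is a king of S dominating it
  have king_step : ∀ k ∈ S, ∃ k' ∈ S, A k' k ∧
      ∀ y ∈ S, y ≠ k' → A k' y ∨ ∃ z ∈ S, A k' z ∧ A z y := by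
    intro k hkS
    obtain ⟨w, hw⟩ := hin k
    have hwS : w ∈ S := hinS w k hw hkS
    obtain ⟨k', hk'T, hking⟩ := exists_king {y ∈ S | A y k} (fun z hz => hz.1) ⟨w, hwS, hw⟩
    refine ⟨k', hk'T.1, hk'T.2, ?_⟩
    intro y hyS hyk'
    by_cases hyT : y ∈ {y ∈ S | A y k}
    · rcases hking y hyT hyk' with h | ⟨z, hzT, h1, h2⟩
      · exact Or.inl h
      · exact Or.inr ⟨z, hzT.1, h1, h2⟩
    · by_cases hyk : y = k
      · exact Or.inl (hyk ▸ hk'T.2)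
      · have hAky : A k y := (htour y hyS k hkS hyk).resolve_left (fun h => hyT ⟨hyS, h⟩)
        exact Or.inr ⟨k, hkS, hk'T.2, hAky⟩
  -- a king of S is a Sullivan-1 vertex
  have sull : ∀ k ∈ S, (∀ y ∈ S, y ≠ k → A k y ∨ ∃ z ∈ S, A k z ∧ A z y) → Sullivan1 A k := by
    intro k hkS hking
    have hsub : Nminus A k ⊆ Nsecond A k := by
      intro y hy
      have hyS : y ∈ S := hinS y k hy hkS
      have hyk : y ≠ k := fun h => hirr k (h ▸ hy)
      rcases hking y hyS hyk with h | ⟨z, _, h1, h2⟩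
      · exact absurd h (hasym y k hy)
      · exact ⟨Set.mem_biUnion h1 h2, fun h => hasym y k hy h⟩
    exact Set.ncard_le_ncard hsub (Set.toFinite _)
  obtain ⟨k1, hk1S, _, hking1⟩ := king_step x0 hx0S
  obtain ⟨k2, hk2S, hA21, hking2⟩ := king_step k1 hk1S
  obtain ⟨k3, hk3S, hA32, hking3⟩ := king_step k2 hk2S
  refine ⟨k1, k2, k3, ?_, ?_, ?_, sull k1 hk1S hking1, sull k2 hk2S hking2, sull k3 hk3S hking3⟩
  · intro h; exact hirr k1 (h ▸ hA21)
  · intro h; exact hasym k3 k2 hA32 (h ▸ hA21)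
  · intro h; exact hirr k2 (h ▸ hA32)
end

section
/- Let D be a connected but not strong local tournament in which every vertex has in-degree at least one. Then D has at least two distinct Sullivan-2 vertices. -/
/-- A connected but not strong local tournament in which every vertex has in-degree
at least one has at least two distinct Sullivan-2 vertices. -/
theorem connected_nonstrong_local_tournament_two_sullivan2 {V : Type*} [Fintype V]
    (A : V → V → Prop) (hA : IsLocalTournament A)
    (hconn : (SimpleGraph.fromRel A).Connected)
    (hns : ¬ IsStrong A)
    (hin : ∀ x : V, ∃ y : V, A y x) :
    ∃ x y : V, x ≠ y ∧ Sullivan2 A x ∧ Sullivan2 A y := by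
  classical
  obtain ⟨⟨hirr, hasym⟩, houtadj, hinadj⟩ := hA
  have hVne : Nonempty V := hconn.nonempty
  obtain ⟨x0, -, hmin⟩ :=
    Finset.exists_min_image Finset.univ
      (fun x => (Finset.univ.filter (fun y => Relation.ReflTransGen A y x)).card)
      ⟨Classical.arbitrary V, Finset.mem_univ _⟩
  set S : Finset V := Finset.univ.filter (fun y => Relation.ReflTransGen A y x0) with hSdef
  have hmemS : ∀ y, y ∈ S ↔ Relation.ReflTransGen A y x0 := by
    intro y; simp [hSdef]
  have hx0 : x0 ∈ S := (hmemS x0).2 Relation.ReflTransGen.refl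
  have hback : ∀ z ∈ S, Relation.ReflTransGen A x0 z := by
    intro z hz
    have hsub : Finset.univ.filter (fun y => Relation.ReflTransGen A y z) ⊆ S := by
      intro y hy
      have hyz : Relation.ReflTransGen A y z := by simpa using hy
      exact (hmemS y).2 (hyz.trans ((hmemS z).1 hz))
    have hcard := hmin z (Finset.mem_univ z)
    have heq := Finset.eq_of_subset_of_card_le hsub hcard
    have hx0' : x0 ∈ Finset.univ.filter (fun y => Relation.ReflTransGen A y z) := heq ▸ hx0
    simpa using hx0'
  have hclosed : ∀ z s, s ∈ S → A z s → z ∈ S := fun z s hs h =>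
    (hmemS z).2 ((Relation.ReflTransGen.single h).trans ((hmemS s).1 hs))
  have hSne : ∃ b, b ∉ S := by
    by_contra h
    push_neg at h
    exact hns fun x y => ((hmemS x).1 (h x)).trans (hback y (h y))
  obtain ⟨b, hb⟩ := hSne
  have key : ∀ (u v : V) (w : (SimpleGraph.fromRel A).Walk u v), u ∈ S → v ∉ S →
      ∃ s c, s ∈ S ∧ c ∉ S ∧ A s c := by
    intro u v w
    induction w with
    | nil => intro h1 h2; exact absurd h1 h2
    | @cons a b' c' h p ih =>
      intro h1 h2
      by_cases hb' : b' ∈ S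
      · exact ih hb' h2
      · rw [SimpleGraph.fromRel_adj] at h
        rcases h.2 with h' | h'
        · exact ⟨a, b', h1, hb', h'⟩
        · exact absurd (hclosed b' a h1 h') hb'
  obtain ⟨w0⟩ := hconn.preconnected x0 b
  obtain ⟨s, c, hsS, hcS, hsc⟩ := key x0 b w0 hx0 hb
  have hdom1 : ∀ t, Relation.ReflTransGen A s t → t ∈ S → A t c := by
    intro t ht
    induction ht with
    | refl => exact fun _ => hsc
    | @tail u w' hp hstep ih =>
      intro hwS
      have huS : u ∈ S := hclosed u w' hwS hstep
      have huc : A u c := ih huS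
      have hnewc : w' ≠ c := fun h => hcS (h ▸ hwS)
      rcases houtadj u w' c hstep huc hnewc with h | h
      · exact h
      · exact absurd (hclosed c w' hwS h) hcS
  have hdom : ∀ t ∈ S, A t c := fun t ht =>
    hdom1 t (((hmemS s).1 hsS).trans (hback t ht)) ht
  have htour : ∀ t ∈ S, ∀ u ∈ S, t ≠ u → A t u ∨ A u t := fun t ht u hu hne =>
    hinadj c t u (hdom t ht) (hdom u hu) hne
  have hNin : ∀ x ∈ S, ∀ y, A y x → y ∈ S := fun x hx y hy => hclosed y x hx hy
  -- degree functions inside S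
  set f : V → ℕ := fun x => (S.filter (fun y => A x y)).card with hfdef
  set g : V → ℕ := fun x => (S.filter (fun y => A y x)).card with hgdef
  set n := S.card with hndef
  have hfg : ∀ x ∈ S, f x + g x + 1 = n := by
    intro x hx
    have h1 : S.filter (fun y => A x y) ∪ S.filter (fun y => A y x) = S.erase x := by
      ext y
      simp only [Finset.mem_union, Finset.mem_filter, Finset.mem_erase]
      constructor
      · rintro (⟨hy, h⟩ | ⟨hy, h⟩)
        · exact ⟨fun he => hirr x (by rwa [he] at h), hy⟩
        · exact ⟨fun he => hirr x (by rwa [he] at h), hy⟩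
      · rintro ⟨hne, hy⟩
        rcases htour x hx y hy (Ne.symm hne) with h | h
        · exact Or.inl ⟨hy, h⟩
        · exact Or.inr ⟨hy, h⟩
    have h2 : Disjoint (S.filter fun y => A x y) (S.filter fun y => A y x) := by
      rw [Finset.disjoint_left]
      rintro y hy1 hy2
      exact hasym x y (Finset.mem_filter.1 hy1).2 (Finset.mem_filter.1 hy2).2
    have h3 := Finset.card_union_of_disjoint h2
    rw [h1, Finset.card_erase_of_mem hx] at h3
    have hn1 : 1 ≤ n := Finset.card_pos.2 ⟨x, hx⟩
    simp only [hfdef, hgdef]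
    omega
  have hdm : ∀ x ∈ S, dminus A x = g x := by
    intro x hx
    have : Nminus A x = ↑(S.filter fun y => A y x) := by
      ext y
      simp only [Nminus, Set.mem_setOf_eq, Finset.coe_filter, Set.mem_setOf_eq]
      exact ⟨fun h => ⟨hNin x hx y h, h⟩, fun h => h.2⟩
    rw [dminus, this, Set.ncard_coe_finset]
  have hdp : ∀ x ∈ S, f x + 1 ≤ dplus A x := by
    intro x hx
    have hsub : ↑(insert c (S.filter fun y => A x y)) ⊆ Nplus A x := by
      intro y hy
      simp only [Finset.coe_insert, Set.mem_insert_iff, Finset.coe_filter,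
        Set.mem_setOf_eq] at hy
      rcases hy with rfl | hy
      · exact hdom x hx
      · exact hy.2
    have hle : (insert c (S.filter fun y => A x y)).card ≤ dplus A x := by
      rw [dplus, ← Set.ncard_coe_finset]
      exact Set.ncard_le_ncard hsub (Set.toFinite _)
    rwa [Finset.card_insert_of_notMem
      (fun hc => hcS (Finset.mem_filter.1 hc).1)] at hle
  -- double counting
  have hsumfg : ∑ x ∈ S, f x = ∑ x ∈ S, g x := by
    simp only [hfdef, hgdef, Finset.card_filter]
    rw [Finset.sum_comm]
  have hsum2 : 2 * ∑ x ∈ S, f x + n = n * n := by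
    have h1 : ∑ x ∈ S, (f x + g x + 1) = ∑ _x ∈ S, n :=
      Finset.sum_congr rfl (fun x hx => by rw [hfg x hx])
    rw [Finset.sum_add_distrib, Finset.sum_add_distrib, Finset.sum_const,
      Finset.sum_const, smul_eq_mul, smul_eq_mul, mul_one, ← hsumfg] at h1
    obtain ⟨q, hq⟩ : ∃ q, n * n = q := ⟨_, rfl⟩
    rw [← hndef] at h1
    rw [hq]
    rw [hq] at h1
    omega
  -- choose the two vertices
  obtain ⟨x1, hx1S, hmax1⟩ := Finset.exists_max_image S f ⟨x0, hx0⟩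
  obtain ⟨y0, hy0⟩ := hin x0
  have hy0S : y0 ∈ S := hNin x0 hx0 y0 hy0
  have hy0ne : y0 ≠ x0 := fun h => hirr x0 (by rwa [h] at hy0)
  have hn2 : 2 ≤ n := Finset.one_lt_card.2 ⟨y0, hy0S, x0, hx0, hy0ne⟩
  have hEne : (S.erase x1).Nonempty := by
    rw [← Finset.card_pos, Finset.card_erase_of_mem hx1S]
    omega
  obtain ⟨x2, hx2E, hmax2⟩ := Finset.exists_max_image (S.erase x1) f hEne
  have hx2S : x2 ∈ S := Finset.mem_of_mem_erase hx2E
  have hx21 : x2 ≠ x1 := Finset.ne_of_mem_erase hx2E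
  -- averaging for x1 : n ≤ 2 * f x1 + 1
  have havg1 : n ≤ 2 * f x1 + 1 := by
    have h1 : ∑ x ∈ S, f x ≤ n * f x1 := by
      have := Finset.sum_le_card_nsmul S f (f x1) (fun x hx => hmax1 x hx)
      simpa [hndef, smul_eq_mul] using this
    have h2 : n * n ≤ n * (2 * f x1 + 1) := by
      calc n * n = 2 * ∑ x ∈ S, f x + n := hsum2.symm
        _ ≤ 2 * (n * f x1) + n := by omega
        _ = n * (2 * f x1 + 1) := by ring
    exact Nat.le_of_mul_le_mul_left h2 (by omega)
  -- averaging for x2 : counting over the erase set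
  have hsumsplit : ∑ x ∈ S, f x ≤ f x1 + (n - 1) * f x2 := by
    have h1 : ∑ x ∈ S.erase x1, f x ≤ (n - 1) * f x2 := by
      have := Finset.sum_le_card_nsmul (S.erase x1) f (f x2) (fun x hx => hmax2 x hx)
      rwa [Finset.card_erase_of_mem hx1S, smul_eq_mul, ← hndef] at this
    have h2 : f x1 + ∑ x ∈ S.erase x1, f x = ∑ x ∈ S, f x :=
      Finset.add_sum_erase S f hx1S
    omega
  have hf1n : f x1 + 1 ≤ n := by have := hfg x1 hx1S; omega
  have havg2 : n ≤ 2 * f x2 + 2 := by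
    have h2 : (n - 1) * n ≤ (n - 1) * (2 * f x2 + 2) := by
      have e1 : n * n ≤ 2 * (f x1 + (n - 1) * f x2) + n := by
        obtain ⟨q, hq⟩ : ∃ q, (n-1) * f x2 = q := ⟨_, rfl⟩
        rw [hq]
        rw [hq] at hsumsplit
        obtain ⟨p, hp⟩ : ∃ p, n * n = p := ⟨_, rfl⟩
        rw [hp]
        rw [hp] at hsum2
        omega
      have e4 : n * n = (n - 1) * n + n := by
        have : n - 1 + 1 = n := by omega
        calc n * n = (n - 1 + 1) * n := by rw [this]
          _ = (n - 1) * n + n := by ring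
      calc (n - 1) * n = n * n - n := by omega
        _ ≤ 2 * (f x1 + (n - 1) * f x2) := by omega
        _ ≤ 2 * ((n - 1) + (n - 1) * f x2) := by
            obtain ⟨q, hq⟩ : ∃ q, (n-1) * f x2 = q := ⟨_, rfl⟩
            rw [hq]; omega
        _ = (n - 1) * (2 * f x2 + 2) := by ring
    exact Nat.le_of_mul_le_mul_left h2 (by omega)
  -- king lemma
  have king : ∀ x ∈ S, ∀ u, A u x → (u ∈ Nsecond A x) ∨ (f x + 1 ≤ f u) := by
    intro x hx u hu
    by_cases hw : ∃ w ∈ S, A x w ∧ A w u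
    · obtain ⟨w, hwS, hxw, hwu⟩ := hw
      left
      constructor
      · exact Set.mem_biUnion (show w ∈ Nplus A x from hxw) hwu
      · exact fun h => hasym u x hu h
    · right
      push_neg at hw
      have huS : u ∈ S := hNin x hx u hu
      have hsub : insert x (S.filter fun y => A x y) ⊆ S.filter fun y => A u y := by
        intro y hy
        rcases Finset.mem_insert.1 hy with rfl | hy
        · exact Finset.mem_filter.2 ⟨hx, hu⟩
        · obtain ⟨hyS, hxy⟩ := Finset.mem_filter.1 hy
          have hneuy : u ≠ y := fun h => hasym u x hu (by rwa [← h] at hxy)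
          rcases htour u huS y hyS hneuy with h | h
          · exact Finset.mem_filter.2 ⟨hyS, h⟩
          · exact absurd h (hw y hyS hxy)
      have hle : (insert x (S.filter fun y => A x y)).card ≤ f u :=
        Finset.card_le_card hsub
      rwa [Finset.card_insert_of_notMem
        (fun hc => hirr x (Finset.mem_filter.1 hc).2)] at hle
  -- x1 is Sullivan-2
  have hS1 : Sullivan2 A x1 := by
    have hsub : Nminus A x1 ⊆ Nsecond A x1 := by
      intro u hu
      have hu' : A u x1 := hu
      rcases king x1 hx1S u hu' with h | h
      · exact h
      · exact absurd (hmax1 u (hNin x1 hx1S u hu')) (by omega)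
    have h1 : dminus A x1 ≤ dsecond A x1 := by
      rw [dminus, dsecond]
      exact Set.ncard_le_ncard hsub (Set.toFinite _)
    have h2 := hdp x1 hx1S
    have h3 := hdm x1 hx1S
    have h4 := hfg x1 hx1S
    rw [Sullivan2]
    omega
  -- x2 is Sullivan-2
  have hS2 : Sullivan2 A x2 := by
    have h2 := hdp x2 hx2S
    have h3 := hdm x2 hx2S
    have h4 := hfg x2 hx2S
    by_cases hcase : Nminus A x2 ⊆ Nsecond A x2
    · have h1 : dminus A x2 ≤ dsecond A x2 := by
        rw [dminus, dsecond]
        exact Set.ncard_le_ncard hcase (Set.toFinite _)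
      rw [Sullivan2]
      omega
    · -- some in-neighbour misses the second neighbourhood: it must be x1
      have hu' : ∀ u, A u x2 → u ∉ Nsecond A x2 → u = x1 := by
        intro u hu hns2
        rcases king x2 hx2S u hu with h | h
        · exact absurd h hns2
        · by_contra hne
          have huS : u ∈ S := hNin x2 hx2S u hu
          have := hmax2 u (Finset.mem_erase.2 ⟨hne, huS⟩)
          omega
      have hx1in : A x1 x2 ∧ x1 ∉ Nsecond A x2 := by
        by_contra hcon
        apply hcase
        intro u hu
        have hu2 : A u x2 := hu
        by_contra hnu
        have := hu' u hu2 hnu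
        subst this
        exact hcon ⟨hu2, hnu⟩
      have hfx1 : f x2 + 1 ≤ f x1 := by
        rcases king x2 hx2S x1 hx1in.1 with h | h
        · exact absurd h hx1in.2
        · exact h
      have hsub2 : Nminus A x2 \ {x1} ⊆ Nsecond A x2 := by
        rintro u ⟨hu1, hu2⟩
        by_contra h
        exact hu2 (hu' u hu1 h)
      have hcard2 : dminus A x2 ≤ dsecond A x2 + 1 := by
        have e1 : Nminus A x2 ⊆ insert x1 (Nminus A x2 \ {x1}) := by
          intro u hu
          by_cases h : u = x1
          · exact Or.inl h
          · exact Or.inr ⟨hu, h⟩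
        calc dminus A x2 = (Nminus A x2).ncard := rfl
          _ ≤ (insert x1 (Nminus A x2 \ {x1})).ncard :=
              Set.ncard_le_ncard e1 (Set.toFinite _)
          _ ≤ (Nminus A x2 \ {x1}).ncard + 1 := Set.ncard_insert_le _ _
          _ ≤ dsecond A x2 + 1 := by
              have := Set.ncard_le_ncard hsub2 (Set.toFinite _)
              rw [dsecond]; omega
      by_cases h2m : n ≤ 2 * f x2 + 1
      · rw [Sullivan2]; omega
      · -- tight case: forces f x1 = n - 1, contradicting in-degree of x1
        exfalso
        have hk : 2 * f x2 + 1 ≤ n - 1 := by omega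
        have e3 : (n - 1) * (2 * f x2 + 1) ≤ (n - 1) * (n - 1) :=
          Nat.mul_le_mul_left _ hk
        have e1 : n * n ≤ 2 * f x1 + 2 * ((n - 1) * f x2) + n := by
          obtain ⟨q, hq⟩ : ∃ q, (n-1) * f x2 = q := ⟨_, rfl⟩
          rw [hq]
          rw [hq] at hsumsplit
          obtain ⟨p, hp⟩ : ∃ p, n * n = p := ⟨_, rfl⟩
          rw [hp]
          rw [hp] at hsum2
          omega
        have e4 : n * n = (n - 1) * (n - 1) + 2 * (n - 1) + 1 := by
          have h : n = (n - 1) + 1 := by omega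
          calc n * n = ((n-1) + 1) * ((n-1) + 1) := by rw [← h]
            _ = (n - 1) * (n - 1) + 2 * (n - 1) + 1 := by ring
        have e5 : (n - 1) * (2 * f x2 + 1) = 2 * ((n - 1) * f x2) + (n - 1) := by ring
        have hfx1big : n - 1 ≤ f x1 := by
          obtain ⟨q, hq⟩ : ∃ q, (n-1) * f x2 = q := ⟨_, rfl⟩
          obtain ⟨p, hp⟩ : ∃ p, (n-1) * (n-1) = p := ⟨_, rfl⟩
          obtain ⟨r, hr⟩ : ∃ r, n * n = r := ⟨_, rfl⟩
          rw [e5] at e3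
          rw [hq, hp] at e3
          rw [hq, hr] at e1
          rw [hr, hp] at e4
          omega
        -- then g x1 = 0, but x1 has an in-neighbour
        obtain ⟨y1, hy1⟩ := hin x1
        have hy1S : y1 ∈ S := hNin x1 hx1S y1 hy1
        have hg1 : 1 ≤ g x1 := by
          have : y1 ∈ S.filter (fun y => A y x1) := Finset.mem_filter.2 ⟨hy1S, hy1⟩
          have := Finset.card_pos.2 ⟨y1, this⟩
          simpa [hgdef] using this
        have := hfg x1 hx1S
        omega
  exact ⟨x1, x2, Ne.symm hx21, hS1, hS2⟩
end

section
/- Every round decomposable local tournament has a Sullivan-1 vertex. -/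
private lemma zmod_cast_val {r : ℕ} [NeZero r] (x : ZMod r) : ((x.val : ℕ) : ZMod r) = x :=
  ZMod.natCast_rightInverse x

private lemma dd_of_eq_add {r : ℕ} [NeZero r] {x y : ZMod r} {t : ℕ} (ht : t < r)
    (h : y = x + (t : ℕ)) : (y - x).val = t := by
  subst h
  rw [add_sub_cancel_left, ZMod.val_cast_of_lt ht]

private lemma eq_add_dd {r : ℕ} [NeZero r] (x y : ZMod r) :
    y = x + (((y - x).val : ℕ) : ZMod r) := by
  rw [zmod_cast_val]; ring

private lemma cast_add_eq {r : ℕ} {x : ZMod r} {a b t : ℕ} (h : a + t = b ∨ a + t = b + r) :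
    x + (a : ZMod r) + (t : ZMod r) = x + (b : ZMod r) := by
  rcases h with h | h
  · rw [add_assoc, ← Nat.cast_add, h]
  · rw [add_assoc, ← Nat.cast_add, h, Nat.cast_add, ZMod.natCast_self, add_zero]

private lemma mem_nsecond {r : ℕ} (B : ZMod r → ZMod r → Prop) {p u j : ZMod r}
    (h1 : B p u) (h2 : B u j) (h3 : ¬ B p j) : j ∈ Nsecond B p := by
  refine ⟨?_, h3⟩
  exact Set.mem_biUnion (show u ∈ Nplus B p from h1) (show j ∈ Nplus B u from h2)

private lemma tournament_max {V : Type*} [DecidableEq V] (A : V → V → Prop)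
    [DecidableRel A]
    (irr : ∀ x, ¬ A x x) (asym : ∀ x y, A x y → ¬ A y x)
    (P : Finset V)
    (hadj : ∀ x ∈ P, ∀ y ∈ P, x ≠ y → A x y ∨ A y x)
    (x : V) (hx : x ∈ P)
    (hmax : ∀ y ∈ P, (P.filter (fun z => A y z)).card ≤ (P.filter (fun z => A x z)).card) :
    ∀ y ∈ P, A y x → (∃ u ∈ P, A x u ∧ A u y) ∧ ¬ A x y := by
  intro y hy hyx
  have hnxy : ¬ A x y := asym _ _ hyx
  refine ⟨?_, hnxy⟩
  by_contra hno
  push_neg at hno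
  have hsub : insert x (P.filter (fun z => A x z)) ⊆ P.filter (fun z => A y z) := by
    intro u hu
    rcases Finset.mem_insert.1 hu with rfl | hu
    · exact Finset.mem_filter.2 ⟨hx, hyx⟩
    · obtain ⟨huP, hxu⟩ := Finset.mem_filter.1 hu
      have huy : u ≠ y := by rintro rfl; exact hnxy hxu
      have hnuy : ¬ A u y := fun h => hno u huP hxu h
      rcases hadj u huP y hy huy with h | h
      · exact absurd h hnuy
      · exact Finset.mem_filter.2 ⟨huP, h⟩
  have hxnot : x ∉ P.filter (fun z => A x z) := by
    simp [irr x]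
  have h1 := Finset.card_le_card hsub
  rw [Finset.card_insert_of_notMem hxnot] at h1
  have h2 := hmax y hy
  omega


private lemma round_claim {r : ℕ} [NeZero r] (hr : 2 ≤ r) (B : ZMod r → ZMod r → Prop)
    [DecidableRel B]
    (hB : IsLocalTournament B) (a b n : ZMod r → ℕ)
    (hc1 : ∀ i j : ZMod r, B i j ↔ 1 ≤ (j - i).val ∧ (j - i).val ≤ a i)
    (hc2 : ∀ i j : ZMod r, B j i ↔ 1 ≤ (i - j).val ∧ (i - j).val ≤ b i) :
    ∃ (i : ZMod r) (T : Finset (ZMod r)), (∀ j ∈ T, j ∈ Nsecond B i) ∧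
      ∑ j ∈ Finset.univ.filter (fun j => B j i), n j ≤ ∑ j ∈ T, n j := by
  obtain ⟨⟨irr, asym⟩, hout, _⟩ := hB
  by_cases hex : ∃ i : ZMod r, ∀ j, ¬ B j i
  · obtain ⟨i, hi⟩ := hex
    refine ⟨i, ∅, by simp, ?_⟩
    have hemp : Finset.univ.filter (fun j => B j i) = ∅ :=
      Finset.filter_eq_empty_iff.2 (fun j _ => hi j)
    rw [hemp]
  push_neg at hex
  -- every vertex has an in-neighbour hence i-1 → i, and a i ≥ 1
  have hval1 : (1 : ZMod r).val = 1 := by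
    rw [← Nat.cast_one, ZMod.val_cast_of_lt (by omega)]
  have hpred : ∀ i : ZMod r, B (i - 1) i := by
    intro i
    obtain ⟨j, hj⟩ := hex i
    have hb1 : 1 ≤ b i := le_trans ((hc2 i j).1 hj).1 ((hc2 i j).1 hj).2
    refine (hc2 i (i - 1)).2 ?_
    have : (i - (i - 1)).val = 1 := by rw [sub_sub_cancel, hval1]
    omega
  have ha1 : ∀ i : ZMod r, 1 ≤ a i := by
    intro i
    have h := hpred (i + 1)
    rw [add_sub_cancel_right] at h
    have := (hc1 i (i + 1)).1 h
    omega
  have haU : ∀ i : ZMod r, a i ≤ r - 2 := by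
    intro i
    by_contra hcon
    push_neg at hcon
    have hm1 : ((r - 1 : ℕ) : ZMod r) = -1 := by
      have h0 : ((r - 1 : ℕ) : ZMod r) + 1 = 0 := by
        rw [show (1 : ZMod r) = ((1:ℕ) : ZMod r) by norm_cast, ← Nat.cast_add,
          show r - 1 + 1 = r by omega, ZMod.natCast_self]
      exact eq_neg_of_add_eq_zero_left h0
    have hdv : ((i - 1) - i).val = r - 1 := by
      have : (i - 1) - i = ((r - 1 : ℕ) : ZMod r) := by rw [hm1]; ring
      rw [this, ZMod.val_cast_of_lt (by omega)]
    have hBi : B i (i - 1) := (hc1 i (i - 1)).2 (by omega)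
    exact asym _ _ hBi (hpred i)
  -- the "reach" function and its sup
  set F : ZMod r → ℕ → ℕ := fun p k => k + a (p + (k : ZMod r)) with hF
  set M : ZMod r → ℕ := fun p => (Finset.Icc 1 (a p)).sup (F p) with hM
  have hMdef : ∀ p : ZMod r, M p = (Finset.Icc 1 (a p)).sup (F p) := fun p => rfl
  have hFdef : ∀ (p : ZMod r) (k : ℕ), F p k = k + a (p + (k : ZMod r)) := fun p k => rfl
  have hBd : ∀ (p : ZMod r) (k : ℕ), 1 ≤ k → k ≤ a p → B p (p + (k : ZMod r)) := by
    intro p k h1 h2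
    refine (hc1 p (p + (k : ZMod r))).2 ?_
    have hd : ((p + (k : ZMod r)) - p).val = k :=
      dd_of_eq_add (by have := haU p; omega) rfl
    omega
  have hG1 : ∀ (p : ZMod r), ∀ k ∈ Finset.Icc 1 (a p), F p k ≤ r - 1 := by
    intro p k hk
    obtain ⟨hk1, hk2⟩ := Finset.mem_Icc.1 hk
    by_contra hcon
    push_neg at hcon
    have hklt : k < r := by have := haU p; omega
    have harc : B (p + (k : ZMod r)) p := by
      refine (hc1 (p + (k : ZMod r)) p).2 ?_
      have hd : (p - (p + (k : ZMod r))).val = r - k := by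
        refine dd_of_eq_add (by omega) ?_
        rw [cast_add_eq (Or.inr (by omega : k + (r - k) = 0 + r)), Nat.cast_zero, add_zero]
      have haF : r - k ≤ a (p + (k : ZMod r)) := by
        have : F p k = k + a (p + (k : ZMod r)) := rfl
        omega
      omega
    exact asym _ _ (hBd p k hk1 hk2) harc
  have hMle : ∀ p : ZMod r, M p ≤ r - 1 := fun p => Finset.sup_le (hG1 p)
  have hMge : ∀ p : ZMod r, a p + 1 ≤ M p := by
    intro p
    have hmem : a p ∈ Finset.Icc 1 (a p) := Finset.mem_Icc.2 ⟨ha1 p, le_refl _⟩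
    have h1 := Finset.le_sup (f := F p) hmem
    rw [← hMdef p] at h1
    have h2 := ha1 (p + ((a p : ℕ) : ZMod r))
    rw [hFdef] at h1
    omega
  have hG2 : ∀ (p : ZMod r) (s : ℕ), a p < s → s ≤ M p →
      (p + (s : ZMod r)) ∈ Nsecond B p := by
    intro p s hs1 hs2
    have hne : (Finset.Icc 1 (a p)).Nonempty := ⟨1, Finset.mem_Icc.2 ⟨le_refl _, ha1 p⟩⟩
    obtain ⟨k, hkmem, hkM⟩ := Finset.exists_mem_eq_sup _ hne (F p)
    obtain ⟨hk1, hk2⟩ := Finset.mem_Icc.1 hkmem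
    have hsr : s ≤ r - 1 := le_trans hs2 (hMle p)
    have h1 : B p (p + (k : ZMod r)) := hBd p k hk1 hk2
    have h2 : B (p + (k : ZMod r)) (p + (s : ZMod r)) := by
      refine (hc1 _ _).2 ?_
      have hd : ((p + (s : ZMod r)) - (p + (k : ZMod r))).val = s - k := by
        refine dd_of_eq_add (by omega) ?_
        rw [cast_add_eq (Or.inl (by omega : k + (s - k) = s))]
      have hFk : F p k = k + a (p + (k : ZMod r)) := rfl
      have : s ≤ k + a (p + (k : ZMod r)) := by rw [← hFk, ← hkM, ← hMdef]; exact hs2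
      omega
    have h3 : ¬ B p (p + (s : ZMod r)) := by
      intro hcon
      have hd : ((p + (s : ZMod r)) - p).val = s := dd_of_eq_add (by omega) rfl
      have := (hc1 _ _).1 hcon
      omega
    exact mem_nsecond B h1 h2 h3
  have hLfull : ∀ p : ZMod r, M p = r - 1 → ∀ j, B j p → j ∈ Nsecond B p := by
    intro p hMp j hjp
    set s := (j - p).val with hs
    have hs1 : 1 ≤ s := by
      rcases Nat.eq_zero_or_pos s with h0 | h
      · exfalso
        have : j - p = 0 := (ZMod.val_eq_zero _).1 h0
        have : j = p := by linear_combination this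
        exact irr p (this ▸ hjp)
      · exact h
    have hsa : a p < s := by
      by_contra hle
      push_neg at hle
      exact asym _ _ ((hc1 p j).2 ⟨hs1, hle⟩) hjp
    have hsM : s ≤ M p := by
      have := ZMod.val_lt (j - p)
      omega
    have := hG2 p s hsa hsM
    rwa [← eq_add_dd p j] at this
  -- choose the minimizer of in-weight
  set W : ZMod r → ℕ := fun i => ∑ j ∈ Finset.univ.filter (fun j => B j i), n j with hW
  obtain ⟨i0, -, hmin⟩ := Finset.exists_min_image Finset.univ W ⟨0, Finset.mem_univ 0⟩
  by_cases hfull : M i0 = r - 1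
  · exact ⟨i0, Finset.univ.filter (fun j => B j i0),
      fun j hj => hLfull i0 hfull j (Finset.mem_filter.1 hj).2, le_refl _⟩
  have hM2 : M i0 ≤ r - 2 := by have := hMle i0; omega
  have hMgei0 := hMge i0
  set Mi := M i0 with hMi
  set j0 : ZMod r := i0 + ((Mi + 1 : ℕ) : ZMod r) with hj0
  have hdij0 : (j0 - i0).val = Mi + 1 := dd_of_eq_add (by omega) rfl
  have hij0 : ¬ B i0 j0 := by
    intro hcon
    have := (hc1 i0 j0).1 hcon
    omega
  by_cases hbad : ∃ v, B v j0 ∧ Mi + 2 ≤ (v - i0).val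
  · -- j0 has full reach: use j0
    obtain ⟨v, hvj0, hs2⟩ := hbad
    set s := (v - i0).val with hsdef
    have hsr : s ≤ r - 1 := by have := ZMod.val_lt (v - i0); omega
    have hveq : v = i0 + ((s : ℕ) : ZMod r) := eq_add_dd i0 v
    have hdvj0 : (j0 - v).val = r + Mi + 1 - s := by
      refine dd_of_eq_add (by omega) ?_
      rw [hveq, hj0, cast_add_eq (Or.inr (by omega : s + (r + Mi + 1 - s) = (Mi + 1) + r))]
    have hav : r + Mi + 1 - s ≤ a v := by
      have := (hc1 v j0).1 hvj0
      omega
    have hne : (Finset.Icc 1 (a i0)).Nonempty := ⟨1, Finset.mem_Icc.2 ⟨le_refl _, ha1 i0⟩⟩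
    obtain ⟨k, hkmem, hkM⟩ := Finset.exists_mem_eq_sup _ hne (F i0)
    obtain ⟨hk1, hk2⟩ := Finset.mem_Icc.1 hkmem
    have hkMi : k < Mi := by omega
    set w : ZMod r := i0 + ((k : ℕ) : ZMod r) with hw
    have hFkw : Mi = k + a w := by rw [hMi, hMdef, hkM, hFdef, hw]
    have hvw : B v w := by
      refine (hc1 v w).2 ?_
      have hd : (w - v).val = r + k - s := by
        refine dd_of_eq_add (by omega) ?_
        rw [hveq, hw, cast_add_eq (Or.inr (by omega : s + (r + k - s) = k + r))]
      omega
    have hwj0 : w ≠ j0 := by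
      intro h
      have : (w - i0).val = k := dd_of_eq_add (by omega) rfl
      rw [h, hdij0] at this
      omega
    rcases hout v w j0 hvw hvj0 hwj0 with hwj | hjw
    · exfalso
      have hd : (j0 - w).val = Mi + 1 - k := by
        refine dd_of_eq_add (by omega) ?_
        rw [hj0, hw, cast_add_eq (Or.inl (by omega : k + (Mi + 1 - k) = Mi + 1))]
      have := (hc1 w j0).1 hwj
      omega
    · have hj0weq : j0 + ((r + k - Mi - 1 : ℕ) : ZMod r) = w := by
        rw [hj0, hw, cast_add_eq (Or.inr (by omega : (Mi + 1) + (r + k - Mi - 1) = k + r))]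
      have hdj0w : (w - j0).val = r + k - Mi - 1 :=
        dd_of_eq_add (by omega) hj0weq.symm
      have haj0 : r + k - Mi - 1 ≤ a j0 := by
        have := (hc1 j0 w).1 hjw
        omega
      have hMj0 : M j0 = r - 1 := by
        refine le_antisymm (hMle j0) ?_
        have hmem : (r + k - Mi - 1) ∈ Finset.Icc 1 (a j0) :=
          Finset.mem_Icc.2 ⟨by omega, haj0⟩
        have hle := Finset.le_sup (f := F j0) hmem
        have hFj0 : F j0 (r + k - Mi - 1) = (r + k - Mi - 1) + a w := by
          rw [hFdef, hj0weq]
        rw [hFj0] at hle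
        have : (r + k - Mi - 1) + a w = r - 1 := by omega
        rw [this] at hle
        exact hle
      exact ⟨j0, Finset.univ.filter (fun j => B j j0),
        fun j hj => hLfull j0 hMj0 j (Finset.mem_filter.1 hj).2, le_refl _⟩
  · -- all in-neighbours of j0 lie in the second neighbourhood of i0
    push_neg at hbad
    refine ⟨i0, Finset.univ.filter (fun j => B j j0), ?_, hmin j0 (Finset.mem_univ j0)⟩
    intro v hv
    have hvj0 : B v j0 := (Finset.mem_filter.1 hv).2
    set s := (v - i0).val with hsdef
    have hveq : v = i0 + ((s : ℕ) : ZMod r) := eq_add_dd i0 v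
    have hs : s ≤ Mi + 1 := by have := hbad v hvj0; omega
    have hsM : s ≠ Mi + 1 := by
      intro h
      rw [h, ← hj0] at hveq
      rw [hveq] at hvj0
      exact irr j0 hvj0
    have hs1 : 1 ≤ s := by
      rcases Nat.eq_zero_or_pos s with h0 | h
      · exfalso
        rw [h0] at hveq
        simp at hveq
        rw [hveq] at hvj0
        exact hij0 hvj0
      · exact h
    have hsa : a i0 < s := by
      by_contra hle
      push_neg at hle
      have hdvj0 : (j0 - v).val = Mi + 1 - s := by
        refine dd_of_eq_add (by omega) ?_
        rw [hveq, hj0, cast_add_eq (Or.inl (by omega : s + (Mi + 1 - s) = Mi + 1))]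
      have hva := (hc1 v j0).1 hvj0
      have hmem : s ∈ Finset.Icc 1 (a i0) := Finset.mem_Icc.2 ⟨hs1, hle⟩
      have hle2 := Finset.le_sup (f := F i0) hmem
      have hFs : F i0 s = s + a v := by rw [hFdef, ← hveq]
      rw [hFs] at hle2
      rw [← hMdef i0, ← hMi] at hle2
      omega
    have := hG2 i0 s hsa (by omega)
    rwa [← hveq] at this

/-- Every round decomposable local tournament has a Sullivan-1 vertex. -/
theorem round_decomposable_has_sullivan1 {V : Type*} [Fintype V]
    (A : V → V → Prop) (hA : IsLocalTournament A)
    (hrd : IsRoundDecomposable A) :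
    ∃ x : V, Sullivan1 A x := by
  classical
  obtain ⟨r, B, φ, hr2, hBloc, hBround, hφsurj, harc, hpart, -⟩ := hrd
  obtain ⟨r', hr'pos, e, hlab⟩ := hBround
  haveI : NeZero r := ⟨by omega⟩
  haveI : NeZero r' := ⟨hr'pos.ne'⟩
  have hr' : 2 ≤ r' := by
    have hcard : Fintype.card (ZMod r') = Fintype.card (ZMod r) := Fintype.card_congr e
    rw [ZMod.card, ZMod.card] at hcard
    omega
  set B' : ZMod r' → ZMod r' → Prop := fun i j => B (e i) (e j) with hB'
  set ψ : V → ZMod r' := fun x => e.symm (φ x) with hψ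
  have hψsurj : Function.Surjective ψ := e.symm.surjective.comp hφsurj
  have hψe : ∀ x : V, e (ψ x) = φ x := fun x => e.apply_symm_apply (φ x)
  have harc' : ∀ x y, ψ x ≠ ψ y → (A x y ↔ B' (ψ x) (ψ y)) := by
    intro x y hne
    have hφne : φ x ≠ φ y := by
      intro h
      exact hne (by rw [hψ]; simp [h])
    rw [harc x y hφne]
    show B (φ x) (φ y) ↔ B (e (ψ x)) (e (ψ y))
    rw [hψe, hψe]
  have hpart' : ∀ x y, ψ x = ψ y → x ≠ y → Adjacent A x y := by
    intro x y h
    exact hpart x y (by rw [← hψe x, ← hψe y, h])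
  have hB'loc : IsLocalTournament B' := by
    obtain ⟨⟨hirr, hasym⟩, hout, hin⟩ := hBloc
    exact ⟨⟨fun i => hirr (e i), fun i j h => hasym _ _ h⟩,
      fun x y z h1 h2 hne => hout (e x) (e y) (e z) h1 h2 (fun h => hne (e.injective h)),
      fun x y z h1 h2 hne => hin (e x) (e y) (e z) h1 h2 (fun h => hne (e.injective h))⟩
  have hB'irr : ∀ i, ¬ B' i i := hB'loc.1.1
  have hB'asym : ∀ i j, B' i j → ¬ B' j i := hB'loc.1.2
  -- interval characterizations of arcs of B'
  have hc1 : ∀ i j : ZMod r', B' i j ↔ 1 ≤ (j - i).val ∧ (j - i).val ≤ dplus B' i := by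
    intro i j
    have hN : Nplus B' i = (fun t : ℕ => i + (t : ZMod r')) '' Set.Icc 1 (dplus B' i) :=
      (hlab i).1
    constructor
    · intro hij
      have : j ∈ Nplus B' i := hij
      rw [hN] at this
      obtain ⟨t, ⟨ht1, ht2⟩, hte0⟩ := this
      have hte : i + ((t : ℕ) : ZMod r') = j := hte0
      have htm : ((t : ℕ) : ZMod r') = ((t % r' : ℕ) : ZMod r') := by
        conv_lhs => rw [← Nat.div_add_mod t r']
        push_cast [ZMod.natCast_self]
        ring
      rcases Nat.eq_zero_or_pos (t % r') with h0 | hpos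
      · exfalso
        rw [htm, h0] at hte
        simp at hte
        rw [← hte] at hij
        exact hB'irr i hij
      · have hval : (j - i).val = t % r' := by
          refine dd_of_eq_add (Nat.mod_lt _ (by omega)) ?_
          rw [← hte, htm]
        rw [hval]
        exact ⟨hpos, le_trans (Nat.mod_le t r') ht2⟩
    · rintro ⟨h1, h2⟩
      show j ∈ Nplus B' i
      rw [hN]
      exact ⟨(j - i).val, ⟨h1, h2⟩, (eq_add_dd i j).symm⟩
  have hc2 : ∀ i j : ZMod r', B' j i ↔ 1 ≤ (i - j).val ∧ (i - j).val ≤ dminus B' i := by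
    intro i j
    have hN : Nminus B' i = (fun t : ℕ => i - (t : ZMod r')) '' Set.Icc 1 (dminus B' i) :=
      (hlab i).2
    constructor
    · intro hij
      have : j ∈ Nminus B' i := hij
      rw [hN] at this
      obtain ⟨t, ⟨ht1, ht2⟩, hte0⟩ := this
      have hte : i - ((t : ℕ) : ZMod r') = j := hte0
      have htm : ((t : ℕ) : ZMod r') = ((t % r' : ℕ) : ZMod r') := by
        conv_lhs => rw [← Nat.div_add_mod t r']
        push_cast [ZMod.natCast_self]
        ring
      rcases Nat.eq_zero_or_pos (t % r') with h0 | hpos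
      · exfalso
        rw [htm, h0] at hte
        simp at hte
        rw [← hte] at hij
        exact hB'irr i hij
      · have hval : (i - j).val = t % r' := by
          refine dd_of_eq_add (Nat.mod_lt _ (by omega)) ?_
          rw [← hte, htm]
          ring
        rw [hval]
        exact ⟨hpos, le_trans (Nat.mod_le t r') ht2⟩
    · rintro ⟨h1, h2⟩
      show j ∈ Nminus B' i
      rw [hN]
      refine ⟨(i - j).val, ⟨h1, h2⟩, ?_⟩
      show i - (((i - j).val : ℕ) : ZMod r') = j
      rw [zmod_cast_val]
      ring
  -- apply the weighted round claim
  set n : ZMod r' → ℕ := fun j => (Finset.univ.filter (fun y => ψ y = j)).card with hn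
  obtain ⟨i0, T, hT, hsum⟩ := round_claim hr' B' hB'loc (dplus B') (dminus B') n hc1 hc2
  -- pick the vertex of maximum out-degree in the part of i0
  set P : Finset V := Finset.univ.filter (fun y => ψ y = i0) with hP
  have hPne : P.Nonempty := by
    obtain ⟨x, hx⟩ := hψsurj i0
    exact ⟨x, Finset.mem_filter.2 ⟨Finset.mem_univ x, hx⟩⟩
  obtain ⟨x, hxP, hxmax⟩ :=
    Finset.exists_max_image P (fun y => (P.filter (fun z => A y z)).card) hPne
  have hψx : ψ x = i0 := (Finset.mem_filter.1 hxP).2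
  have hAdjP : ∀ y ∈ P, ∀ z ∈ P, y ≠ z → A y z ∨ A z y := by
    intro y hy z hz hne
    exact hpart' y z (by rw [(Finset.mem_filter.1 hy).2, (Finset.mem_filter.1 hz).2]) hne
  have htourn := tournament_max A hA.1.1 hA.1.2 P hAdjP x hxP hxmax
  -- in-degree count
  have hdm : dminus A x = (Finset.univ.filter (fun y => A y x)).card := by
    have hset : Nminus A x = ↑(Finset.univ.filter (fun y => A y x)) := by
      ext y; simp [Nminus]
    rw [dminus, hset, Set.ncard_coe_finset]
  set c : ZMod r' → ℕ := fun j => (Finset.univ.filter (fun y => A y x ∧ ψ y = j)).card with hc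
  have hfib : (Finset.univ.filter (fun y => A y x)).card = ∑ j : ZMod r', c j := by
    rw [Finset.card_eq_sum_card_fiberwise (f := ψ) (t := Finset.univ)
      (fun y _ => Finset.mem_univ _)]
    refine Finset.sum_congr rfl (fun j _ => ?_)
    rw [Finset.filter_filter]
  set Nin : Finset (ZMod r') := Finset.univ.filter (fun j => B' j i0) with hNin
  have hi0Nin : i0 ∉ Nin := by
    simp only [hNin, Finset.mem_filter]
    rintro ⟨-, h⟩
    exact hB'irr i0 h
  have hcnj : ∀ j ∈ Nin, c j = n j := by
    intro j hj
    have hBji : B' j i0 := (Finset.mem_filter.1 hj).2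
    have hji : j ≠ i0 := by rintro rfl; exact hB'irr j hBji
    have hfe : Finset.univ.filter (fun y => A y x ∧ ψ y = j)
        = Finset.univ.filter (fun y => ψ y = j) := by
      ext y
      simp only [Finset.mem_filter, Finset.mem_univ, true_and]
      constructor
      · rintro ⟨-, h⟩; exact h
      · intro h
        refine ⟨?_, h⟩
        have hne : ψ y ≠ ψ x := by rw [h, hψx]; exact hji
        refine (harc' y x hne).2 ?_
        rw [h, hψx]
        exact hBji
    simp only [hc, hn]
    rw [hfe]
  have hczero : ∀ j, j ∉ insert i0 Nin → c j = 0 := by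
    intro j hj
    simp only [Finset.mem_insert, not_or, hNin, Finset.mem_filter, Finset.mem_univ,
      true_and] at hj
    obtain ⟨hji0, hnB⟩ := hj
    rw [hc]
    refine Finset.card_eq_zero.2 (Finset.filter_eq_empty_iff.2 ?_)
    rintro y - ⟨hyx, hyj⟩
    have hne : ψ y ≠ ψ x := by rw [hyj, hψx]; exact hji0
    have := (harc' y x hne).1 hyx
    rw [hyj, hψx] at this
    exact hnB this
  have hsum_split : ∑ j : ZMod r', c j = c i0 + ∑ j ∈ Nin, c j := by
    rw [← Finset.sum_insert hi0Nin]
    exact (Finset.sum_subset (Finset.subset_univ _) (fun j _ hj => hczero j hj)).symm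
  have hdm2 : dminus A x = c i0 + ∑ j ∈ Nin, n j := by
    rw [hdm, hfib, hsum_split]
    congr 1
    exact Finset.sum_congr rfl hcnj
  -- second neighbourhood lower bound
  set SecondP : Finset V := Finset.univ.filter
    (fun z => ψ z = i0 ∧ (∃ u, ψ u = i0 ∧ A x u ∧ A u z) ∧ ¬ A x z) with hSP
  set U : Finset V := Finset.univ.filter (fun y => ψ y ∈ T) with hU
  have hi0T : i0 ∉ T := by
    intro h
    obtain ⟨hmem, -⟩ := hT i0 h
    rw [Set.mem_iUnion₂] at hmem
    obtain ⟨u, hu1, hu2⟩ := hmem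
    exact hB'asym i0 u hu1 hu2
  have hdisj : Disjoint SecondP U := by
    rw [Finset.disjoint_left]
    intro z hz1 hz2
    have h1 : ψ z = i0 := (Finset.mem_filter.1 hz1).2.1
    have h2 : ψ z ∈ T := (Finset.mem_filter.1 hz2).2
    rw [h1] at h2
    exact hi0T h2
  have hUcard : U.card = ∑ j ∈ T, n j := by
    rw [Finset.card_eq_sum_card_fiberwise (f := ψ) (s := U) (t := T)
      (fun y hy => (Finset.mem_filter.1 hy).2)]
    refine Finset.sum_congr rfl (fun j hj => ?_)
    congr 1
    ext y
    simp only [hU, Finset.mem_filter, Finset.mem_univ, true_and]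
    constructor
    · rintro ⟨-, h⟩; exact h
    · intro h; exact ⟨h ▸ hj, h⟩
  have hSecSub : ↑(SecondP ∪ U) ⊆ Nsecond A x := by
    intro z hz
    rcases Finset.mem_union.1 (Finset.mem_coe.1 hz) with hz | hz
    · obtain ⟨-, hzi, ⟨u, hui, hxu, huz⟩, hnxz⟩ := Finset.mem_filter.1 hz
      exact ⟨Set.mem_biUnion (show u ∈ Nplus A x from hxu) huz, hnxz⟩
    · have hjT : ψ z ∈ T := (Finset.mem_filter.1 hz).2
      obtain ⟨hmem, hnot⟩ := hT _ hjT
      rw [Set.mem_iUnion₂] at hmem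
      obtain ⟨u', hu'1, hu'2⟩ := hmem
      obtain ⟨u, hu⟩ := hψsurj u'
      have hBu'1 : B' i0 u' := hu'1
      have hBu'2 : B' u' (ψ z) := hu'2
      have hi0u' : i0 ≠ u' := fun h => hB'irr u' (h ▸ hBu'1)
      have hAxu : A x u := by
        refine (harc' x u (by rw [hψx, hu]; exact hi0u')).2 ?_
        rw [hψx, hu]; exact hBu'1
      have hu'z : u' ≠ ψ z := fun h => hB'irr (ψ z) (h ▸ hBu'2)
      have hAuz : A u z := by
        refine (harc' u z (by rw [hu]; exact hu'z)).2 ?_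
        rw [hu]; exact hBu'2
      have hi0z : i0 ≠ ψ z := by
        intro h
        rw [← h] at hBu'2
        exact hB'asym i0 u' hBu'1 hBu'2
      have hnAxz : ¬ A x z := by
        intro h
        have hne : ψ x ≠ ψ z := by rw [hψx]; exact hi0z
        have := (harc' x z hne).1 h
        rw [hψx] at this
        exact hnot this
      exact ⟨Set.mem_biUnion (show u ∈ Nplus A x from hAxu) hAuz, hnAxz⟩
  have hds : SecondP.card + ∑ j ∈ T, n j ≤ dsecond A x := by
    rw [dsecond]
    calc SecondP.card + ∑ j ∈ T, n j = (SecondP ∪ U).card := by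
          rw [Finset.card_union_of_disjoint hdisj, hUcard]
      _ = (↑(SecondP ∪ U) : Set V).ncard := (Set.ncard_coe_finset _).symm
      _ ≤ (Nsecond A x).ncard := Set.ncard_le_ncard hSecSub (Set.toFinite _)
  have hcSP : c i0 ≤ SecondP.card := by
    refine Finset.card_le_card ?_
    intro y hy
    obtain ⟨-, hyx, hyi⟩ := Finset.mem_filter.1 hy
    have hyP : y ∈ P := Finset.mem_filter.2 ⟨Finset.mem_univ y, hyi⟩
    obtain ⟨⟨u, huP, hxu, huy⟩, hnxy⟩ := htourn y hyP hyx
    exact Finset.mem_filter.2 ⟨Finset.mem_univ y,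
      hyi, ⟨u, (Finset.mem_filter.1 huP).2, hxu, huy⟩, hnxy⟩
  refine ⟨x, ?_⟩
  rw [Sullivan1, hdm2]
  calc c i0 + ∑ j ∈ Nin, n j ≤ SecondP.card + ∑ j ∈ T, n j := add_le_add hcSP hsum
    _ ≤ dsecond A x := hds
end

section
/- Every round decomposable local tournament has a Sullivan-2 vertex. -/
open Finset


private lemma ncard_eq_sum_ite {V : Type*} [Fintype V] (P : V → Prop) [DecidablePred P] :
    {y | P y}.ncard = ∑ y : V, if P y then 1 else 0 := by
  classical
  rw [Set.ncard_eq_toFinset_card']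
  rw [← Finset.card_filter]
  congr 1
  ext y
  simp

private lemma ncard_le_ncard_of_subset {V : Type*} [Fintype V] {s t : Set V} (h : s ⊆ t) :
    s.ncard ≤ t.ncard :=
  Set.ncard_le_ncard h (Set.toFinite t)

/-- Every finite nonempty tournament (given as a set `S` in an ambient oriented graph,
with all pairs in `S` adjacent) has a vertex `x` with
`2·d⁻(x) ≤ d⁺⁺(x) + d⁺(x)` (all degrees within `S`). -/
private lemma part_sullivan {V : Type*} [Fintype V] (A : V → V → Prop)
    (hirr : ∀ x, ¬ A x x) (hasym : ∀ x y, A x y → ¬ A y x)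
    (S : Set V) (hS : S.Nonempty)
    (htour : ∀ x ∈ S, ∀ y ∈ S, x ≠ y → A x y ∨ A y x) :
    ∃ x ∈ S, 2 * {y | y ∈ S ∧ A y x}.ncard ≤
      {y | y ∈ S ∧ ¬ A x y ∧ ∃ u, u ∈ S ∧ A x u ∧ A u y}.ncard +
      {y | y ∈ S ∧ A x y}.ncard := by
  classical
  set OUTn : V → ℕ := fun v => {y | y ∈ S ∧ A v y}.ncard with hOUTn
  set INn : V → ℕ := fun v => {y | y ∈ S ∧ A y v}.ncard with hINn
  -- handshake
  have handshake : ∀ v ∈ S, INn v + OUTn v + 1 = S.ncard := by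
    intro v hv
    have hd : Disjoint {y | y ∈ S ∧ A y v} {y | y ∈ S ∧ A v y} := by
      rw [Set.disjoint_left]
      rintro y ⟨_, h1⟩ ⟨_, h2⟩
      exact hasym _ _ h2 h1
    have hu : {y | y ∈ S ∧ A y v} ∪ {y | y ∈ S ∧ A v y} = S \ {v} := by
      ext y
      constructor
      · rintro (⟨hyS, hy⟩ | ⟨hyS, hy⟩)
        · exact ⟨hyS, fun he => hirr v (he ▸ hy)⟩
        · exact ⟨hyS, fun he => hirr v (he ▸ hy)⟩
      · rintro ⟨hyS, hne⟩
        rcases htour v hv y hyS (fun he => hne (by simp [← he])) with h | h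
        · exact Or.inr ⟨hyS, h⟩
        · exact Or.inl ⟨hyS, h⟩
    have h1 : INn v + OUTn v = (S \ {v}).ncard := by
      rw [hINn, hOUTn, ← Set.ncard_union_eq hd (Set.toFinite _) (Set.toFinite _), hu]
    have h2 : (S \ {v}).ncard + 1 = S.ncard := by
      rw [Set.ncard_diff_singleton_add_one hv (Set.toFinite _)]
    omega
  -- double counting: total out = total in
  have havg : ∃ z ∈ S, INn z ≤ OUTn z := by
    by_contra hcon
    push_neg at hcon
    have key : ∀ (v : V), (if v ∈ S then OUTn v else 0) =
        ∑ y : V, (if v ∈ S ∧ y ∈ S ∧ A v y then 1 else 0) := by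
      intro v
      by_cases hv : v ∈ S
      · simp only [hv, if_true, true_and, hOUTn]
        exact ncard_eq_sum_ite _
      · simp [hv]
    have key2 : ∀ (v : V), (if v ∈ S then INn v else 0) =
        ∑ y : V, (if y ∈ S ∧ v ∈ S ∧ A y v then 1 else 0) := by
      intro v
      by_cases hv : v ∈ S
      · simp only [hv, if_true, hINn]
        rw [ncard_eq_sum_ite (fun y => y ∈ S ∧ A y v)]
        refine Finset.sum_congr rfl fun y _ => ?_
        simp
      · simp [hv]
    have hsum : ∑ v : V, (if v ∈ S then OUTn v else 0) =
        ∑ v : V, (if v ∈ S then INn v else 0) := by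
      calc ∑ v : V, (if v ∈ S then OUTn v else 0)
          = ∑ v : V, ∑ y : V, (if v ∈ S ∧ y ∈ S ∧ A v y then 1 else 0) := by
            exact Finset.sum_congr rfl fun v _ => key v
        _ = ∑ y : V, ∑ v : V, (if v ∈ S ∧ y ∈ S ∧ A v y then 1 else 0) := Finset.sum_comm
        _ = ∑ v : V, (if v ∈ S then INn v else 0) := by
            refine Finset.sum_congr rfl fun v _ => ?_
            rw [key2 v]
    have hlt : ∑ v : V, (if v ∈ S then OUTn v else 0) <
        ∑ v : V, (if v ∈ S then INn v else 0) := by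
      obtain ⟨w, hw⟩ := hS
      refine Finset.sum_lt_sum (fun v _ => ?_) ⟨w, Finset.mem_univ w, ?_⟩
      · by_cases hv : v ∈ S
        · simp only [hv, if_true]
          exact le_of_lt (hcon v hv)
        · simp [hv]
      · simp only [hw, if_true]
        exact hcon w hw
    omega
  -- maximum out-degree vertex
  have hfin : S.Finite := Set.toFinite S
  obtain ⟨x, hxS, hxmax⟩ := Set.exists_max_image S OUTn hfin hS
  refine ⟨x, hxS, ?_⟩
  -- (a) in-neighbours are second neighbours
  have hsub : {y | y ∈ S ∧ A y x} ⊆ {y | y ∈ S ∧ ¬ A x y ∧ ∃ u, u ∈ S ∧ A x u ∧ A u y} := by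
    rintro y ⟨hyS, hyx⟩
    have hnxy : ¬ A x y := hasym _ _ hyx
    refine ⟨hyS, hnxy, ?_⟩
    by_contra hno
    push_neg at hno
    -- then OUT x ∪ {x} ⊆ OUT y
    have hsub2 : insert x {z | z ∈ S ∧ A x z} ⊆ {z | z ∈ S ∧ A y z} := by
      rintro z (rfl | ⟨hzS, hxz⟩)
      · exact ⟨hxS, hyx⟩
      · have hzy : ¬ A z y := fun h => hno z hzS hxz h
        have hzney : z ≠ y := by
          rintro rfl
          exact hasym _ _ hyx hxz
        rcases htour z hzS y hyS hzney with h | h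
        · exact absurd h hzy
        · exact ⟨hzS, h⟩
    have hx_not : x ∉ {z | z ∈ S ∧ A x z} := fun h => hirr x h.2
    have hcard : OUTn x + 1 ≤ OUTn y := by
      have := ncard_le_ncard_of_subset hsub2
      rwa [Set.ncard_insert_of_notMem hx_not (Set.toFinite _)] at this
    have := hxmax y hyS
    omega
  have hIN_le_SEC : INn x ≤ {y | y ∈ S ∧ ¬ A x y ∧ ∃ u, u ∈ S ∧ A x u ∧ A u y}.ncard :=
    ncard_le_ncard_of_subset hsub
  -- (b) in-degree ≤ out-degree
  obtain ⟨z, hzS, hz⟩ := havg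
  have h1 := handshake x hxS
  have h2 := handshake z hzS
  have h3 := hxmax z hzS
  have hIN_le_OUT : INn x ≤ OUTn x := by omega
  have e1 : INn x = {y | y ∈ S ∧ A y x}.ncard := rfl
  have e2 : OUTn x = {y | y ∈ S ∧ A x y}.ncard := rfl
  omega



private def csum {r : ℕ} (n : ZMod r → ℕ) (c : ZMod r) (l : ℕ) : ℕ :=
  ∑ s ∈ Finset.Ioc 0 l, n (c + (s : ZMod r))

private def msum {r : ℕ} (n : ZMod r → ℕ) (c : ZMod r) (l : ℕ) : ℕ :=
  ∑ s ∈ Finset.Ioc 0 l, n (c - (s : ZMod r))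

private lemma csum_mono {r : ℕ} (n : ZMod r → ℕ) (c : ZMod r) {a b : ℕ} (h : a ≤ b) :
    csum n c a ≤ csum n c b :=
  Finset.sum_le_sum_of_subset (Finset.Ioc_subset_Ioc (le_refl 0) h)

private lemma csum_split {r : ℕ} (n : ZMod r → ℕ) (c : ZMod r) (a b : ℕ) :
    csum n c (a + b) = csum n c a + csum n (c + (a : ZMod r)) b := by
  unfold csum
  rw [← Finset.sum_Ioc_consecutive (fun s => n (c + (s : ℕ))) (Nat.zero_le a) (Nat.le_add_right a b)]
  congr 1
  refine Finset.sum_nbij' (fun s => s - a) (fun s => s + a) ?_ ?_ ?_ ?_ ?_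
  · intro s hs; simp only [Finset.mem_Ioc] at hs ⊢; omega
  · intro s hs; simp only [Finset.mem_Ioc] at hs ⊢; omega
  · intro s hs; simp only [Finset.mem_Ioc] at hs; omega
  · intro s hs; simp only [Finset.mem_Ioc] at hs; omega
  · intro s hs
    simp only [Finset.mem_Ioc] at hs
    congr 1
    push_cast [Nat.cast_sub (le_of_lt hs.1)]
    ring

private lemma csum_reflect {r : ℕ} (n : ZMod r → ℕ) (y : ZMod r) (l : ℕ) :
    csum n (y - (l : ZMod r)) l + n (y - (l : ZMod r)) = msum n y l + n y := by
  unfold csum msum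
  have e1 : ∑ s ∈ Finset.Icc 0 l, n ((y - (l : ZMod r)) + (s : ZMod r)) =
      (∑ s ∈ Finset.Ioc 0 l, n ((y - (l : ZMod r)) + (s : ZMod r))) + n (y - (l : ZMod r)) := by
    rw [← Finset.Ioc_insert_left (Nat.zero_le l), Finset.sum_insert (by simp)]
    simp only [Nat.cast_zero, add_zero]
    omega
  have e2 : ∑ s ∈ Finset.Icc 0 l, n (y - (s : ZMod r)) =
      (∑ s ∈ Finset.Ioc 0 l, n (y - (s : ZMod r))) + n y := by
    rw [← Finset.Ioc_insert_left (Nat.zero_le l), Finset.sum_insert (by simp)]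
    simp only [Nat.cast_zero, sub_zero]
    omega
  have e3 : ∑ s ∈ Finset.Icc 0 l, n ((y - (l : ZMod r)) + (s : ZMod r)) =
      ∑ s ∈ Finset.Icc 0 l, n (y - (s : ZMod r)) := by
    refine Finset.sum_nbij' (fun s => l - s) (fun s => l - s) ?_ ?_ ?_ ?_ ?_
    · intro s hs; simp only [Finset.mem_Icc] at hs ⊢; omega
    · intro s hs; simp only [Finset.mem_Icc] at hs ⊢; omega
    · intro s hs; simp only [Finset.mem_Icc] at hs; omega
    · intro s hs; simp only [Finset.mem_Icc] at hs; omega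
    · intro s hs
      simp only [Finset.mem_Icc] at hs
      congr 1
      push_cast [Nat.cast_sub hs.2]
      ring
  omega

private lemma circle_sullivan {r : ℕ} [NeZero r] (B : ZMod r → ZMod r → Prop)
    (p m n : ZMod r → ℕ)
    (hplt : ∀ i, p i < r) (hmlt : ∀ i, m i < r)
    (hC : ∀ a c, B a c ↔ 1 ≤ (c - a).val ∧ (c - a).val ≤ p a)
    (hCm : ∀ a c, B a c ↔ 1 ≤ (c - a).val ∧ (c - a).val ≤ m c)
    (hasym : ∀ a c, B a c → ¬ B c a)
    (hout : ∀ x y z, B x y → B x z → y ≠ z → (B y z ∨ B z y))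
    (h1 : ∀ i, 1 ≤ m i) :
    ∃ i, 1 ≤ p i ∧
      2 * (∑ t ∈ Finset.Ioc 0 (m i), n (i - (t : ZMod r))) ≤
        (∑ t ∈ Finset.Ioc 0 (p i), n (i + (t : ZMod r))) +
        (∑ t ∈ Finset.Ioc 0 (p (i + (p i : ZMod r))), n ((i + (p i : ZMod r)) + (t : ZMod r))) := by
  classical
  have hr1 : 1 ≤ r := Nat.pos_of_ne_zero (NeZero.ne r)
  have valnat : ∀ t : ℕ, t < r → ((t : ZMod r)).val = t := fun t ht => ZMod.val_natCast_of_lt ht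
  have natval : ∀ x : ZMod r, ((x.val : ℕ) : ZMod r) = x := ZMod.natCast_zmod_val
  have valzero : ∀ x : ZMod r, x ≠ 0 → 1 ≤ x.val := by
    intro x hx
    rcases Nat.eq_zero_or_pos x.val with h | h
    · exfalso; apply hx; rw [← natval x, h]; simp
    · exact h
  have negval : ∀ x : ZMod r, x ≠ 0 → (-x).val = r - x.val := by
    intro x hx
    rw [ZMod.neg_val, if_neg hx]
  have castne : ∀ t : ℕ, 1 ≤ t → t < r → ((t : ZMod r)) ≠ 0 := by
    intro t h1t h2t hz
    have := valnat t h2t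
    rw [hz] at this
    simp at this
    omega
  -- arc from numeric data
  have mkArc : ∀ (a c : ZMod r) (t : ℕ), c - a = (t : ZMod r) → 1 ≤ t → t ≤ p a → B a c := by
    intro a c t he h1t h2t
    rw [hC, he, valnat t (lt_of_le_of_lt h2t (hplt a))]
    exact ⟨h1t, h2t⟩
  -- A3: no 2-cycles numerically
  have A3 : ∀ a c, B a c → (c - a).val + p c < r := by
    intro a c h
    have hd := (hC a c).mp h
    have hne : (c - a) ≠ 0 := by
      intro h0; rw [h0] at hd; simp at hd
    have hnot : ¬ B c a := hasym a c h
    rw [hC] at hnot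
    push_neg at hnot
    have hval : (a - c).val = r - (c - a).val := by
      have he : a - c = -(c - a) := by ring
      rw [he, negval _ hne]
    have hvlt : (c - a).val < r := ZMod.val_lt _
    have h1' : 1 ≤ (a - c).val := by omega
    have := hnot h1'
    omega
  -- A5: forward adjacency among out-neighbours
  have A5 : ∀ a c j, B a c → B a j → (c - a).val < (j - a).val → B c j := by
    intro a c j hac haj hlt
    have hd1 := (hC a c).mp hac
    have hd2 := (hC a j).mp haj
    have hd1lt : (c - a).val < r := ZMod.val_lt _
    have hd2lt : (j - a).val < r := ZMod.val_lt _
    have hcj : c ≠ j := by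
      intro h; rw [h] at hlt; omega
    rcases hout a c j hac haj hcj with h | h
    · exact h
    · exfalso
      -- h : B j c; derive B j a, contradicting B a j
      have hsub : c - j = -(((j - a).val - (c - a).val : ℕ) : ZMod r) := by
        push_cast [Nat.cast_sub (le_of_lt hlt)]
        rw [natval (j - a), natval (c - a)]
        ring
      have hvsub : (c - j).val = r - ((j - a).val - (c - a).val) := by
        rw [hsub, negval _ (castne _ (by omega) (by omega)), valnat _ (by omega)]
      have hjc := (hC j c).mp h
      have hja : B j a := by
        rw [hC]
        have hva : (a - j).val = r - (j - a).val := by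
          have he : a - j = -(j - a) := by ring
          rw [he, negval _ ?_]
          · intro h0
            rw [h0] at hd2
            simp at hd2
        constructor
        · omega
        · omega
      exact hasym a j haj hja
  -- basic arcs of sigma
  have N0 : ∀ y, B (y - (m y : ZMod r)) y := by
    intro y
    rw [hCm]
    have he : y - (y - (m y : ZMod r)) = ((m y : ℕ) : ZMod r) := by ring
    rw [he, valnat _ (hmlt y)]
    exact ⟨h1 y, le_refl _⟩
  have dxy : ∀ y, (y - (y - (m y : ZMod r))).val = m y := by
    intro y
    have he : y - (y - (m y : ZMod r)) = ((m y : ℕ) : ZMod r) := by ring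
    rw [he, valnat _ (hmlt y)]
  have N1 : ∀ y, m y ≤ p (y - (m y : ZMod r)) := by
    intro y
    have := (hC _ _).mp (N0 y)
    rw [dxy y] at this
    exact this.2
  have N2 : ∀ y, m y + p y < r := by
    intro y
    by_contra hcon
    push_neg at hcon
    have hmy := hmlt y
    have hBy : B y (y - (m y : ZMod r)) := by
      apply mkArc y _ (r - m y)
      · have hz : ((r : ℕ) : ZMod r) = 0 := ZMod.natCast_self r
        push_cast [Nat.cast_sub (le_of_lt (hmlt y))]
        rw [hz]; ring
      · omega
      · omega
    exact hasym _ _ hBy (N0 y)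
  -- the arc from sigma y to its reach, when p (sigma y) > m y, lands beyond y
  have N3 : ∀ y, p (y - (m y : ZMod r)) ≤ m y + p y := by
    intro y
    set x := y - (m y : ZMod r) with hxdef
    by_cases hle : p x ≤ m y
    · omega
    push_neg at hle
    have hx1 : B x (x + (p x : ZMod r)) := by
      apply mkArc x _ (p x) (by ring) (by omega) (le_refl _)
    have hBy : B y (x + (p x : ZMod r)) := by
      apply A5 x y (x + (p x : ZMod r)) (N0 y) hx1
      rw [dxy y]
      have : (x + (p x : ZMod r) - x) = ((p x : ℕ) : ZMod r) := by ring
      rw [this, valnat _ (hplt x)]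
      exact hle
    have := (hC y _).mp hBy
    have hval : (x + (p x : ZMod r) - y).val = p x - m y := by
      have he : x + (p x : ZMod r) - y = ((p x - m y : ℕ) : ZMod r) := by
        push_cast [Nat.cast_sub (le_of_lt hle)]
        rw [hxdef]; ring
      rw [he, valnat _ (by have := hplt x; omega)]
    rw [hval] at this
    omega
  have N4 : ∀ y, m y + p y - p (y - (m y : ZMod r)) ≤
      p ((y - (m y : ZMod r)) + (p (y - (m y : ZMod r)) : ZMod r)) := by
    intro y
    set x := y - (m y : ZMod r) with hxdef
    set w := x + (p x : ZMod r) with hwdef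
    rcases Nat.lt_or_ge (m y) (p x) with hlt | hge
    · -- m y < p x
      rcases Nat.lt_or_ge (p x) (m y + p y) with hlt2 | hge2
      · -- strict: derive B w (y + p y)
        have hx1 : B x w := mkArc x w (p x) (by rw [hwdef]; ring) (by omega) (le_refl _)
        have hyw : B y w := by
          apply A5 x y w (N0 y) hx1
          rw [dxy y]
          have : (w - x) = ((p x : ℕ) : ZMod r) := by rw [hwdef]; ring
          rw [this, valnat _ (hplt x)]
          exact hlt
        have hpy1 : 1 ≤ p y := by omega
        have hyρ : B y (y + (p y : ZMod r)) := mkArc y _ (p y) (by ring) hpy1 (le_refl _)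
        have hwρ : B w (y + (p y : ZMod r)) := by
          apply A5 y w (y + (p y : ZMod r)) hyw hyρ
          have e1 : (w - y) = ((p x - m y : ℕ) : ZMod r) := by
            push_cast [Nat.cast_sub (le_of_lt hlt)]
            rw [hwdef, hxdef]; ring
          have e2 : (y + (p y : ZMod r) - y) = ((p y : ℕ) : ZMod r) := by ring
          rw [e1, e2, valnat _ (by have := hplt x; omega), valnat _ (hplt y)]
          omega
        have := (hC w _).mp hwρ
        have hval : (y + (p y : ZMod r) - w).val = m y + p y - p x := by
          have he : y + (p y : ZMod r) - w = ((m y + p y - p x : ℕ) : ZMod r) := by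
            push_cast [Nat.cast_sub (le_of_lt hlt2)]
            rw [hwdef, hxdef]; ring
          rw [he, valnat _ (by have := hplt y; omega)]
        rw [hval] at this
        exact this.2
      · -- p x ≥ m y + p y : lhs is 0
        omega
    · -- p x ≤ m y, so p x = m y by N1, and w = y
      have hpx : p x = m y := le_antisymm hge (N1 y)
      have hwy : w = y := by
        rw [hwdef, hpx, hxdef]; ring
      rw [hwy, hpx]
      omega
  -- per-vertex identities, in csum/msum form
  have I1 : ∀ y : ZMod r, csum n (y - (m y : ZMod r)) (m y) + n (y - (m y : ZMod r)) =
      msum n y (m y) + n y := fun y => csum_reflect n y (m y)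
  have I2 : ∀ y : ZMod r, csum n (y - (m y : ZMod r)) (m y) ≤
      csum n (y - (m y : ZMod r)) (p (y - (m y : ZMod r))) :=
    fun y => csum_mono n _ (N1 y)
  have I3 : ∀ y : ZMod r,
      csum n ((y - (m y : ZMod r)) + (p (y - (m y : ZMod r)) : ZMod r))
        (m y + p y - p (y - (m y : ZMod r))) ≤
      csum n ((y - (m y : ZMod r)) + (p (y - (m y : ZMod r)) : ZMod r))
        (p ((y - (m y : ZMod r)) + (p (y - (m y : ZMod r)) : ZMod r))) :=
    fun y => csum_mono n _ (N4 y)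
  have I4 : ∀ y : ZMod r,
      csum n (y - (m y : ZMod r)) (m y) + csum n y (p y) =
      csum n (y - (m y : ZMod r)) (p (y - (m y : ZMod r))) +
        csum n ((y - (m y : ZMod r)) + (p (y - (m y : ZMod r)) : ZMod r))
          (m y + p y - p (y - (m y : ZMod r))) := by
    intro y
    have hN3 := N3 y
    have hA : csum n (y - (m y : ZMod r)) (m y + p y) =
        csum n (y - (m y : ZMod r)) (m y) + csum n y (p y) := by
      rw [csum_split n (y - (m y : ZMod r)) (m y) (p y)]
      have he : (y - (m y : ZMod r)) + ((m y : ℕ) : ZMod r) = y := by ring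
      rw [he]
    have hB : csum n (y - (m y : ZMod r)) (m y + p y) =
        csum n (y - (m y : ZMod r)) (p (y - (m y : ZMod r))) +
          csum n ((y - (m y : ZMod r)) + (p (y - (m y : ZMod r)) : ZMod r))
            (m y + p y - p (y - (m y : ZMod r))) := by
      have hb : m y + p y = p (y - (m y : ZMod r)) + (m y + p y - p (y - (m y : ZMod r))) := by
        omega
      rw [hb, csum_split]
      have hb2 : p (y - (m y : ZMod r)) + (m y + p y - p (y - (m y : ZMod r)))
          - p (y - (m y : ZMod r)) = m y + p y - p (y - (m y : ZMod r)) := by omega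
      rw [hb2]
    omega
  -- suppose the conclusion fails everywhere
  by_contra hcon
  push_neg at hcon
  have hcon' : ∀ i : ZMod r, 1 ≤ p i →
      csum n i (p i) + csum n (i + (p i : ZMod r)) (p (i + (p i : ZMod r))) <
        2 * msum n i (m i) := hcon
  -- build a cycle of the map y ↦ y - m y
  set f : ℕ → ZMod r := fun k => (fun y : ZMod r => y - (m y : ZMod r))^[k] 0 with hfdef
  have hcol : ∃ a b : ℕ, a < b ∧ b ≤ r ∧ f a = f b := by
    have hcard : Fintype.card (ZMod r) < Fintype.card (Fin (r + 1)) := by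
      rw [ZMod.card, Fintype.card_fin]; omega
    obtain ⟨a, b, hne, he⟩ :=
      Fintype.exists_ne_map_eq_of_card_lt (fun k : Fin (r + 1) => f (k : ℕ)) hcard
    rcases lt_or_gt_of_ne (fun h : (a : ℕ) = (b : ℕ) => hne (Fin.ext h)) with h | h
    · exact ⟨a, b, h, Nat.lt_succ_iff.mp b.2, he⟩
    · exact ⟨b, a, h, Nat.lt_succ_iff.mp a.2, he.symm⟩
  obtain ⟨a, b, hab, hbr, hfab⟩ := hcol
  set T := b - a with hTdef
  have hT1 : 1 ≤ T := by omega
  set u : ℕ → ZMod r := fun t => f (a + t) with hudef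
  have hstep : ∀ t, u (t + 1) = u t - (m (u t) : ZMod r) := by
    intro t
    show f (a + (t + 1)) = f (a + t) - (m (f (a + t)) : ZMod r)
    have he : a + (t + 1) = (a + t) + 1 := by omega
    rw [he, hfdef]
    exact Function.iterate_succ_apply' _ (a + t) 0
  have hcyc : u T = u 0 := by
    show f (a + T) = f (a + 0)
    have h1' : a + T = b := by omega
    have h2' : a + 0 = a := by omega
    rw [h1', h2', hfab]
  -- shift lemma for cyclic sums
  have hshift : ∀ g : ZMod r → ℕ,
      ∑ t ∈ Finset.range T, g (u (t + 1)) = ∑ t ∈ Finset.range T, g (u t) := by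
    intro g
    have h1' : ∑ t ∈ Finset.range (T + 1), g (u t) =
        (∑ t ∈ Finset.range T, g (u (t + 1))) + g (u 0) :=
      Finset.sum_range_succ' (fun t => g (u t)) T
    have h2' : ∑ t ∈ Finset.range (T + 1), g (u t) =
        (∑ t ∈ Finset.range T, g (u t)) + g (u T) :=
      Finset.sum_range_succ (fun t => g (u t)) T
    rw [hcyc] at h2'
    omega
  -- summed identities
  have sumI4 : (∑ t ∈ Finset.range T, csum n (u t - (m (u t) : ZMod r)) (m (u t))) +
      (∑ t ∈ Finset.range T, csum n (u t) (p (u t))) =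
      (∑ t ∈ Finset.range T, csum n (u (t + 1)) (p (u (t + 1)))) +
      (∑ t ∈ Finset.range T,
        csum n ((u t - (m (u t) : ZMod r)) + (p (u t - (m (u t) : ZMod r)) : ZMod r))
          (m (u t) + p (u t) - p (u t - (m (u t) : ZMod r)))) := by
    rw [← Finset.sum_add_distrib, ← Finset.sum_add_distrib]
    refine Finset.sum_congr rfl fun t _ => ?_
    rw [hstep t]
    exact I4 (u t)
  have sumshiftP : ∑ t ∈ Finset.range T, csum n (u (t + 1)) (p (u (t + 1))) =
      ∑ t ∈ Finset.range T, csum n (u t) (p (u t)) :=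
    hshift (fun y => csum n y (p y))
  have sumI1 : (∑ t ∈ Finset.range T, csum n (u t - (m (u t) : ZMod r)) (m (u t))) +
      (∑ t ∈ Finset.range T, n (u (t + 1))) =
      (∑ t ∈ Finset.range T, msum n (u t) (m (u t))) +
      (∑ t ∈ Finset.range T, n (u t)) := by
    rw [← Finset.sum_add_distrib, ← Finset.sum_add_distrib]
    refine Finset.sum_congr rfl fun t _ => ?_
    have := I1 (u t)
    rw [hstep t]
    exact this
  have sumshiftn : ∑ t ∈ Finset.range T, n (u (t + 1)) = ∑ t ∈ Finset.range T, n (u t) :=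
    hshift n
  have sumI2 : (∑ t ∈ Finset.range T, csum n (u t - (m (u t) : ZMod r)) (m (u t))) ≤
      ∑ t ∈ Finset.range T, csum n (u (t + 1)) (p (u (t + 1))) := by
    refine Finset.sum_le_sum fun t _ => ?_
    rw [hstep t]
    exact I2 (u t)
  have sumI3 : (∑ t ∈ Finset.range T,
      csum n ((u t - (m (u t) : ZMod r)) + (p (u t - (m (u t) : ZMod r)) : ZMod r))
        (m (u t) + p (u t) - p (u t - (m (u t) : ZMod r)))) ≤
      ∑ t ∈ Finset.range T,
        csum n (u (t + 1) + (p (u (t + 1)) : ZMod r)) (p (u (t + 1) + (p (u (t + 1)) : ZMod r))) := by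
    refine Finset.sum_le_sum fun t _ => ?_
    rw [hstep t]
    exact I3 (u t)
  -- the failing inequality at each cycle vertex, summed
  have hfail : ∀ t, csum n (u (t + 1)) (p (u (t + 1))) +
      csum n (u (t + 1) + (p (u (t + 1)) : ZMod r)) (p (u (t + 1) + (p (u (t + 1)) : ZMod r))) + 1 ≤
      2 * msum n (u (t + 1)) (m (u (t + 1))) := by
    intro t
    have hp1 : 1 ≤ p (u (t + 1)) := by
      rw [hstep t]
      have hn1 := N1 (u t)
      have hh1 := h1 (u t)
      omega
    have := hcon' (u (t + 1)) hp1
    omega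
  have hsumfail : (∑ t ∈ Finset.range T, csum n (u (t + 1)) (p (u (t + 1)))) +
      (∑ t ∈ Finset.range T,
        csum n (u (t + 1) + (p (u (t + 1)) : ZMod r)) (p (u (t + 1) + (p (u (t + 1)) : ZMod r)))) +
      T ≤ 2 * ∑ t ∈ Finset.range T, msum n (u (t + 1)) (m (u (t + 1))) := by
    have h := Finset.sum_le_sum (fun t (_ : t ∈ Finset.range T) => hfail t)
    rw [Finset.sum_add_distrib, Finset.sum_add_distrib, Finset.sum_const, Finset.card_range,
      smul_eq_mul, mul_one, ← Finset.mul_sum] at h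
    exact h
  have sumshiftM : ∑ t ∈ Finset.range T, msum n (u (t + 1)) (m (u (t + 1))) =
      ∑ t ∈ Finset.range T, msum n (u t) (m (u t)) :=
    hshift (fun y => msum n y (m y))
  omega


private lemma ncard_preimage_image {V : Type*} [Fintype V] {r : ℕ} [NeZero r]
    (φ : V → ZMod r) (g : ℕ → ZMod r) (l : ℕ)
    (hinj : ∀ t1 ∈ Finset.Ioc 0 l, ∀ t2 ∈ Finset.Ioc 0 l, g t1 = g t2 → t1 = t2) :
    (φ ⁻¹' (g '' Set.Icc 1 l)).ncard = ∑ t ∈ Finset.Ioc 0 l, (φ ⁻¹' {g t}).ncard := by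
  classical
  induction l with
  | zero =>
      simp [Set.Icc_eq_empty_of_lt]
  | succ l ih =>
      have hinj' : ∀ t1 ∈ Finset.Ioc 0 l, ∀ t2 ∈ Finset.Ioc 0 l, g t1 = g t2 → t1 = t2 := by
        intro t1 h1 t2 h2 he
        simp only [Finset.mem_Ioc] at h1 h2
        exact hinj t1 (by simp only [Finset.mem_Ioc]; omega) t2
          (by simp only [Finset.mem_Ioc]; omega) he
      have hicc : Set.Icc 1 (l + 1) = insert (l + 1) (Set.Icc 1 l) := by
        ext t
        simp only [Set.mem_Icc, Set.mem_insert_iff]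
        omega
      have himg : g '' Set.Icc 1 (l + 1) = insert (g (l + 1)) (g '' Set.Icc 1 l) := by
        rw [hicc, Set.image_insert_eq]
      have hpre : φ ⁻¹' (g '' Set.Icc 1 (l + 1)) =
          (φ ⁻¹' {g (l + 1)}) ∪ (φ ⁻¹' (g '' Set.Icc 1 l)) := by
        rw [himg]
        ext y
        simp [Set.mem_insert_iff]
      have hdisj : Disjoint (φ ⁻¹' {g (l + 1)} : Set V) (φ ⁻¹' (g '' Set.Icc 1 l)) := by
        rw [Set.disjoint_left]
        rintro y hy1 ⟨t, ht, hty⟩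
        simp only [Set.mem_preimage, Set.mem_singleton_iff] at hy1
        simp only [Set.mem_Icc] at ht
        have : t = l + 1 := hinj t (by simp only [Finset.mem_Ioc]; omega) (l + 1)
          (by simp only [Finset.mem_Ioc]; omega) (by rw [hty, hy1])
        omega
      rw [hpre, Set.ncard_union_eq hdisj (Set.toFinite _) (Set.toFinite _), ih hinj',
        Finset.sum_Ioc_succ_top (Nat.zero_le _)]
      omega


private lemma main_helper {V : Type*} [Fintype V] {r : ℕ} [NeZero r]
    (A : V → V → Prop) (B : ZMod r → ZMod r → Prop) (φ : V → ZMod r)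
    (hA : IsLocalTournament A) (hB : IsLocalTournament B)
    (hlab : IsRoundLabelling B)
    (hsurj : Function.Surjective φ)
    (hcross : ∀ x y, φ x ≠ φ y → (A x y ↔ B (φ x) (φ y)))
    (hpart : ∀ x y, φ x = φ y → x ≠ y → Adjacent A x y) :
    ∃ x : V, Sullivan2 A x := by
  classical
  obtain ⟨⟨hirrB, hasymB⟩, houtB, hinB⟩ := hB
  obtain ⟨⟨hirrA, hasymA⟩, _, _⟩ := hA
  have hr1 : 1 ≤ r := Nat.pos_of_ne_zero (NeZero.ne r)
  -- degree bounds
  have hplt : ∀ i, dplus B i < r := by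
    intro i
    by_contra hcon
    push_neg at hcon
    have : i ∈ Nplus B i := by
      rw [(hlab i).1]
      refine ⟨r, ⟨hr1, hcon⟩, ?_⟩
      simp [ZMod.natCast_self]
    exact hirrB i this
  have hmlt : ∀ i, dminus B i < r := by
    intro i
    by_contra hcon
    push_neg at hcon
    have : i ∈ Nminus B i := by
      rw [(hlab i).2]
      refine ⟨r, ⟨hr1, hcon⟩, ?_⟩
      simp [ZMod.natCast_self]
    exact hirrB i this
  -- numeric characterizations of arcs
  have hCp : ∀ a c, B a c ↔ 1 ≤ (c - a).val ∧ (c - a).val ≤ dplus B a := by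
    intro a c
    constructor
    · intro h
      have hmem : c ∈ Nplus B a := h
      rw [(hlab a).1] at hmem
      obtain ⟨t, ht, rfl⟩ := hmem
      simp only [Set.mem_Icc] at ht
      have he : a + (t : ZMod r) - a = (t : ZMod r) := by ring
      rw [he, ZMod.val_natCast_of_lt (lt_of_le_of_lt ht.2 (hplt a))]
      exact ht
    · rintro ⟨h1, h2⟩
      have hmem : c ∈ (fun t : ℕ => a + (t : ZMod r)) '' Set.Icc 1 (dplus B a) := by
        refine ⟨(c - a).val, ⟨h1, h2⟩, ?_⟩
        simp only
        rw [ZMod.natCast_zmod_val]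
        ring
      rw [← (hlab a).1] at hmem
      exact hmem
  have hCm : ∀ a c, B a c ↔ 1 ≤ (c - a).val ∧ (c - a).val ≤ dminus B c := by
    intro a c
    constructor
    · intro h
      have hmem : a ∈ Nminus B c := h
      rw [(hlab c).2] at hmem
      obtain ⟨t, ht, hte⟩ := hmem
      simp only [Set.mem_Icc] at ht
      have he : c - a = (t : ZMod r) := by rw [← hte]; ring
      rw [he, ZMod.val_natCast_of_lt (lt_of_le_of_lt ht.2 (hmlt c))]
      exact ht
    · rintro ⟨h1, h2⟩
      have hmem : a ∈ (fun t : ℕ => c - (t : ZMod r)) '' Set.Icc 1 (dminus B c) := by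
        refine ⟨(c - a).val, ⟨h1, h2⟩, ?_⟩
        simp only
        rw [ZMod.natCast_zmod_val]
        ring
      rw [← (hlab c).2] at hmem
      exact hmem
  -- bridges
  have inj_add : ∀ (i : ZMod r) (l : ℕ), l < r →
      ∀ t1 ∈ Finset.Ioc 0 l, ∀ t2 ∈ Finset.Ioc 0 l,
        i + (t1 : ZMod r) = i + (t2 : ZMod r) → t1 = t2 := by
    intro i l hl t1 h1 t2 h2 he
    simp only [Finset.mem_Ioc] at h1 h2
    have he2 : (t1 : ZMod r) = (t2 : ZMod r) := by
      have := add_left_cancel he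
      exact this
    have := congrArg ZMod.val he2
    rwa [ZMod.val_natCast_of_lt (by omega), ZMod.val_natCast_of_lt (by omega)] at this
  have inj_sub : ∀ (i : ZMod r) (l : ℕ), l < r →
      ∀ t1 ∈ Finset.Ioc 0 l, ∀ t2 ∈ Finset.Ioc 0 l,
        i - (t1 : ZMod r) = i - (t2 : ZMod r) → t1 = t2 := by
    intro i l hl t1 h1 t2 h2 he
    simp only [Finset.mem_Ioc] at h1 h2
    have he2 : (t1 : ZMod r) = (t2 : ZMod r) := by
      rw [← sub_sub_cancel i (t1 : ZMod r), he, sub_sub_cancel]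
    have := congrArg ZMod.val he2
    rwa [ZMod.val_natCast_of_lt (by omega), ZMod.val_natCast_of_lt (by omega)] at this
  have bridgeP : ∀ i : ZMod r, (φ ⁻¹' (Nplus B i)).ncard =
      ∑ t ∈ Finset.Ioc 0 (dplus B i), (φ ⁻¹' {i + (t : ZMod r)}).ncard := by
    intro i
    rw [(hlab i).1]
    exact ncard_preimage_image φ (fun t : ℕ => i + (t : ZMod r)) (dplus B i)
      (inj_add i (dplus B i) (hplt i))
  have bridgeM : ∀ i : ZMod r, (φ ⁻¹' (Nminus B i)).ncard =
      ∑ t ∈ Finset.Ioc 0 (dminus B i), (φ ⁻¹' {i - (t : ZMod r)}).ncard := by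
    intro i
    rw [(hlab i).2]
    exact ncard_preimage_image φ (fun t : ℕ => i - (t : ZMod r)) (dminus B i)
      (inj_sub i (dminus B i) (hmlt i))
  -- the common final step
  have final : ∀ (i : ZMod r) (J : Set (ZMod r)),
      (∀ j ∈ J, ∃ v, B i v ∧ B v j) → (∀ j ∈ J, ¬ B i j) → i ∉ J →
      2 * (φ ⁻¹' (Nminus B i)).ncard ≤ (φ ⁻¹' (Nplus B i)).ncard + (φ ⁻¹' J).ncard →
      ∃ x : V, Sullivan2 A x := by
    intro i J hJpath hJout hJi hkey
    obtain ⟨x0, hx0⟩ := hsurj i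
    have hSne : (φ ⁻¹' {i} : Set V).Nonempty := ⟨x0, hx0⟩
    have htour : ∀ x ∈ (φ ⁻¹' {i} : Set V), ∀ y ∈ (φ ⁻¹' {i} : Set V), x ≠ y →
        A x y ∨ A y x := by
      intro x hx y hy hxy
      exact hpart x y (hx.trans hy.symm) hxy
    obtain ⟨x, hxS, hx2⟩ := part_sullivan A hirrA hasymA (φ ⁻¹' {i}) hSne htour
    have hxi : φ x = i := hxS
    refine ⟨x, ?_⟩
    unfold Sullivan2 dminus dplus dsecond
    -- decompositions
    have hminus : Nminus A x = {y | y ∈ (φ ⁻¹' {i} : Set V) ∧ A y x} ∪ (φ ⁻¹' (Nminus B i)) := by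
      ext y
      simp only [Nminus, Set.mem_setOf_eq, Set.mem_union, Set.mem_preimage,
        Set.mem_singleton_iff]
      constructor
      · intro hyx
        by_cases hyi : φ y = i
        · exact Or.inl ⟨hyi, hyx⟩
        · have hne : φ y ≠ φ x := by rw [hxi]; exact hyi
          have hb := (hcross y x hne).mp hyx
          rw [hxi] at hb
          exact Or.inr hb
      · rintro (⟨_, hyx⟩ | hmem)
        · exact hyx
        · have hne : φ y ≠ i := by
            intro he
            rw [he] at hmem
            exact hirrB i hmem
          have hne' : φ y ≠ φ x := by rw [hxi]; exact hne
          rw [hcross y x hne', hxi]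
          exact hmem
    have hplus : Nplus A x = {y | y ∈ (φ ⁻¹' {i} : Set V) ∧ A x y} ∪ (φ ⁻¹' (Nplus B i)) := by
      ext y
      simp only [Nplus, Set.mem_setOf_eq, Set.mem_union, Set.mem_preimage,
        Set.mem_singleton_iff]
      constructor
      · intro hxy
        by_cases hyi : φ y = i
        · exact Or.inl ⟨hyi, hxy⟩
        · have hne : φ x ≠ φ y := by rw [hxi]; exact fun h => hyi h.symm
          have := (hcross x y hne).mp hxy
          rw [hxi] at this
          exact Or.inr this
      · rintro (⟨_, hxy⟩ | hmem)
        · exact hxy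
        · have hne : φ y ≠ i := by
            intro he
            rw [he] at hmem
            exact hirrB i hmem
          have hne' : φ x ≠ φ y := by rw [hxi]; exact fun h => hne h.symm
          rw [hcross x y hne', hxi]
          exact hmem
    have hsecsub : {y | y ∈ (φ ⁻¹' {i} : Set V) ∧ ¬ A x y ∧
        ∃ u, u ∈ (φ ⁻¹' {i} : Set V) ∧ A x u ∧ A u y} ∪ (φ ⁻¹' J) ⊆ Nsecond A x := by
      rintro y (⟨hyS, hnxy, u, huS, hxu, huy⟩ | hyJ)
      · refine ⟨?_, hnxy⟩
        exact Set.mem_biUnion hxu huy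
      · have hyJ' : φ y ∈ J := hyJ
        obtain ⟨v, hiv, hvj⟩ := hJpath (φ y) hyJ'
        have hiv_ne : i ≠ v := by
          intro he
          rw [← he] at hiv
          exact hirrB i hiv
        have hvy_ne : v ≠ φ y := by
          intro he
          rw [he] at hvj
          exact hirrB _ hvj
        obtain ⟨u, hu⟩ := hsurj v
        have hxu : A x u := by
          have hne : φ x ≠ φ u := by rw [hxi, hu]; exact hiv_ne
          rw [hcross x u hne, hxi, hu]
          exact hiv
        have huy : A u y := by
          have hne : φ u ≠ φ y := by rw [hu]; exact hvy_ne
          rw [hcross u y hne, hu]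
          exact hvj
        have hnxy : ¬ A x y := by
          intro hxy
          have hyne : φ y ≠ i := by
            intro he
            rw [he] at hyJ'
            exact hJi hyJ'
          have hne : φ x ≠ φ y := by rw [hxi]; exact fun h => hyne h.symm
          have := (hcross x y hne).mp hxy
          rw [hxi] at this
          exact hJout (φ y) hyJ' this
        exact ⟨Set.mem_biUnion hxu huy, hnxy⟩
    -- cardinalities
    have hd1 : Disjoint {y | y ∈ (φ ⁻¹' {i} : Set V) ∧ A y x} (φ ⁻¹' (Nminus B i)) := by
      rw [Set.disjoint_left]
      rintro y ⟨hyS, _⟩ hmem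
      have hyi' : φ y = i := hyS
      have hmem' : φ y ∈ Nminus B i := hmem
      rw [hyi'] at hmem'
      exact hirrB i hmem'
    have hd2 : Disjoint {y | y ∈ (φ ⁻¹' {i} : Set V) ∧ A x y} (φ ⁻¹' (Nplus B i)) := by
      rw [Set.disjoint_left]
      rintro y ⟨hyS, _⟩ hmem
      have hyi' : φ y = i := hyS
      have hmem' : φ y ∈ Nplus B i := hmem
      rw [hyi'] at hmem'
      exact hirrB i hmem'
    have hd3 : Disjoint {y | y ∈ (φ ⁻¹' {i} : Set V) ∧ ¬ A x y ∧
        ∃ u, u ∈ (φ ⁻¹' {i} : Set V) ∧ A x u ∧ A u y} (φ ⁻¹' J) := by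
      rw [Set.disjoint_left]
      rintro y ⟨hyS, _⟩ hmem
      have hyi' : φ y = i := hyS
      have hmem' : φ y ∈ J := hmem
      rw [hyi'] at hmem'
      exact hJi hmem'
    have e1 : (Nminus A x).ncard =
        {y | y ∈ (φ ⁻¹' {i} : Set V) ∧ A y x}.ncard + (φ ⁻¹' (Nminus B i)).ncard := by
      rw [hminus, Set.ncard_union_eq hd1 (Set.toFinite _) (Set.toFinite _)]
    have e2 : (Nplus A x).ncard =
        {y | y ∈ (φ ⁻¹' {i} : Set V) ∧ A x y}.ncard + (φ ⁻¹' (Nplus B i)).ncard := by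
      rw [hplus, Set.ncard_union_eq hd2 (Set.toFinite _) (Set.toFinite _)]
    have e3 : {y | y ∈ (φ ⁻¹' {i} : Set V) ∧ ¬ A x y ∧
        ∃ u, u ∈ (φ ⁻¹' {i} : Set V) ∧ A x u ∧ A u y}.ncard + (φ ⁻¹' J).ncard ≤
        (Nsecond A x).ncard := by
      rw [← Set.ncard_union_eq hd3 (Set.toFinite _) (Set.toFinite _)]
      exact Set.ncard_le_ncard hsecsub (Set.toFinite _)
    omega
  -- case analysis
  by_cases hm0 : ∃ i, dminus B i = 0
  · obtain ⟨i, hi0⟩ := hm0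
    apply final i ∅ (by simp) (by simp) (by simp)
    have : Nminus B i = ∅ := by
      rw [(hlab i).2, hi0]
      rw [Set.Icc_eq_empty (by omega)]
      simp
    rw [this]
    simp
  · push_neg at hm0
    have h1 : ∀ i, 1 ≤ dminus B i := by
      intro i
      have := hm0 i
      omega
    obtain ⟨i, hp1, hineq⟩ := circle_sullivan B (fun i => dplus B i) (fun i => dminus B i)
      (fun j => (φ ⁻¹' {j} : Set V).ncard) hplt hmlt hCp hCm hasymB
      (fun x y z h1' h2' hne => houtB x y z h1' h2' hne) h1
    set v : ZMod r := i + (dplus B i : ZMod r) with hvdef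
    have hiv : B i v := by
      rw [hCp]
      have he : v - i = ((dplus B i : ℕ) : ZMod r) := by rw [hvdef]; ring
      rw [he, ZMod.val_natCast_of_lt (hplt i)]
      exact ⟨hp1, le_refl _⟩
    -- no 2-cycle: p i + p v < r
    have hno2 : dplus B i + dplus B v < r := by
      have hnot : ¬ B v i := fun h => hasymB i v hiv h
      rw [hCp] at hnot
      push_neg at hnot
      have hne : v - i ≠ 0 := by
        have he : v - i = ((dplus B i : ℕ) : ZMod r) := by rw [hvdef]; ring
        rw [he]
        intro h0
        have := congrArg ZMod.val h0
        rw [ZMod.val_natCast_of_lt (hplt i)] at this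
        simp at this
        omega
      have hval : (i - v).val = r - dplus B i := by
        have he : i - v = -(v - i) := by ring
        have he2 : v - i = ((dplus B i : ℕ) : ZMod r) := by rw [hvdef]; ring
        rw [he, ZMod.neg_val, if_neg hne, he2, ZMod.val_natCast_of_lt (hplt i)]
      have h1' : 1 ≤ (i - v).val := by
        have := hplt i
        rw [hval]; omega
      have h2' := hnot h1'
      rw [hval] at h2'
      have := hplt i
      omega
    have hJout : ∀ j ∈ Nplus B v, ¬ B i j ∧ j ≠ i := by
      intro j hj
      have hj' : B v j := hj
      rw [hCp] at hj'
      have hjval : (j - i).val = dplus B i + (j - v).val := by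
        have he : j - i = ((dplus B i + (j - v).val : ℕ) : ZMod r) := by
          push_cast
          rw [ZMod.natCast_zmod_val, hvdef]
          ring
        rw [he, ZMod.val_natCast_of_lt (by omega)]
      constructor
      · intro hij
        rw [hCp] at hij
        omega
      · intro he
        rw [he] at hjval
        simp at hjval
        omega
    apply final i (Nplus B v) (fun j hj => ⟨v, hiv, hj⟩) (fun j hj => (hJout j hj).1)
      (fun hmem => (hJout i hmem).2 rfl)
    rw [bridgeP i, bridgeM i, bridgeP v]
    exact hineq

/-- Every round decomposable local tournament has a Sullivan-2 vertex. -/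
theorem round_decomposable_has_sullivan2 {V : Type*} [Fintype V]
    (A : V → V → Prop) (hA : IsLocalTournament A)
    (hrd : IsRoundDecomposable A) :
    ∃ x : V, Sullivan2 A x := by
  obtain ⟨r0, B0, φ0, hr2, hB0, hround, hsurj0, hcross0, hpart0, -⟩ := hrd
  obtain ⟨r, hrpos, e, hlab⟩ := hround
  haveI : NeZero r := ⟨hrpos.ne'⟩
  refine main_helper A (fun i j => B0 (e i) (e j)) (fun x => e.symm (φ0 x)) hA ?_ hlab ?_ ?_ ?_
  · obtain ⟨⟨hirr, hasym⟩, hout, hin⟩ := hB0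
    refine ⟨⟨fun i h => hirr _ h, fun i j h => hasym _ _ h⟩, ?_, ?_⟩
    · intro x y z h1 h2 hne
      exact hout (e x) (e y) (e z) h1 h2 (fun h => hne (e.injective h))
    · intro x y z h1 h2 hne
      exact hin (e x) (e y) (e z) h1 h2 (fun h => hne (e.injective h))
  · exact e.symm.surjective.comp hsurj0
  · intro x y hne
    have hne0 : φ0 x ≠ φ0 y := fun h => hne (by show e.symm (φ0 x) = e.symm (φ0 y); rw [h])
    have h := hcross0 x y hne0
    simpa [Equiv.apply_symm_apply] using h
  · intro x y heq hne
    apply hpart0 x y ?_ hne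
    have h := congrArg e heq
    simpa using h
end

section
/- Every strong round decomposable local tournament has at least two distinct Sullivan-1 vertices. -/
section Helpers

lemma castInj {r : ℕ} {t s : ℕ} (ht : t < r) (hs : s < r) (h : (t : ZMod r) = s) : t = s := by
  have : NeZero r := ⟨by omega⟩
  have h1 := ZMod.val_cast_of_lt ht
  have h2 := ZMod.val_cast_of_lt hs
  rw [← h1, ← h2, h]

lemma dvdEq {r q : ℕ} (h : (q : ZMod r) = 0) (h0 : 0 < q) (h1 : q < 2*r) (hr : 2 ≤ r) : q = r := by
  have : NeZero r := ⟨by omega⟩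
  have hd : r ∣ q := (ZMod.natCast_eq_zero_iff q r).mp h
  obtain ⟨k, hk⟩ := hd
  rcases k with _ | _ | k
  · omega
  · omega
  · exfalso
    have : r * (k + 1 + 1) = r * k + r + r := by ring
    omega

lemma oneNe {r : ℕ} (hr : 2 ≤ r) : ((1:ℕ) : ZMod r) ≠ 0 := by
  intro h
  have h' : ((1:ℕ) : ZMod r) = ((0:ℕ) : ZMod r) := by simpa using h
  have := castInj (t := 1) (s := 0) (by omega) (by omega) h'
  omega

lemma subToAdd {r : ℕ} {s : ℕ} (hs : s ≤ r) (j : ZMod r) :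
    j - (s : ZMod r) = j + ((r - s : ℕ) : ZMod r) := by
  have : ((r - s : ℕ) : ZMod r) = (r : ℕ) - (s : ℕ) := by
    push_cast [Nat.cast_sub hs]; ring
  rw [this, ZMod.natCast_self]
  ring

lemma memPlus {r : ℕ} {C : ZMod r → ZMod r → Prop} (hlab : IsRoundLabelling C) {j k : ZMod r} :
    C j k ↔ ∃ t : ℕ, 1 ≤ t ∧ t ≤ dplus C j ∧ k = j + (t : ZMod r) := by
  have h : Nplus C j = _ := (hlab j).1
  constructor
  · intro h'
    have hk : k ∈ Nplus C j := h'
    rw [h] at hk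
    rcases hk with ⟨t, ht, rfl⟩
    exact ⟨t, (Set.mem_Icc.mp ht).1, (Set.mem_Icc.mp ht).2, rfl⟩
  · rintro ⟨t, h1, h2, rfl⟩
    have : j + (t : ZMod r) ∈ Nplus C j := by
      rw [h]; exact ⟨t, Set.mem_Icc.mpr ⟨h1, h2⟩, rfl⟩
    exact this

lemma memMinus {r : ℕ} {C : ZMod r → ZMod r → Prop} (hlab : IsRoundLabelling C) {j k : ZMod r} :
    C k j ↔ ∃ t : ℕ, 1 ≤ t ∧ t ≤ dminus C j ∧ k = j - (t : ZMod r) := by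
  have h : Nminus C j = _ := (hlab j).2
  constructor
  · intro h'
    have hk : k ∈ Nminus C j := h'
    rw [h] at hk
    rcases hk with ⟨t, ht, rfl⟩
    exact ⟨t, (Set.mem_Icc.mp ht).1, (Set.mem_Icc.mp ht).2, rfl⟩
  · rintro ⟨t, h1, h2, rfl⟩
    have : j - (t : ZMod r) ∈ Nminus C j := by
      rw [h]; exact ⟨t, Set.mem_Icc.mpr ⟨h1, h2⟩, rfl⟩
    exact this

lemma degLt {r : ℕ} {C : ZMod r → ZMod r → Prop} (hr : 2 ≤ r) (hC : IsLocalTournament C) :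
    ∀ j : ZMod r, dplus C j ≤ r - 1 ∧ dminus C j ≤ r - 1 := by
  have : NeZero r := ⟨by omega⟩
  intro j
  constructor
  · have hsub : Nplus C j ⊆ {j}ᶜ := by
      intro k hk
      simp only [Set.mem_compl_iff, Set.mem_singleton_iff]
      intro he
      subst he
      exact hC.1.1 k hk
    have h2 := Set.ncard_le_ncard hsub (Set.toFinite _)
    have h3 := Set.ncard_add_ncard_compl ({j} : Set (ZMod r))
    rw [Nat.card_eq_fintype_card, ZMod.card, Set.ncard_singleton] at h3
    show (Nplus C j).ncard ≤ r - 1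
    omega
  · have hsub : Nminus C j ⊆ {j}ᶜ := by
      intro k hk
      simp only [Set.mem_compl_iff, Set.mem_singleton_iff]
      intro he
      subst he
      exact hC.1.1 k hk
    have h2 := Set.ncard_le_ncard hsub (Set.toFinite _)
    have h3 := Set.ncard_add_ncard_compl ({j} : Set (ZMod r))
    rw [Nat.card_eq_fintype_card, ZMod.card, Set.ncard_singleton] at h3
    show (Nminus C j).ncard ≤ r - 1
    omega

lemma degLe {r : ℕ} {C : ZMod r → ZMod r → Prop} (hr : 2 ≤ r) (hC : IsLocalTournament C)
    (hlab : IsRoundLabelling C) (ha1 : ∀ j, 1 ≤ dplus C j) (hb1 : ∀ j, 1 ≤ dminus C j) :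
    ∀ j : ZMod r, dplus C j ≤ r - 2 ∧ dminus C j ≤ r - 2 := by
  intro j
  have hle := degLt hr hC (j := j)
  constructor
  · by_contra hcon
    have haj : dplus C j = r - 1 := by omega
    obtain ⟨x, hx⟩ : (Nminus C j).Nonempty := by
      rcases Set.eq_empty_or_nonempty (Nminus C j) with he | hne
      · exfalso; have := hb1 j; rw [dminus, he, Set.ncard_empty] at this; omega
      · exact hne
    have hkx : C x j := hx
    rw [memMinus hlab] at hkx
    obtain ⟨s, hs1, hs2, rfl⟩ := hkx
    have hsr : s ≤ r - 1 := le_trans hs2 hle.2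
    have hCjk : C j (j - (s : ZMod r)) := by
      rw [memPlus hlab]
      refine ⟨r - s, by omega, by omega, ?_⟩
      rw [subToAdd (by omega)]
    have hCkj : C (j - (s : ZMod r)) j := by
      rw [memMinus hlab]; exact ⟨s, hs1, hs2, rfl⟩
    exact hC.1.2 _ _ hCjk hCkj
  · by_contra hcon
    have hbj : dminus C j = r - 1 := by omega
    obtain ⟨x, hx⟩ : (Nplus C j).Nonempty := by
      rcases Set.eq_empty_or_nonempty (Nplus C j) with he | hne
      · exfalso; have := ha1 j; rw [dplus, he, Set.ncard_empty] at this; omega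
      · exact hne
    have hkx : C j x := hx
    rw [memPlus hlab] at hkx
    obtain ⟨t, ht1, ht2, rfl⟩ := hkx
    have htr : t ≤ r - 1 := le_trans ht2 hle.1
    have hCkj : C (j + (t : ZMod r)) j := by
      rw [memMinus hlab]
      refine ⟨r - t, by omega, by omega, ?_⟩
      rw [subToAdd (by omega)]
      congr 1
      have : r - (r - t) = t := by omega
      rw [this]
    have hCjk : C j (j + (t : ZMod r)) := by
      rw [memPlus hlab]; exact ⟨t, ht1, ht2, rfl⟩
    exact hC.1.2 _ _ hCjk hCkj

lemma f2 {r : ℕ} {C : ZMod r → ZMod r → Prop} (hr : 2 ≤ r) (hC : IsLocalTournament C)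
    (hlab : IsRoundLabelling C) (ha1 : ∀ j, 1 ≤ dplus C j) (hb1 : ∀ j, 1 ≤ dminus C j)
    (j : ZMod r) : dplus C j + dplus C (j + (dplus C j : ZMod r)) ≤ r - 1 := by
  set z := j + (dplus C j : ZMod r) with hz
  by_contra hcon
  push_neg at hcon
  have haj := (degLe hr hC hlab ha1 hb1 j).1
  have haz := (degLe hr hC hlab ha1 hb1 z).1
  have h1 : C j z := by
    rw [memPlus hlab]; exact ⟨dplus C j, ha1 j, le_refl _, rfl⟩
  have h2 : C z j := by
    rw [memPlus hlab]
    refine ⟨r - dplus C j, by omega, by omega, ?_⟩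
    rw [hz, add_assoc, ← Nat.cast_add]
    have : dplus C j + (r - dplus C j) = r := by omega
    rw [this, ZMod.natCast_self, add_zero]
  exact hC.1.2 _ _ h1 h2

lemma c2 {r : ℕ} {C : ZMod r → ZMod r → Prop} (hr : 2 ≤ r) (hC : IsLocalTournament C)
    (hlab : IsRoundLabelling C) (ha1 : ∀ j, 1 ≤ dplus C j) (hb1 : ∀ j, 1 ≤ dminus C j)
    (j : ZMod r) {k : ZMod r} (hk : C (j + (dplus C j : ZMod r)) k) : k ≠ j ∧ ¬ C j k := by
  have hf2 := f2 hr hC hlab ha1 hb1 j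
  have haj := (degLe hr hC hlab ha1 hb1 j).1
  rw [memPlus hlab] at hk
  obtain ⟨t, ht1, ht2, rfl⟩ := hk
  have hksum : j + (dplus C j : ZMod r) + (t : ZMod r) = j + ((dplus C j + t : ℕ) : ZMod r) := by
    rw [add_assoc, ← Nat.cast_add]
  constructor
  · rw [hksum]
    intro he
    have h0 : ((dplus C j + t : ℕ) : ZMod r) = ((0:ℕ) : ZMod r) := by
      have h1 := add_left_cancel (a := j) (b := ((dplus C j + t : ℕ) : ZMod r)) (c := ((0:ℕ):ZMod r))
      apply h1
      rw [he]; simp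
    have := castInj (t := dplus C j + t) (s := 0) (by omega) (by omega) h0
    omega
  · intro hc
    rw [memPlus hlab] at hc
    obtain ⟨s, hs1, hs2, hse⟩ := hc
    rw [hksum] at hse
    have h0 : ((dplus C j + t : ℕ) : ZMod r) = ((s:ℕ) : ZMod r) := add_left_cancel hse
    have := castInj (t := dplus C j + t) (s := s) (by omega) (by omega) h0
    omega

lemma c1 {r : ℕ} {C : ZMod r → ZMod r → Prop} (hr : 2 ≤ r) (hC : IsLocalTournament C)
    (hlab : IsRoundLabelling C) (ha1 : ∀ j, 1 ≤ dplus C j) (hb1 : ∀ j, 1 ≤ dminus C j)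
    (j : ZMod r) {k : ZMod r} (hk : C k (j + (dplus C j : ZMod r) + 1)) : C j k := by
  set v := j + (dplus C j : ZMod r) + 1 with hv
  have haj := (degLe hr hC hlab ha1 hb1 j).1
  have hbv := (degLe hr hC hlab ha1 hb1 v).2
  have hvj : v = j + ((dplus C j + 1 : ℕ) : ZMod r) := by
    rw [hv, add_assoc, ← Nat.cast_add_one]
  have hkey : dminus C v ≤ dplus C j := by
    by_contra hcon
    push_neg at hcon
    have hjv : C j v := by
      rw [memMinus hlab]
      refine ⟨dplus C j + 1, by omega, by omega, ?_⟩
      rw [hvj, subToAdd (by omega)]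
      rw [add_assoc, ← Nat.cast_add]
      have : dplus C j + 1 + (r - (dplus C j + 1)) = r := by omega
      rw [this, ZMod.natCast_self, add_zero]
    rw [memPlus hlab] at hjv
    obtain ⟨t, ht1, ht2, hte⟩ := hjv
    rw [hvj] at hte
    have h0 : ((dplus C j + 1 : ℕ) : ZMod r) = ((t:ℕ) : ZMod r) := add_left_cancel hte
    have := castInj (t := dplus C j + 1) (s := t) (by omega) (by omega) h0
    omega
  rw [memMinus hlab] at hk
  obtain ⟨s, hs1, hs2, rfl⟩ := hk
  have hsa : s ≤ dplus C j := le_trans hs2 hkey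
  rw [memPlus hlab]
  refine ⟨dplus C j + 1 - s, by omega, by omega, ?_⟩
  rw [hvj, subToAdd (by omega), add_assoc, ← Nat.cast_add]
  have hnn : (dplus C j + 1 + (r - s) : ℕ) = (dplus C j + 1 - s) + r := by omega
  rw [hnn, Nat.cast_add, ZMod.natCast_self, add_zero]

lemma monoStep {r : ℕ} {C : ZMod r → ZMod r → Prop} (hr : 2 ≤ r) (hC : IsLocalTournament C)
    (hlab : IsRoundLabelling C) (ha1 : ∀ j, 1 ≤ dplus C j) (hb1 : ∀ j, 1 ≤ dminus C j)
    (j : ZMod r) : dplus C j ≤ dplus C (j + 1) + 1 := by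
  by_cases h2 : dplus C j ≤ 1
  · omega
  push_neg at h2
  have haj := (degLe hr hC hlab ha1 hb1 j).1
  have hay := (degLe hr hC hlab ha1 hb1 (j+1)).1
  have hy : C j (j + 1) := by
    rw [memPlus hlab]
    exact ⟨1, le_refl _, by omega, by norm_num⟩
  have hz : C j (j + (dplus C j : ZMod r)) := by
    rw [memPlus hlab]; exact ⟨dplus C j, by omega, le_refl _, rfl⟩
  have hyz : (j + 1) ≠ (j + (dplus C j : ZMod r)) := by
    intro he
    have h0 : ((1:ℕ) : ZMod r) = ((dplus C j : ℕ) : ZMod r) := by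
      apply add_left_cancel (a := j); simpa using he
    have := castInj (t := 1) (s := dplus C j) (by omega) (by omega) h0
    omega
  rcases hC.2.1 j (j+1) (j + (dplus C j : ZMod r)) hy hz hyz with hcase | hcase
  · rw [memPlus hlab] at hcase
    obtain ⟨t, ht1, ht2, hte⟩ := hcase
    have h0 : ((dplus C j : ℕ) : ZMod r) = ((1 + t : ℕ) : ZMod r) := by
      apply add_left_cancel (a := j)
      rw [hte, Nat.cast_add]; push_cast; ring
    have := castInj (t := dplus C j) (s := 1 + t) (by omega) (by omega) h0
    omega
  · rw [memPlus hlab] at hcase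
    obtain ⟨t, ht1, ht2, hte⟩ := hcase
    have hf2 := f2 hr hC hlab ha1 hb1 j
    have h0 : ((1:ℕ) : ZMod r) = ((dplus C j + t : ℕ) : ZMod r) := by
      apply add_left_cancel (a := j)
      rw [Nat.cast_add]
      rw [add_assoc] at hte
      rw [← hte]; norm_num
    have := castInj (t := 1) (s := dplus C j + t) (by omega) (by omega) h0
    omega

lemma monoChain {r : ℕ} {C : ZMod r → ZMod r → Prop} (hr : 2 ≤ r) (hC : IsLocalTournament C)
    (hlab : IsRoundLabelling C) (ha1 : ∀ j, 1 ≤ dplus C j) (hb1 : ∀ j, 1 ≤ dminus C j)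
    (j : ZMod r) (d : ℕ) : dplus C j ≤ d + dplus C (j + (d : ZMod r)) := by
  induction d generalizing j with
  | zero => simp
  | succ d ih =>
    have h1 := monoStep hr hC hlab ha1 hb1 j
    have h2 := ih (j + 1)
    have he : (j + 1) + (d : ZMod r) = j + ((d + 1 : ℕ) : ZMod r) := by
      push_cast; ring
    rw [he] at h2
    omega

lemma exists_king_s9 {V : Type*} [Fintype V] {A : V → V → Prop} (hor : IsOriented A)
    (T : Set V) (hne : T.Nonempty)
    (hadj : ∀ u ∈ T, ∀ v ∈ T, u ≠ v → A u v ∨ A v u) :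
    ∃ x ∈ T, ∀ v ∈ T, A v x → ∃ u ∈ T, A x u ∧ A u v := by
  obtain ⟨x, hxT, hmax⟩ := Set.exists_max_image T (fun x => {u | u ∈ T ∧ A x u}.ncard)
    (Set.toFinite T) hne
  refine ⟨x, hxT, ?_⟩
  intro v hvT hvx
  by_contra hcon
  push_neg at hcon
  have hsub : insert x {u | u ∈ T ∧ A x u} ⊆ {u | u ∈ T ∧ A v u} := by
    intro u hu
    rcases Set.mem_insert_iff.mp hu with rfl | hu'
    · exact ⟨hxT, hvx⟩
    · obtain ⟨huT, hxu⟩ := hu'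
      refine ⟨huT, ?_⟩
      have huv : u ≠ v := by
        rintro rfl
        exact hor.2 _ _ hxu hvx
      rcases hadj u huT v hvT huv with h | h
      · exact absurd h (hcon u huT hxu)
      · exact h
  have hxnot : x ∉ {u | u ∈ T ∧ A x u} := by
    intro hx
    exact hor.1 x hx.2
  have h1 : {u | u ∈ T ∧ A x u}.ncard + 1 ≤ {u | u ∈ T ∧ A v u}.ncard := by
    have := Set.ncard_le_ncard hsub (Set.toFinite _)
    rwa [Set.ncard_insert_of_notMem hxnot (Set.toFinite _)] at this
  have h2 := hmax v hvT
  omega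

lemma crossing {V : Type*} {A : V → V → Prop} {P : V → Prop} {x y : V}
    (h : Relation.ReflTransGen A x y) (hx : P x) (hy : ¬ P y) :
    ∃ u w, A u w ∧ P u ∧ ¬ P w := by
  induction h with
  | refl => exact absurd hx hy
  | @tail b c hxb hbc ih =>
    by_cases hb : P b
    · exact ⟨b, c, hbc, hb, hy⟩
    · exact ih hb

end Helpers


/-- Every strong round decomposable local tournament has at least two distinct
Sullivan-1 vertices. -/
theorem strong_round_decomposable_two_sullivan1 {V : Type*} [Fintype V]
    (A : V → V → Prop) (hA : IsLocalTournament A)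
    (hrd : IsRoundDecomposable A) (hstrong : IsStrong A) :
    ∃ x y : V, x ≠ y ∧ Sullivan1 A x ∧ Sullivan1 A y := by
  classical
  obtain ⟨r, B, φ, hr2, hBlt, hBround, hφsurj, harc, hpart, hinner⟩ := hrd
  obtain ⟨r0, hr0pos, e, hlab⟩ := hBround
  have hnzr : NeZero r := ⟨by omega⟩
  have hnzr0 : NeZero r0 := ⟨by omega⟩
  have hrr : r0 = r := by
    have h := Fintype.card_congr e
    rwa [ZMod.card, ZMod.card] at h
  subst hrr
  set C : ZMod r0 → ZMod r0 → Prop := fun i j => B (e i) (e j) with hCdef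
  set ψ : V → ZMod r0 := fun x => e.symm (φ x) with hψdef
  have hψfib : ∀ x (j : ZMod r0), ψ x = j ↔ φ x = e j := by
    intro x j
    constructor
    · intro h; rw [← h]; simp [hψdef]
    · intro h; rw [hψdef]; simp [h]
  have hψsurj : Function.Surjective ψ := (e.symm.surjective).comp hφsurj
  have hψarc : ∀ x y, ψ x ≠ ψ y → (A x y ↔ C (ψ x) (ψ y)) := by
    intro x y hne
    have h1 : φ x ≠ φ y := by
      intro h; exact hne (by rw [hψdef]; simp [h])
    rw [harc x y h1, hCdef]
    simp [hψdef]
  have hCor : IsOriented C := by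
    constructor
    · intro i h; exact hBlt.1.1 _ h
    · intro i j h h'; exact hBlt.1.2 _ _ h h'
  have hClt : IsLocalTournament C := by
    refine ⟨hCor, ?_, ?_⟩
    · intro x y z h1 h2 hne
      have := hBlt.2.1 _ _ _ h1 h2 (fun h => hne (e.injective h))
      exact this
    · intro x y z h1 h2 hne
      have := hBlt.2.2 _ _ _ h1 h2 (fun h => hne (e.injective h))
      exact this
  have hAor : IsOriented A := hA.1
  -- strongness: degrees positive
  have hexne : ∀ j : ZMod r0, ∃ v : V, ψ v ≠ j := by
    intro j
    obtain ⟨v, hv⟩ := hψsurj (j + 1)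
    refine ⟨v, ?_⟩
    rw [hv]
    intro h
    have h0 : ((1:ℕ) : ZMod r0) = 0 := by
      have := add_left_cancel (a := j) (b := (1 : ZMod r0)) (c := (0 : ZMod r0))
        (by rw [add_zero]; exact_mod_cast h)
      exact_mod_cast this
    exact oneNe hr2 h0
  have ha1 : ∀ j, 1 ≤ dplus C j := by
    intro j
    obtain ⟨x, hx⟩ := hψsurj j
    obtain ⟨y, hy⟩ := hexne j
    obtain ⟨u, w, huw, hu, hw⟩ := crossing (P := fun v => ψ v = j) (hstrong x y) hx hy
    have : C j (ψ w) := by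
      have := (hψarc u w (by rw [hu]; exact fun h => hw h.symm)).mp huw
      rwa [hu] at this
    have hne : (Nplus C j).Nonempty := ⟨ψ w, this⟩
    have := Set.ncard_pos (Set.toFinite (Nplus C j))
    exact this.mpr hne
  have hb1 : ∀ j, 1 ≤ dminus C j := by
    intro j
    obtain ⟨x, hx⟩ := hψsurj j
    obtain ⟨y, hy⟩ := hexne j
    obtain ⟨u, w, huw, hu, hw⟩ := crossing (P := fun v => ψ v ≠ j) (hstrong y x) hy
      (by simpa using hx)
    have hwj : ψ w = j := by by_contra h; exact hw h
    have : C (ψ u) j := by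
      have := (hψarc u w (by rw [hwj]; exact hu)).mp huw
      rwa [hwj] at this
    have hne : (Nminus C j).Nonempty := ⟨ψ u, this⟩
    have := Set.ncard_pos (Set.toFinite (Nminus C j))
    exact this.mpr hne
  -- weights
  set Wt : ZMod r0 → ℕ := fun j => (ψ ⁻¹' (Nminus C j)).ncard with hWt
  set Ot : ZMod r0 → ℕ := fun j => (ψ ⁻¹' (Nplus C j)).ncard with hOt
  set Hf : ZMod r0 → ZMod r0 := fun j => j + (dplus C j : ZMod r0) with hHf
  -- `good` parts
  set good : ZMod r0 → Prop := fun j => Wt j ≤ Ot (Hf j) with hgood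
  have hWc1 : ∀ j : ZMod r0, Wt (Hf (Hf j) + 1) ≤ Ot (Hf j) := by
    intro j
    apply Set.ncard_le_ncard _ (Set.toFinite _)
    apply Set.preimage_mono
    intro k hk
    exact c1 hr2 hClt hlab ha1 hb1 (Hf j) hk
  have hHneJ : ∀ j : ZMod r0, Hf j ≠ j := by
    intro j he
    have hd := (degLe hr2 hClt hlab ha1 hb1 j).1
    have h0 : ((dplus C j : ℕ) : ZMod r0) = ((0:ℕ) : ZMod r0) := by
      apply add_left_cancel (a := j)
      rw [hHf] at he
      simpa using he
    have := castInj (t := dplus C j) (s := 0) (by omega) (by omega) h0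
    have := ha1 j
    omega
  have kingSullivan : ∀ (j : ZMod r0) (x : V), good j → ψ x = j →
      (∀ v, A v x → ψ v = j → ∃ u, A x u ∧ A u v) → Sullivan1 A x := by
    intro j x hgoodj hx hking
    set In : Set V := {v | A v x ∧ ψ v = j} with hIn
    have hmEq : Nminus A x = In ∪ ψ ⁻¹' (Nminus C j) := by
      ext v
      simp only [Nminus, Set.mem_setOf_eq, Set.mem_union, Set.mem_preimage, hIn]
      constructor
      · intro hv
        by_cases hvj : ψ v = j
        · exact Or.inl ⟨hv, hvj⟩
        · right
          have h := (hψarc v x (by rw [hx]; exact hvj)).mp hv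
          rw [hx] at h
          exact h
      · rintro (⟨h1, _⟩ | hv)
        · exact h1
        · have hv' : C (ψ v) j := hv
          have hne : ψ v ≠ j := by
            intro he; rw [he] at hv'; exact hCor.1 j hv'
          exact (hψarc v x (by rw [hx]; exact hne)).mpr (by rw [hx]; exact hv')
    have hdisj1 : Disjoint In (ψ ⁻¹' (Nminus C j)) := by
      rw [Set.disjoint_left]
      rintro v ⟨_, hvj⟩ hv
      have hv' : C (ψ v) j := hv
      rw [hvj] at hv'
      exact hCor.1 j hv'
    have hdm : dminus A x = In.ncard + Wt j := by
      rw [dminus, hmEq, Set.ncard_union_eq hdisj1 (Set.toFinite _) (Set.toFinite _)]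
    have hsub2 : In ∪ ψ ⁻¹' (Nplus C (Hf j)) ⊆ Nsecond A x := by
      intro v hv
      rcases hv with ⟨hvx, hvj⟩ | hv
      · obtain ⟨u, hxu, huv⟩ := hking v hvx hvj
        refine ⟨Set.mem_biUnion hxu huv, ?_⟩
        intro hxv
        exact hAor.2 _ _ hxv hvx
      · have hv' : C (Hf j) (ψ v) := hv
        have hc2 := c2 hr2 hClt hlab ha1 hb1 j hv'
        obtain ⟨u, hu⟩ := hψsurj (Hf j)
        have hxu : A x u := by
          have hne : ψ x ≠ ψ u := by
            rw [hx, hu]; exact fun h => hHneJ j h.symm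
          refine (hψarc x u hne).mpr ?_
          rw [hx, hu, memPlus hlab]
          exact ⟨dplus C j, ha1 j, le_refl _, rfl⟩
        have huv : A u v := by
          have hne : ψ u ≠ ψ v := by
            rw [hu]; intro he; rw [← he] at hv'; exact hCor.1 _ hv'
          refine (hψarc u v hne).mpr ?_
          rw [hu]; exact hv'
        refine ⟨Set.mem_biUnion hxu huv, ?_⟩
        intro hxv
        have hne : ψ x ≠ ψ v := by rw [hx]; exact fun h => hc2.1 h.symm
        have h := (hψarc x v hne).mp hxv
        rw [hx] at h
        exact hc2.2 h
    have hdisj2 : Disjoint In (ψ ⁻¹' (Nplus C (Hf j))) := by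
      rw [Set.disjoint_left]
      rintro v ⟨_, hvj⟩ hv
      have hv' : C (Hf j) (ψ v) := hv
      exact (c2 hr2 hClt hlab ha1 hb1 j hv').1 hvj
    have hds : In.ncard + Ot (Hf j) ≤ dsecond A x := by
      rw [dsecond]
      have h := Set.ncard_le_ncard hsub2 (Set.toFinite _)
      rwa [Set.ncard_union_eq hdisj2 (Set.toFinite _) (Set.toFinite _)] at h
    rw [Sullivan1, hdm]
    have hg : Wt j ≤ Ot (Hf j) := hgoodj
    omega
  -- fibres and kings
  have hfibadj : ∀ (j : ZMod r0) (u v : V), ψ u = j → ψ v = j → u ≠ v → A u v ∨ A v u := by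
    intro j u v hu hv hne
    have h1 : φ u = φ v := by
      rw [(hψfib u j).mp hu, (hψfib v j).mp hv]
    exact hpart u v h1 hne
  have king1 : ∀ j : ZMod r0, ∃ x, ψ x = j ∧
      (∀ v, A v x → ψ v = j → ∃ u, A x u ∧ A u v) := by
    intro j
    obtain ⟨x0, hx0⟩ := hψsurj j
    obtain ⟨x, hxT, hk⟩ := exists_king_s9 hAor (ψ ⁻¹' {j}) ⟨x0, hx0⟩
      (fun u hu v hv hne => hfibadj j u v hu hv hne)
    refine ⟨x, hxT, ?_⟩
    intro v hvx hvj
    obtain ⟨u, _, h1, h2⟩ := hk v hvj hvx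
    exact ⟨u, h1, h2⟩
  have king2 : ∀ j : ZMod r0, 2 ≤ (ψ ⁻¹' {j}).ncard → ∃ x y, x ≠ y ∧
      (ψ x = j ∧ ∀ v, A v x → ψ v = j → ∃ u, A x u ∧ A u v) ∧
      (ψ y = j ∧ ∀ v, A v y → ψ v = j → ∃ u, A y u ∧ A u v) := by
    intro j hfat
    obtain ⟨x0, hx0⟩ := hψsurj j
    obtain ⟨x1, hx1T, hk1⟩ := exists_king_s9 hAor (ψ ⁻¹' {j}) ⟨x0, hx0⟩
      (fun u hu v hv hne => hfibadj j u v hu hv hne)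
    have hx1 : ψ x1 = j := hx1T
    -- find another vertex in the fibre
    obtain ⟨y, hyT, hyx1⟩ := Set.exists_ne_of_one_lt_ncard (s := ψ ⁻¹' {j}) (by omega) x1
    have hyj : ψ y = j := hyT
    have hpath := hinner (e j) y x1 ((hψfib y j).mp hyj) ((hψfib x1 j).mp hx1)
    rcases hpath.cases_tail with he | ⟨c, _, hc⟩
    · exact absurd he.symm hyx1
    obtain ⟨hcx1, hcj, _⟩ := hc
    have hcj' : ψ c = j := (hψfib c j).mpr hcj
    set T' : Set V := {v | ψ v = j ∧ A v x1} with hT'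
    obtain ⟨x2, hx2T, hk2⟩ := exists_king_s9 hAor T' ⟨c, hcj', hcx1⟩
      (fun u hu v hv hne => hfibadj j u v hu.1 hv.1 hne)
    have hx2j : ψ x2 = j := hx2T.1
    have hx2x1 : A x2 x1 := hx2T.2
    have hne : x1 ≠ x2 := by
      intro he; rw [he] at hx2x1; exact hAor.1 x2 hx2x1
    refine ⟨x1, x2, hne, ⟨hx1, ?_⟩, ⟨hx2j, ?_⟩⟩
    · intro v hvx hvj
      obtain ⟨u, _, h1, h2⟩ := hk1 v hvj hvx
      exact ⟨u, h1, h2⟩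
    · intro v hvx2 hvj
      by_cases hv1 : v = x1
      · rw [hv1] at hvx2
        exact absurd hvx2 (hAor.2 _ _ hx2x1)
      rcases hfibadj j v x1 hvj hx1 hv1 with h | h
      · obtain ⟨u, _, h1, h2⟩ := hk2 v ⟨hvj, h⟩ hvx2
        exact ⟨u, h1, h2⟩
      · exact ⟨x1, hx2x1, h⟩
  -- choose a part with minimum in-weight
  obtain ⟨i, _, hmin⟩ := Set.exists_min_image (Set.univ : Set (ZMod r0)) Wt
    (Set.toFinite _) ⟨0, Set.mem_univ 0⟩
  have hmin' : ∀ k, Wt i ≤ Wt k := fun k => hmin k (Set.mem_univ k)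
  have hgoodmin : ∀ j : ZMod r0, (∀ k, Wt j ≤ Wt k) → good j := by
    intro j hjmin
    show Wt j ≤ Ot (Hf j)
    exact le_trans (hjmin _) (hWc1 j)
  have hgoodi : good i := hgoodmin i hmin'
  by_cases huniq : ∀ j, j ≠ i → Wt i < Wt j
  case neg =>
    push_neg at huniq
    obtain ⟨j, hji, hWj⟩ := huniq
    have hjmin : ∀ k, Wt j ≤ Wt k := fun k => le_trans hWj (hmin' k)
    have hgoodj : good j := hgoodmin j hjmin
    obtain ⟨x, hx, hkx⟩ := king1 i
    obtain ⟨y, hy, hky⟩ := king1 j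
    refine ⟨x, y, ?_, kingSullivan i x hgoodi hx hkx, kingSullivan j y hgoodj hy hky⟩
    intro he
    rw [he, hy] at hx
    exact hji hx
  case pos =>
  by_cases hfat : 2 ≤ (ψ ⁻¹' {i}).ncard
  case pos =>
    obtain ⟨x, y, hne, ⟨hx, hkx⟩, ⟨hy, hky⟩⟩ := king2 i hfat
    exact ⟨x, y, hne, kingSullivan i x hgoodi hx hkx, kingSullivan i y hgoodi hy hky⟩
  case neg =>
  by_cases hother : ∃ j, j ≠ i ∧ good j
  case pos =>
    obtain ⟨j, hji, hgoodj⟩ := hother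
    obtain ⟨x, hx, hkx⟩ := king1 i
    obtain ⟨y, hy, hky⟩ := king1 j
    refine ⟨x, y, ?_, kingSullivan i x hgoodi hx hkx, kingSullivan j y hgoodj hy hky⟩
    intro he
    rw [he, hy] at hx
    exact hji hx
  case neg =>
  exfalso
  push_neg at hother
  have hbad : ∀ j, j ≠ i → Ot (Hf j) < Wt j := by
    intro j hj
    have h := hother j hj
    rw [hgood] at h
    exact Nat.lt_of_not_le h
  have hn1 : (ψ ⁻¹' {i}).ncard = 1 := by
    obtain ⟨x0, hx0⟩ := hψsurj i
    have hpos := (Set.ncard_pos (Set.toFinite (ψ ⁻¹' {i}))).mpr ⟨x0, hx0⟩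
    omega
  set β := dminus C i with hβd
  have hβ1 : 1 ≤ β := hb1 i
  have hβr : β ≤ r0 - 2 := (degLe hr2 hClt hlab ha1 hb1 i).2
  set ci : ZMod r0 := i - ((β:ℕ) : ZMod r0) with hcid
  -- ============ Step A ============
  have hA1 : Nminus C (i+1) ⊆ Nminus C i ∪ {i} := by
    intro k hk
    have hk' : C k (i+1) := hk
    rw [memPlus hlab] at hk'
    obtain ⟨t, ht1, ht2, hte⟩ := hk'
    by_cases ht : t = 1
    · right
      rw [ht] at hte
      have hki : k = i := by
        have h1 : i + 1 = k + 1 := by rw [hte]; norm_num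
        exact (add_right_cancel h1).symm
      rw [hki]
      rfl
    · left
      show C k i
      rw [memPlus hlab]
      refine ⟨t - 1, by omega, by omega, ?_⟩
      have hcast : ((t - 1 : ℕ) : ZMod r0) = (t : ZMod r0) - 1 := by
        push_cast [Nat.cast_sub (show 1 ≤ t by omega)]
        ring
      rw [hcast]
      calc i = (i + 1) - 1 := by ring
        _ = (k + (t:ZMod r0)) - 1 := by rw [hte]
        _ = k + ((t:ZMod r0) - 1) := by ring
  have hA2 : Wt (i+1) ≤ Wt i + 1 := by
    have hsub : ψ ⁻¹' (Nminus C (i+1)) ⊆ ψ ⁻¹' (Nminus C i) ∪ ψ ⁻¹' {i} := by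
      intro v hv
      rcases hA1 hv with h | h
      · exact Or.inl h
      · exact Or.inr h
    calc Wt (i+1) ≤ (ψ ⁻¹' (Nminus C i) ∪ ψ ⁻¹' {i}).ncard :=
          Set.ncard_le_ncard hsub (Set.toFinite _)
      _ ≤ (ψ ⁻¹' (Nminus C i)).ncard + (ψ ⁻¹' {i}).ncard := Set.ncard_union_le _ _
      _ = Wt i + 1 := by rw [hn1]
  have hi1ne : (i+1) ≠ i := by
    intro he
    have h1 : i + 1 = i + 0 := by rw [add_zero]; exact he
    have h0 : ((1:ℕ) : ZMod r0) = 0 := by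
      have := add_left_cancel h1
      simpa using this
    exact oneNe hr2 h0
  have hA4 : Wt (i+1) = Wt i + 1 := le_antisymm hA2 (huniq (i+1) hi1ne)
  have hdisjNm : Disjoint (ψ ⁻¹' (Nminus C i)) (ψ ⁻¹' {i}) := by
    rw [Set.disjoint_left]
    rintro v hv hvi
    have hv' : C (ψ v) i := hv
    have hvi' : ψ v = i := hvi
    rw [hvi'] at hv'
    exact hCor.1 i hv'
  have hA5 : Nminus C (i+1) = Nminus C i ∪ {i} := by
    apply Function.Surjective.preimage_injective hψsurj
    apply Set.eq_of_subset_of_ncard_le (Set.preimage_mono hA1) _ (Set.toFinite _)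
    rw [Set.preimage_union, Set.ncard_union_eq hdisjNm (Set.toFinite _) (Set.toFinite _), hn1]
    show Wt i + 1 ≤ Wt (i + 1)
    omega
  have hciMem : C ci i := by
    rw [memMinus hlab]
    exact ⟨β, hβ1, le_refl _, rfl⟩
  have hciMem1 : C ci (i+1) := by
    have h : ci ∈ Nminus C i ∪ {i} := Or.inl hciMem
    rw [← hA5] at h
    exact h
  have hstarA : β + 1 ≤ dplus C ci := by
    have hca := (degLe hr2 hClt hlab ha1 hb1 ci).1
    rw [memPlus hlab] at hciMem1
    obtain ⟨t, ht1, ht2, hte⟩ := hciMem1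
    have hcast : ((β + 1 : ℕ) : ZMod r0) = ((t:ℕ) : ZMod r0) := by
      have h1 : ci + ((β+1:ℕ) : ZMod r0) = i + 1 := by
        rw [hcid]; push_cast; ring
      exact add_left_cancel (h1.trans hte)
    have := castInj (t := β+1) (s := t) (by omega) (by omega) hcast
    omega
  -- ============ Step B ============
  have hbadi1 := hbad (i+1) hi1ne
  have hB0 : Ot (Hf (i+1)) ≤ Wt i := by omega
  have hB1 : Wt (Hf (Hf (i+1)) + 1) ≤ Wt i := le_trans (hWc1 (i+1)) hB0
  have hzeta : Hf (Hf (i+1)) + 1 = i := by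
    by_contra hne
    exact absurd (huniq _ hne) (by omega)
  have hf2i1 := f2 hr2 hClt hlab ha1 hb1 (i+1)
  have hq : ((dplus C (i+1) + dplus C (Hf (i+1)) + 2 : ℕ) : ZMod r0) = 0 := by
    have h1 : Hf (Hf (i+1)) + 1
        = i + ((dplus C (i+1) + dplus C (Hf (i+1)) + 2 : ℕ) : ZMod r0) := by
      simp only [hHf]
      push_cast
      ring
    have h2 : i + ((dplus C (i+1) + dplus C (Hf (i+1)) + 2 : ℕ) : ZMod r0) = i + 0 := by
      rw [add_zero, ← h1]
      exact hzeta
    exact add_left_cancel h2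
  have hd1 := (degLe hr2 hClt hlab ha1 hb1 (i+1)).1
  have hd2 := (degLe hr2 hClt hlab ha1 hb1 (Hf (i+1))).1
  have hf2i1' : dplus C (i+1) + dplus C ((i+1) + ((dplus C (i+1) : ℕ) : ZMod r0)) ≤ r0 - 1 :=
    hf2i1
  have hf2B : dplus C (i+1) + dplus C (Hf (i+1)) ≤ r0 - 1 := by
    rw [hHf]
    exact hf2i1'
  have hqr : dplus C (i+1) + dplus C (Hf (i+1)) + 2 = r0 :=
    dvdEq hq (by omega) (by omega) hr2
  have hc1z : Nminus C i ⊆ Nplus C (Hf (i+1)) := by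
    intro k hk
    have hk' : C k (Hf (Hf (i+1)) + 1) := by
      rw [hzeta]
      exact hk
    have hk'' : C k ((Hf (i+1)) + ((dplus C (Hf (i+1)) : ℕ) : ZMod r0) + 1) := by
      have hexp : Hf (Hf (i+1)) = (Hf (i+1)) + ((dplus C (Hf (i+1)) : ℕ) : ZMod r0) := by
        conv_lhs => rw [hHf]
      rw [← hexp]
      exact hk'
    exact c1 hr2 hClt hlab ha1 hb1 (Hf (i+1)) hk''
  have hOtWt : Ot (Hf (i+1)) = Wt i := by
    have h1 : Wt i ≤ Ot (Hf (i+1)) :=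
      Set.ncard_le_ncard (Set.preimage_mono hc1z) (Set.toFinite _)
    omega
  have hB3 : Nplus C (Hf (i+1)) = Nminus C i := by
    symm
    apply Function.Surjective.preimage_injective hψsurj
    apply Set.eq_of_subset_of_ncard_le (Set.preimage_mono hc1z) _ (Set.toFinite _)
    show Ot (Hf (i+1)) ≤ Wt i
    omega
  have hB4 : dplus C (Hf (i+1)) = β := by
    rw [hβd, dplus, dminus, hB3]
  have hB5 : dplus C (i+1) + β + 2 = r0 := by omega
  -- ============ Step C ============
  have hCgen : ∀ s : ℕ, 1 ≤ s → s ≤ β → s + 1 ≤ dplus C (i - ((s:ℕ):ZMod r0)) →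
      ∃ s' : ℕ, s ≤ s' ∧ s' ≤ β ∧
        Wt (i - ((s':ℕ):ZMod r0)) < Wt (i - ((s:ℕ):ZMod r0)) := by
    intro s hs1 hsβ ham
    set m : ZMod r0 := i - ((s:ℕ):ZMod r0) with hmd
    have hamLe := (degLe hr2 hClt hlab ha1 hb1 m).1
    set δ := dplus C m - s with hδd
    have hδ1 : 1 ≤ δ := by omega
    have hams : dplus C m = s + δ := by omega
    have hHm : Hf m = i + ((δ:ℕ) : ZMod r0) := by
      simp only [hHf]
      rw [hams, hmd]
      push_cast
      ring
    have hf2m := f2 hr2 hClt hlab ha1 hb1 m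
    have hf2m' : dplus C m + dplus C (Hf m) ≤ r0 - 1 := by
      have hexp : m + ((dplus C m : ℕ) : ZMod r0) = Hf m := by
        simp only [hHf]
      rwa [hexp] at hf2m
    have hf2m'' : s + δ + dplus C (i + ((δ:ℕ):ZMod r0)) ≤ r0 - 1 := by
      rw [← hams, ← hHm]
      exact hf2m'
    have hmc := monoChain hr2 hClt hlab ha1 hb1 (i+1) (δ-1)
    have hcasteq : (i+1) + ((δ-1 : ℕ) : ZMod r0) = i + ((δ:ℕ) : ZMod r0) := by
      have hδe : (δ:ℕ) = (δ-1) + 1 := by omega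
      rw [hδe]
      push_cast
      ring
    rw [hcasteq] at hmc
    set aδ := dplus C (i + ((δ:ℕ):ZMod r0)) with haδd
    set E := δ + aδ + 1 with hEd
    have hElow : r0 - β ≤ E := by omega
    have hEhigh : E ≤ r0 - s := by omega
    set s' := r0 - E with hs'd
    refine ⟨s', by omega, by omega, ?_⟩
    have hζm : Hf (Hf m) + 1 = i - ((s' : ℕ) : ZMod r0) := by
      have h1 : Hf (Hf m) + 1 = i + ((E:ℕ) : ZMod r0) := by
        have hexp : Hf (Hf m) = Hf m + ((dplus C (Hf m) : ℕ) : ZMod r0) := by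
          conv_lhs => rw [hHf]
        rw [hexp, hHm, ← haδd, hEd]
        push_cast
        ring
      rw [h1, subToAdd (show s' ≤ r0 by omega)]
      have h2 : r0 - s' = E := by omega
      rw [h2]
    have hmne : m ≠ i := by
      rw [hmd]
      intro he
      have h0 : ((s:ℕ) : ZMod r0) = 0 := sub_eq_self.mp he
      have h0' : ((s:ℕ) : ZMod r0) = ((0:ℕ) : ZMod r0) := by simpa using h0
      have := castInj (t := s) (s := 0) (by omega) (by omega) h0'
      omega
    have hbadm := hbad m hmne
    have hWm := hWc1 m
    rw [hζm] at hWm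
    omega
  -- minimize over the in-interval
  obtain ⟨sh, hshmem, hshmin⟩ := Finset.exists_min_image (Finset.Icc 1 β)
    (fun s : ℕ => Wt (i - ((s:ℕ):ZMod r0)))
    ⟨1, Finset.mem_Icc.mpr ⟨le_refl 1, hβ1⟩⟩
  have hsh1 : 1 ≤ sh := (Finset.mem_Icc.mp hshmem).1
  have hshβ : sh ≤ β := (Finset.mem_Icc.mp hshmem).2
  have hash : dplus C (i - ((sh:ℕ):ZMod r0)) ≤ sh := by
    by_contra hcon
    push_neg at hcon
    obtain ⟨s', h1, h2, h3⟩ := hCgen sh hsh1 hshβ hcon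
    exact absurd (hshmin s' (Finset.mem_Icc.mpr ⟨by omega, h2⟩)) (by omega)
  have hshlow : sh ≤ dplus C (i - ((sh:ℕ):ZMod r0)) := by
    have hca := (degLe hr2 hClt hlab ha1 hb1 (i - ((sh:ℕ):ZMod r0))).1
    have hmem : C (i - ((sh:ℕ):ZMod r0)) i := by
      rw [memMinus hlab]
      exact ⟨sh, hsh1, by omega, rfl⟩
    rw [memPlus hlab] at hmem
    obtain ⟨t, ht1, ht2, hte⟩ := hmem
    have hcast : ((sh:ℕ):ZMod r0) = ((t:ℕ):ZMod r0) := by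
      have h1 : (i - ((sh:ℕ):ZMod r0)) + ((sh:ℕ) : ZMod r0) = i := by ring
      exact add_left_cancel (h1.trans hte)
    have := castInj (t := sh) (s := t) (by omega) (by omega) hcast
    omega
  have hsheq : dplus C (i - ((sh:ℕ):ZMod r0)) = sh := le_antisymm hash hshlow
  have hmc2 := monoChain hr2 hClt hlab ha1 hb1 ci (β - sh)
  have hcast2 : ci + ((β - sh : ℕ) : ZMod r0) = i - ((sh:ℕ) : ZMod r0) := by
    rw [hcid]
    push_cast [Nat.cast_sub hshβ]
    ring
  rw [hcast2, hsheq] at hmc2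
  omega
end
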